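/- arXiv:0902.1937 — 7 statements merged into one kernel-verified Lean document; each statement's English description precedes it below -/
import Mathlib

section
/- Let Ẑ and Z lie in the closed matrix upper half-plane (i.e. i(Ẑ^*−Ẑ) ≥ 0 and i(Z^*−Z) ≥ 0) and let z ∈ ℂ with Im z > 0. Then H^N_{Ẑ,Z} − z·1 is invertible, the L×L matrix A^z_N + Z C^z_N − B^z_N Ẑ − Z D^z_N Ẑ is invertible, and the Green matrix satisfies G^z_N(Ẑ,Z) = [A^z_N + Z C^z_N − B^z_N Ẑ − Z D^z_N Ẑ]^{-1} [B^z_N + Z D^z_N]. -/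
open MeasureTheory Matrix
open scoped ComplexOrder

noncomputable section

/-- The space of complex `L × L` matrices. -/
abbrev Mat (L : ℕ) := Matrix (Fin L) (Fin L) ℂ

/-- The `2L × 2L` transfer matrix `[[(z − V)T⁻¹, −T^*], [T⁻¹, 0]]`. -/
def transferM (L : ℕ) (z : ℂ) (T V : Mat L) : Matrix (Fin L ⊕ Fin L) (Fin L ⊕ Fin L) ℂ :=
  Matrix.fromBlocks ((z • (1 : Mat L) - V) * T⁻¹) (-(Tᴴ)) T⁻¹ 0

/-- The transfer matrix across the sample, `𝒯^z(N,0) = 𝒯_N^z ⋯ 𝒯_1^z`. -/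
def transferProd (L N : ℕ) (T V : ℕ → Mat L) (z : ℂ) :
    Matrix (Fin L ⊕ Fin L) (Fin L ⊕ Fin L) ℂ :=
  (((List.range N).map (fun n => transferM L z (T (n + 1)) (V (n + 1)))).reverse).prod

def blockA (L N : ℕ) (T V : ℕ → Mat L) (z : ℂ) : Mat L := (transferProd L N T V z).toBlocks₁₁
def blockB (L N : ℕ) (T V : ℕ → Mat L) (z : ℂ) : Mat L := (transferProd L N T V z).toBlocks₁₂
def blockC (L N : ℕ) (T V : ℕ → Mat L) (z : ℂ) : Mat L := (transferProd L N T V z).toBlocks₂₁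
def blockD (L N : ℕ) (T V : ℕ → Mat L) (z : ℂ) : Mat L := (transferProd L N T V z).toBlocks₂₂

/-- The block tridiagonal Jacobi matrix `H^N_{Ẑ,Z}` (sites `1,…,N` are indexed by `Fin N`). -/
def jacobi (L N : ℕ) (T V : ℕ → Mat L) (Zh Z : Mat L) :
    Matrix (Fin N × Fin L) (Fin N × Fin L) ℂ :=
  Matrix.of fun p q =>
    if p.1 = q.1 then
      (V (p.1.val + 1) - (if p.1.val = 0 then Zh else 0)
        - (if p.1.val = N - 1 then Z else 0)) p.2 q.2
    else if q.1.val = p.1.val + 1 then T (p.1.val + 2) p.2 q.2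
    else if p.1.val = q.1.val + 1 then (T (q.1.val + 2))ᴴ p.2 q.2
    else 0

/-- The Green matrix `G^z_N(Ẑ,Z) = π₁^* (H^N_{Ẑ,Z} − z)⁻¹ π₁`. -/
def green (L N : ℕ) (hN : 0 < N) (T V : ℕ → Mat L) (Zh Z : Mat L) (z : ℂ) : Mat L :=
  Matrix.of fun i j => (jacobi L N T V Zh Z - z • 1)⁻¹ (⟨0, hN⟩, i) (⟨0, hN⟩, j)

def Pn (L : ℕ) (T V : ℕ → Mat L) (z : ℂ) (n : ℕ) : Matrix (Fin L ⊕ Fin L) (Fin L ⊕ Fin L) ℂ :=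
  (((List.range n).map (fun k => transferM L z (T (k + 1)) (V (k + 1)))).reverse).prod

lemma Pn_zero (L : ℕ) (T V : ℕ → Mat L) (z : ℂ) : Pn L T V z 0 = 1 := rfl

lemma Pn_succ (L : ℕ) (T V : ℕ → Mat L) (z : ℂ) (n : ℕ) :
    Pn L T V z (n + 1) = transferM L z (T (n + 1)) (V (n + 1)) * Pn L T V z n := by
  simp [Pn, List.range_succ]

def seqXY (L : ℕ) (T V : ℕ → Mat L) (z : ℂ) (X0 Y0 : Mat L) : ℕ → Mat L × Mat L
  | 0 => (X0, Y0)
  | n + 1 =>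
    ((z • (1 : Mat L) - V (n + 1)) * (T (n + 1))⁻¹ * (seqXY L T V z X0 Y0 n).1
        - (T (n + 1))ᴴ * (seqXY L T V z X0 Y0 n).2,
      (T (n + 1))⁻¹ * (seqXY L T V z X0 Y0 n).1)

lemma seq_spec (L : ℕ) (T V : ℕ → Mat L) (z : ℂ) (X0 Y0 : Mat L) (n : ℕ) :
    Pn L T V z n * Matrix.fromBlocks X0 (0 : Mat L) Y0 (0 : Mat L) =
      Matrix.fromBlocks (seqXY L T V z X0 Y0 n).1 (0 : Mat L) (seqXY L T V z X0 Y0 n).2 (0 : Mat L) := by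
  induction n with
  | zero => rw [Pn_zero, one_mul]; rfl
  | succ n ih =>
    rw [Pn_succ, mul_assoc, ih, transferM, Matrix.fromBlocks_multiply]
    simp [seqXY, sub_eq_add_neg]

lemma tri_sum {M : Type*} [AddCommMonoid M] {N : ℕ} (p : Fin N) (f : Fin N → M)
    (h0 : ∀ q : Fin N, q ≠ p → (q : ℕ) ≠ (p : ℕ) + 1 → (p : ℕ) ≠ (q : ℕ) + 1 → f q = 0) :
    ∑ q, f q = f p + (if h : (p : ℕ) + 1 < N then f ⟨(p : ℕ) + 1, h⟩ else 0)
      + (if h : 0 < (p : ℕ) then f ⟨(p : ℕ) - 1, by omega⟩ else 0) := by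
  have key : ∀ q : Fin N, f q = (if q = p then f q else 0)
      + (if (q : ℕ) = (p : ℕ) + 1 then f q else 0)
      + (if (p : ℕ) = (q : ℕ) + 1 then f q else 0) := by
    intro q
    by_cases h1 : q = p
    · have c2 : ¬((q : ℕ) = (p : ℕ) + 1) := by subst h1; omega
      have c3 : ¬((p : ℕ) = (q : ℕ) + 1) := by subst h1; omega
      rw [if_pos h1, if_neg c2, if_neg c3, add_zero, add_zero]
    · by_cases h2 : (q : ℕ) = (p : ℕ) + 1
      · have c3 : ¬((p : ℕ) = (q : ℕ) + 1) := by omega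
        rw [if_neg h1, if_pos h2, if_neg c3, zero_add, add_zero]
      · by_cases h3 : (p : ℕ) = (q : ℕ) + 1
        · rw [if_neg h1, if_neg h2, if_pos h3, zero_add, zero_add]
        · rw [if_neg h1, if_neg h2, if_neg h3, h0 q h1 h2 h3, add_zero, add_zero]
  rw [Finset.sum_congr rfl (fun q _ => key q), Finset.sum_add_distrib, Finset.sum_add_distrib,
    Finset.sum_ite_eq' Finset.univ p]
  have S2 : (∑ q : Fin N, if (q : ℕ) = (p : ℕ) + 1 then f q else 0)
      = (if h : (p : ℕ) + 1 < N then f ⟨(p : ℕ) + 1, h⟩ else 0) := by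
    split
    · next h =>
      have e : ∀ q : Fin N, ((q : ℕ) = (p : ℕ) + 1) = (q = ⟨(p : ℕ) + 1, h⟩) := by
        intro q; simp [Fin.ext_iff]
      simp only [e]
      rw [Finset.sum_ite_eq' Finset.univ]
      simp
    · next h =>
      have e : ∀ q : Fin N, ¬((q : ℕ) = (p : ℕ) + 1) := by intro q; omega
      simp [e]
  have S3 : (∑ q : Fin N, if (p : ℕ) = (q : ℕ) + 1 then f q else 0)
      = (if h : 0 < (p : ℕ) then f ⟨(p : ℕ) - 1, by omega⟩ else 0) := by
    split
    · next h =>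
      have e : ∀ q : Fin N, ((p : ℕ) = (q : ℕ) + 1) = (q = ⟨(p : ℕ) - 1, by omega⟩) := by
        intro q; simp [Fin.ext_iff]; omega
      simp only [e]
      rw [Finset.sum_ite_eq' Finset.univ]
      simp
    · next h =>
      have e : ∀ q : Fin N, ¬((p : ℕ) = (q : ℕ) + 1) := by intro q; omega
      simp [e]
  rw [S2, S3]
  simp

lemma jacobi_mul_row (L N : ℕ) (T V : ℕ → Mat L) (Zh Z : Mat L) (z : ℂ)
    (W : Matrix (Fin N × Fin L) (Fin L) ℂ) (p : Fin N) (i j : Fin L) :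
    ((jacobi L N T V Zh Z - z • (1 : Matrix (Fin N × Fin L) (Fin N × Fin L) ℂ)) * W) (p, i) j =
      ((V ((p : ℕ) + 1) - (if (p : ℕ) = 0 then Zh else 0) - (if (p : ℕ) = N - 1 then Z else 0)
          - z • (1 : Mat L)) * (Matrix.of fun a b => W (p, a) b)
        + (if h : (p : ℕ) + 1 < N then
            T ((p : ℕ) + 2) * (Matrix.of fun a b => W (⟨(p : ℕ) + 1, h⟩, a) b) else 0)
        + (if h : 0 < (p : ℕ) then
            (T ((p : ℕ) + 1))ᴴ * (Matrix.of fun a b => W (⟨(p : ℕ) - 1, by omega⟩, a) b)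
          else 0)) i j := by
  rw [Matrix.mul_apply, Fintype.sum_prod_type]
  rw [tri_sum p (fun q => ∑ k : Fin L,
      (jacobi L N T V Zh Z - z • (1 : Matrix (Fin N × Fin L) (Fin N × Fin L) ℂ)) (p, i) (q, k) * W (q, k) j) ?_]
  · have e1 : (∑ k : Fin L,
        (jacobi L N T V Zh Z - z • (1 : Matrix (Fin N × Fin L) (Fin N × Fin L) ℂ)) (p, i) (p, k) * W (p, k) j)
        = ((V ((p : ℕ) + 1) - (if (p : ℕ) = 0 then Zh else 0)
            - (if (p : ℕ) = N - 1 then Z else 0) - z • (1 : Mat L))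
            * (Matrix.of fun a b => W (p, a) b)) i j := by
      rw [Matrix.mul_apply]
      refine Finset.sum_congr rfl fun k _ => ?_
      congr 1
      simp [jacobi, Matrix.sub_apply, Matrix.smul_apply, Matrix.one_apply, Prod.mk.injEq]
    have e2 : (if h : (p : ℕ) + 1 < N then
          ∑ k : Fin L, (jacobi L N T V Zh Z - z • (1 : Matrix (Fin N × Fin L) (Fin N × Fin L) ℂ)) (p, i) (⟨(p : ℕ) + 1, h⟩, k)
            * W (⟨(p : ℕ) + 1, h⟩, k) j else 0)
        = (if h : (p : ℕ) + 1 < N then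
            (T ((p : ℕ) + 2) * (Matrix.of fun a b => W (⟨(p : ℕ) + 1, h⟩, a) b)) i j
          else 0) := by
      refine dite_congr rfl (fun h => ?_) (fun _ => rfl)
      rw [Matrix.mul_apply]
      refine Finset.sum_congr rfl fun k _ => ?_
      congr 1
      have hne : ¬(p = (⟨(p : ℕ) + 1, h⟩ : Fin N)) := by simp [Fin.ext_iff]
      have hne2 : ¬((p, i) = ((⟨(p : ℕ) + 1, h⟩ : Fin N), k)) := by
        simp [Prod.mk.injEq, Fin.ext_iff]
      simp [jacobi, Matrix.sub_apply, Matrix.smul_apply, Matrix.one_apply, hne, hne2]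
    have e3 : (if h : 0 < (p : ℕ) then
          ∑ k : Fin L, (jacobi L N T V Zh Z - z • (1 : Matrix (Fin N × Fin L) (Fin N × Fin L) ℂ)) (p, i) (⟨(p : ℕ) - 1, by omega⟩, k)
            * W (⟨(p : ℕ) - 1, by omega⟩, k) j else 0)
        = (if h : 0 < (p : ℕ) then
            ((T ((p : ℕ) + 1))ᴴ * (Matrix.of fun a b => W (⟨(p : ℕ) - 1, by omega⟩, a) b)) i j
          else 0) := by
      refine dite_congr rfl (fun h => ?_) (fun _ => rfl)
      rw [Matrix.mul_apply]
      refine Finset.sum_congr rfl fun k _ => ?_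
      congr 1
      have hne : ¬(p = (⟨(p : ℕ) - 1, by omega⟩ : Fin N)) := by simp [Fin.ext_iff]; omega
      have hne2 : ¬((p, i) = ((⟨(p : ℕ) - 1, by omega⟩ : Fin N), k)) := by
        simp [Prod.mk.injEq, Fin.ext_iff]; omega
      have hc1 : ¬(((⟨(p : ℕ) - 1, by omega⟩ : Fin N) : ℕ) = (p : ℕ) + 1) := by simp only [Fin.val_mk]; omega
      have hc2 : (p : ℕ) = ((⟨(p : ℕ) - 1, by omega⟩ : Fin N) : ℕ) + 1 := by simp only [Fin.val_mk]; omega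
      have hc3 : ((⟨(p : ℕ) - 1, by omega⟩ : Fin N) : ℕ) + 2 = (p : ℕ) + 1 := by simp only [Fin.val_mk]; omega
      simp only [jacobi, Matrix.sub_apply, Matrix.smul_apply, Matrix.one_apply, Matrix.of_apply,
        if_neg hne, if_neg hne2, if_neg hc1, if_pos hc2, hc3, sub_eq_add_neg]
      simp
    rw [e1, e2, e3]
    simp [Matrix.add_apply, apply_dite (fun M : Mat L => M i j)]
  · intro q hq1 hq2 hq3
    refine Finset.sum_eq_zero fun k _ => ?_
    have hne : ¬(p = q) := fun h => hq1 (h.symm ▸ rfl)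
    have hne2 : ¬((p, i) = (q, k)) := by simp [Prod.mk.injEq]; intro h; exact absurd h hne
    simp [jacobi, Matrix.sub_apply, Matrix.smul_apply, Matrix.one_apply, hne, hne2, hq2,
      fun h => hq3 h, Ne.symm hq2]

lemma jacobi_diff (L N : ℕ) (T V : ℕ → Mat L)
    (hV : ∀ n, 1 ≤ n → n ≤ N → (V n).IsHermitian)
    (Zh Z : Mat L) (z : ℂ) :
    (jacobi L N T V Zh Z - z • 1) - (jacobi L N T V Zh Z - z • 1)ᴴ =
      Matrix.of (fun p q : Fin N × Fin L =>
        if p.1 = q.1 then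
          ((if p.1.val = 0 then Zhᴴ - Zh else 0) + (if p.1.val = N - 1 then Zᴴ - Z else 0)
            + (starRingEnd ℂ z - z) • (1 : Mat L)) p.2 q.2
        else 0) := by
  ext ⟨p, i⟩ ⟨q, j⟩
  have hVp : ∀ a b, (starRingEnd ℂ) (V (p.val + 1) b a) = V (p.val + 1) a b := by
    intro a b
    have := (hV (p.val + 1) (by omega) (by omega)).apply a b
    simpa [Matrix.conjTranspose_apply] using this
  simp only [Matrix.sub_apply, Matrix.conjTranspose_apply, Matrix.smul_apply, Matrix.one_apply,
    Matrix.of_apply, jacobi, Matrix.add_apply, Prod.mk.injEq, Complex.star_def]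
  by_cases h1 : p = q
  · subst h1
    have hE1 : (if (p : ℕ) = 0 then Zhᴴ - Zh else 0)
        = (if (p : ℕ) = 0 then Zh else 0)ᴴ - (if (p : ℕ) = 0 then Zh else 0) := by
      split <;> simp
    have hE2 : (if (p : ℕ) = N - 1 then Zᴴ - Z else 0)
        = (if (p : ℕ) = N - 1 then Z else 0)ᴴ - (if (p : ℕ) = N - 1 then Z else 0) := by
      split <;> simp
    rw [hE1, hE2]
    generalize (if (p : ℕ) = 0 then Zh else (0 : Mat L)) = E1
    generalize (if (p : ℕ) = N - 1 then Z else (0 : Mat L)) = E2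
    generalize hg : V ((p : ℕ) + 1) = W at hVp ⊢
    have hji : ∀ (a b : Fin L), (if a = b then (starRingEnd ℂ) z else 0) = (if b = a then (starRingEnd ℂ) z else 0) := by
      intro a b; by_cases h : a = b <;> simp [h, eq_comm]
    by_cases hij : i = j
    · simp only [hij, if_true, eq_self_iff_true, Matrix.sub_apply, Matrix.zero_apply,
        Matrix.add_apply, map_sub, Matrix.conjTranspose_apply, Complex.star_def,
        Matrix.smul_apply, Matrix.one_apply, smul_eq_mul, if_pos rfl, hVp, true_and]
      simp [hVp]
      ring
    · simp only [Matrix.sub_apply, Matrix.zero_apply,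
        Matrix.add_apply, map_sub, Matrix.conjTranspose_apply, Complex.star_def,
        Matrix.smul_apply, Matrix.one_apply, smul_eq_mul, hVp,
        if_neg hij, if_neg (Ne.symm hij)]
      simp [hij, Ne.symm hij, hVp]
      ring
  · have h1' : q ≠ p := fun h => h1 h.symm
    by_cases h2 : q.val = p.val + 1
    · have h3 : ¬ p.val = q.val + 1 := by omega
      have h4 : ¬ (p.val : ℕ) = p.val + 1 + 1 := by omega
      simp [h1, h1', h2, h3, h4, Matrix.conjTranspose_apply, Complex.star_def]
    · by_cases h3 : p.val = q.val + 1
      · have h2' : ¬ q.val = p.val + 1 := by omega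
        have h4 : ¬ (q.val : ℕ) = q.val + 1 + 1 := by omega
        simp [h1, h1', h2, h3, h2', h4, Matrix.conjTranspose_apply, Complex.star_def]
      · simp [h1, h1', h2, h3]

lemma psd_quad_im {L : ℕ} (A : Mat L) (h : (Complex.I • A).PosSemidef) (w : Fin L → ℂ) :
    (star w ⬝ᵥ (A *ᵥ w)).im ≤ 0 := by
  have h2 := h.dotProduct_mulVec_nonneg w
  rw [Matrix.smul_mulVec, dotProduct_smul] at h2
  rw [Complex.nonneg_iff] at h2
  have := h2.1
  simpa [Complex.smul_re] using this

lemma isUnit_jacobi (L N : ℕ) (hN : 1 ≤ N) (T V : ℕ → Mat L)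
    (hV : ∀ n, 1 ≤ n → n ≤ N → (V n).IsHermitian)
    (Zh Z : Mat L)
    (hZh : (Complex.I • (Zhᴴ - Zh)).PosSemidef)
    (hZ : (Complex.I • (Zᴴ - Z)).PosSemidef)
    (z : ℂ) (hz : 0 < z.im) :
    IsUnit (jacobi L N T V Zh Z - z • 1) := by
  set M := jacobi L N T V Zh Z - z • 1 with hM
  rw [Matrix.isUnit_iff_isUnit_det, isUnit_iff_ne_zero]
  intro hdet
  obtain ⟨v, hv0, hv⟩ := (Matrix.exists_mulVec_eq_zero_iff).2 hdet
  -- quadratic form of the difference is zero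
  have hq : star v ⬝ᵥ ((M - Mᴴ) *ᵥ v) = 0 := by
    rw [Matrix.sub_mulVec, dotProduct_sub, hv, dotProduct_zero,
      Matrix.dotProduct_mulVec, ← Matrix.star_mulVec, hv]
    simp
  rw [jacobi_diff L N T V hV Zh Z z] at hq
  -- block decomposition of the quadratic form
  set vb : Fin N → Fin L → ℂ := fun p i => v (p, i) with hvb
  set p0 : Fin N := ⟨0, hN⟩ with hp0
  set pN : Fin N := ⟨N - 1, by omega⟩ with hpN
  have hsplit : star v ⬝ᵥ ((Matrix.of (fun p q : Fin N × Fin L =>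
        if p.1 = q.1 then
          ((if p.1.val = 0 then Zhᴴ - Zh else 0) + (if p.1.val = N - 1 then Zᴴ - Z else 0)
            + (starRingEnd ℂ z - z) • (1 : Mat L)) p.2 q.2
        else 0)) *ᵥ v)
      = star (vb p0) ⬝ᵥ ((Zhᴴ - Zh) *ᵥ vb p0) + star (vb pN) ⬝ᵥ ((Zᴴ - Z) *ᵥ vb pN)
        + (starRingEnd ℂ z - z) * (star v ⬝ᵥ v) := by
    have collapse : ∀ (p : Fin N) (i : Fin L),
        ((Matrix.of (fun p q : Fin N × Fin L =>
          if p.1 = q.1 then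
            ((if p.1.val = 0 then Zhᴴ - Zh else 0) + (if p.1.val = N - 1 then Zᴴ - Z else 0)
              + (starRingEnd ℂ z - z) • (1 : Mat L)) p.2 q.2
          else 0)) *ᵥ v) (p, i)
        = ∑ j : Fin L, ((if p.val = 0 then Zhᴴ - Zh else 0) + (if p.val = N - 1 then Zᴴ - Z else 0)
              + (starRingEnd ℂ z - z) • (1 : Mat L)) i j * v (p, j) := by
      intro p i
      rw [Matrix.mulVec, dotProduct, Fintype.sum_prod_type]
      calc (∑ x : Fin N, ∑ y : Fin L, (Matrix.of (fun p q : Fin N × Fin L =>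
          if p.1 = q.1 then
            ((if p.1.val = 0 then Zhᴴ - Zh else 0) + (if p.1.val = N - 1 then Zᴴ - Z else 0)
              + (starRingEnd ℂ z - z) • (1 : Mat L)) p.2 q.2
          else 0)) (p, i) (x, y) * v (x, y))
          = ∑ x : Fin N, (if p = x then ∑ y : Fin L,
              ((if p.val = 0 then Zhᴴ - Zh else 0) + (if p.val = N - 1 then Zᴴ - Z else 0)
              + (starRingEnd ℂ z - z) • (1 : Mat L)) i y * v (x, y) else 0) := by
            refine Finset.sum_congr rfl fun x _ => ?_
            by_cases h : p = x
            · subst h; simp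
            · simp [h]
        _ = _ := by rw [Finset.sum_ite_eq]; simp
    have step1 : star v ⬝ᵥ ((Matrix.of (fun p q : Fin N × Fin L =>
        if p.1 = q.1 then
          ((if p.1.val = 0 then Zhᴴ - Zh else 0) + (if p.1.val = N - 1 then Zᴴ - Z else 0)
            + (starRingEnd ℂ z - z) • (1 : Mat L)) p.2 q.2
        else 0)) *ᵥ v)
      = ∑ p : Fin N, star (vb p) ⬝ᵥ
          (((if p.val = 0 then Zhᴴ - Zh else 0) + (if p.val = N - 1 then Zᴴ - Z else 0)
            + (starRingEnd ℂ z - z) • (1 : Mat L)) *ᵥ vb p) := by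
      rw [dotProduct, Fintype.sum_prod_type]
      refine Finset.sum_congr rfl fun p _ => ?_
      rw [dotProduct]
      refine Finset.sum_congr rfl fun i _ => ?_
      rw [collapse p i]
      simp only [Pi.star_apply, Matrix.mulVec, dotProduct, hvb]
    rw [step1]
    have step2 : ∀ p : Fin N, star (vb p) ⬝ᵥ
          (((if p.val = 0 then Zhᴴ - Zh else 0) + (if p.val = N - 1 then Zᴴ - Z else 0)
            + (starRingEnd ℂ z - z) • (1 : Mat L)) *ᵥ vb p)
        = (if p = p0 then star (vb p) ⬝ᵥ ((Zhᴴ - Zh) *ᵥ vb p) else 0)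
          + (if p = pN then star (vb p) ⬝ᵥ ((Zᴴ - Z) *ᵥ vb p) else 0)
          + (starRingEnd ℂ z - z) * (star (vb p) ⬝ᵥ vb p) := by
      intro p
      rw [Matrix.add_mulVec, Matrix.add_mulVec, dotProduct_add, dotProduct_add,
        Matrix.smul_mulVec, Matrix.one_mulVec, dotProduct_smul]
      have c1 : ((p : ℕ) = 0) = (p = p0) := by
        simp [hp0, Fin.ext_iff]
      have c2 : ((p : ℕ) = N - 1) = (p = pN) := by
        simp [hpN, Fin.ext_iff]
      simp only [c1, c2]
      rw [smul_eq_mul]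
      congr 2 <;> (split <;> simp)
    simp only [step2]
    rw [Finset.sum_add_distrib, Finset.sum_add_distrib, Finset.sum_ite_eq' Finset.univ p0,
      Finset.sum_ite_eq' Finset.univ pN, ← Finset.mul_sum]
    simp only [Finset.mem_univ, if_true]
    congr 1
    rw [dotProduct, Fintype.sum_prod_type]
    congr 1
  rw [hsplit] at hq
  -- imaginary parts
  have im1 : (star (vb p0) ⬝ᵥ ((Zhᴴ - Zh) *ᵥ vb p0)).im ≤ 0 := psd_quad_im _ hZh _
  have im2 : (star (vb pN) ⬝ᵥ ((Zᴴ - Z) *ᵥ vb pN)).im ≤ 0 := psd_quad_im _ hZ _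
  have hs : star v ⬝ᵥ v = ((∑ x : Fin N × Fin L, Complex.normSq (v x) : ℝ) : ℂ) := by
    rw [dotProduct]
    push_cast
    congr 1; ext x
    simp [Complex.normSq_eq_conj_mul_self]
  have hspos : 0 < ∑ x : Fin N × Fin L, Complex.normSq (v x) := by
    obtain ⟨x, hx⟩ := Function.ne_iff.1 hv0
    refine Finset.sum_pos' (fun i _ => Complex.normSq_nonneg _) ⟨x, Finset.mem_univ x, ?_⟩
    exact Complex.normSq_pos.2 (by simpa using hx)
  have him : ((starRingEnd ℂ z - z) * (star v ⬝ᵥ v)).im < 0 := by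
    rw [hs]
    simp only [Complex.mul_im, Complex.sub_im, Complex.sub_re, Complex.conj_im, Complex.conj_re,
      Complex.ofReal_re, Complex.ofReal_im]
    have : (starRingEnd ℂ z - z).im = -2 * z.im := by
      simp [Complex.sub_im]; ring
    nlinarith [hspos, hz]
  have := congrArg Complex.im hq
  simp only [Complex.add_im, Complex.zero_im] at this
  linarith

lemma key_relation (L N : ℕ) (hN0 : 0 < N) (T V : ℕ → Mat L) (Zh Z : Mat L) (z : ℂ)
    (hT1 : T 1 = 1) (hTinv : ∀ n, 2 ≤ n → n ≤ N → IsUnit (T n))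
    (hJ : IsUnit (jacobi L N T V Zh Z - z • (1 : Matrix (Fin N × Fin L) (Fin N × Fin L) ℂ))) :
    ((Pn L T V z N).toBlocks₁₁ + Z * (Pn L T V z N).toBlocks₂₁
      - (Pn L T V z N).toBlocks₁₂ * Zh - Z * (Pn L T V z N).toBlocks₂₂ * Zh) *
      (Matrix.of fun i j => (jacobi L N T V Zh Z
          - z • (1 : Matrix (Fin N × Fin L) (Fin N × Fin L) ℂ))⁻¹ (⟨0, hN0⟩, i) (⟨0, hN0⟩, j))
    = (Pn L T V z N).toBlocks₁₂ + Z * (Pn L T V z N).toBlocks₂₂ := by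
  set J := jacobi L N T V Zh Z - z • (1 : Matrix (Fin N × Fin L) (Fin N × Fin L) ℂ) with hJdef
  have hdet : IsUnit J.det := (Matrix.isUnit_iff_isUnit_det J).1 hJ
  have hJJ : J * J⁻¹ = 1 := Matrix.mul_nonsing_inv J hdet
  set p0 : Fin N := ⟨0, hN0⟩ with hp0
  set Em : Matrix (Fin N × Fin L) (Fin L) ℂ := Matrix.of fun pi j => J⁻¹ pi (p0, j) with hEm
  set Gb : ℕ → Mat L := fun m =>
    if h : m < N then (Matrix.of fun a b => J⁻¹ (⟨m, h⟩, a) (p0, b)) else 0 with hGb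
  have hGb0 : (Matrix.of fun i j => J⁻¹ (p0, i) (p0, j)) = Gb 0 := by
    simp only [hGb]; rw [dif_pos hN0]
  have hblock : ∀ (m : ℕ) (hm : m < N),
      (Matrix.of fun a b => Em (⟨m, hm⟩, a) b) = Gb m := by
    intro m hm; simp only [hGb]; rw [dif_pos hm]; rfl
  have hrowF : ∀ p : Fin N,
      (V ((p : ℕ) + 1) - (if (p : ℕ) = 0 then Zh else 0) - (if (p : ℕ) = N - 1 then Z else 0)
          - z • (1 : Mat L)) * Gb (p : ℕ)
        + (if (p : ℕ) + 1 < N then T ((p : ℕ) + 2) * Gb ((p : ℕ) + 1) else 0)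
        + (if 0 < (p : ℕ) then (T ((p : ℕ) + 1))ᴴ * Gb ((p : ℕ) - 1) else 0)
      = if (p : ℕ) = 0 then 1 else 0 := by
    intro p
    ext i j
    have h1 := jacobi_mul_row L N T V Zh Z z Em p i j
    have h2 : (J * Em) (p, i) j = (J * J⁻¹) (p, i) (p0, j) := by
      rw [Matrix.mul_apply, Matrix.mul_apply]; rfl
    rw [h2, hJJ] at h1
    have e0 : (Matrix.of fun a b => Em (p, a) b) = Gb (p : ℕ) := by
      have := hblock (p : ℕ) p.2
      simpa using this
    rw [e0] at h1
    have e1 : (if h : (p : ℕ) + 1 < N then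
          T ((p : ℕ) + 2) * (Matrix.of fun a b => Em (⟨(p : ℕ) + 1, h⟩, a) b) else 0)
        = (if (p : ℕ) + 1 < N then T ((p : ℕ) + 2) * Gb ((p : ℕ) + 1) else 0) := by
      by_cases h : (p : ℕ) + 1 < N
      · rw [dif_pos h, if_pos h, hblock _ h]
      · rw [dif_neg h, if_neg h]
    have e2 : (if h : 0 < (p : ℕ) then
          (T ((p : ℕ) + 1))ᴴ * (Matrix.of fun a b => Em (⟨(p : ℕ) - 1, by omega⟩, a) b) else 0)
        = (if 0 < (p : ℕ) then (T ((p : ℕ) + 1))ᴴ * Gb ((p : ℕ) - 1) else 0) := by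
      by_cases h : 0 < (p : ℕ)
      · rw [dif_pos h, if_pos h, hblock _ (by omega)]
      · rw [dif_neg h, if_neg h]
    rw [e1, e2] at h1
    rw [← h1]
    by_cases hp : (p : ℕ) = 0
    · have hpp : p = p0 := by simp [hp0, Fin.ext_iff, hp]
      simp [Matrix.one_apply, hpp, Prod.mk.injEq, hp, hp0]
    · have hpp : ¬(p = p0) := by simp [hp0, Fin.ext_iff, hp]
      simp [Matrix.one_apply, hpp, Prod.mk.injEq, hp]
  have hrowN : ∀ (m : ℕ), m < N →
      (V (m + 1) - (if m = 0 then Zh else 0) - (if m = N - 1 then Z else 0)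
          - z • (1 : Mat L)) * Gb m
        + (if m + 1 < N then T (m + 2) * Gb (m + 1) else 0)
        + (if 0 < m then (T (m + 1))ᴴ * Gb (m - 1) else 0)
      = if m = 0 then 1 else 0 := fun m hm => hrowF ⟨m, hm⟩
  set S := seqXY L T V z (Gb 0) (-Zh * Gb 0 - 1) with hS
  have hdetT : ∀ n, 2 ≤ n → n ≤ N → IsUnit (T n).det := fun n h1 h2 =>
    (Matrix.isUnit_iff_isUnit_det _).1 (hTinv n h1 h2)
  have main : ∀ n, 1 ≤ n → n ≤ N → (S n).2 = Gb (n - 1) ∧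
      (S n).1 = (if n < N then T (n + 1) * Gb n else -Z * Gb (N - 1)) := by
    intro n hn1
    induction n, hn1 using Nat.le_induction with
    | base =>
      intro _
      have hs2 : (S 1).2 = Gb 0 := by
        show (T 1)⁻¹ * (S 0).1 = Gb 0
        rw [hT1, inv_one, one_mul]; rfl
      refine ⟨hs2, ?_⟩
      have hs1 : (S 1).1 = (z • (1 : Mat L) - V 1) * Gb 0 + Zh * Gb 0 + 1 := by
        show (z • (1 : Mat L) - V 1) * (T 1)⁻¹ * (S 0).1 - (T 1)ᴴ * (S 0).2 = _
        rw [hT1, inv_one, conjTranspose_one]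
        show (z • (1 : Mat L) - V 1) * 1 * Gb 0 - 1 * (-Zh * Gb 0 - 1) = _
        noncomm_ring
      have E := hrowN 0 hN0
      rw [if_pos rfl, if_neg (show ¬(0 < 0) by omega), add_zero,
        if_pos rfl] at E
      by_cases h1N : 1 < N
      · rw [if_pos (show 0 + 1 < N from by omega),
          if_neg (show ¬((0 : ℕ) = N - 1) by omega)] at E
        rw [if_pos h1N, hs1]
        calc (z • (1 : Mat L) - V 1) * Gb 0 + Zh * Gb 0 + 1
            = T (0 + 2) * Gb (0 + 1)
              + (1 - ((V (0 + 1) - Zh - 0 - z • (1 : Mat L)) * Gb 0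
                + T (0 + 2) * Gb (0 + 1))) := by noncomm_ring
          _ = T (1 + 1) * Gb 1 := by rw [E]; noncomm_ring
      · rw [if_neg (show ¬(0 + 1 < N) from by omega),
          if_pos (show (0 : ℕ) = N - 1 by omega), add_zero] at E
        rw [if_neg h1N, show N - 1 = 0 from by omega, hs1]
        calc (z • (1 : Mat L) - V 1) * Gb 0 + Zh * Gb 0 + 1
            = -Z * Gb 0 + (1 - ((V (0 + 1) - Zh - Z - z • (1 : Mat L)) * Gb 0)) := by
              noncomm_ring
          _ = -Z * Gb 0 := by rw [E]; noncomm_ring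
    | succ n hn ih =>
      intro hsucc
      have hnN : n ≤ N := by omega
      have hnltN : n < N := by omega
      obtain ⟨ih2, ih1⟩ := ih hnN
      rw [if_pos hnltN] at ih1
      have hTu : IsUnit (T (n + 1)).det := hdetT (n + 1) (by omega) (by omega)
      have hinner : (T (n + 1))⁻¹ * (S n).1 = Gb n := by
        rw [ih1, ← mul_assoc, Matrix.nonsing_inv_mul _ hTu, one_mul]
      have hs2 : (S (n + 1)).2 = Gb n := hinner
      refine ⟨hs2, ?_⟩
      have hs1 : (S (n + 1)).1
          = (z • (1 : Mat L) - V (n + 1)) * Gb n - (T (n + 1))ᴴ * Gb (n - 1) := by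
        show (z • (1 : Mat L) - V (n + 1)) * (T (n + 1))⁻¹ * (S n).1
            - (T (n + 1))ᴴ * (S n).2 = _
        rw [mul_assoc, hinner, ih2]
      have E := hrowN n hnltN
      rw [if_neg (show ¬(n = 0) by omega), if_pos (show 0 < n by omega),
        if_neg (show ¬(n = 0) by omega)] at E
      by_cases hsn : n + 1 < N
      · rw [if_pos hsn, if_neg (show ¬(n = N - 1) by omega)] at E
        rw [if_pos hsn, hs1]
        calc (z • (1 : Mat L) - V (n + 1)) * Gb n - (T (n + 1))ᴴ * Gb (n - 1)
            = T (n + 2) * Gb (n + 1)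
              + (0 - ((V (n + 1) - 0 - 0 - z • (1 : Mat L)) * Gb n
                + T (n + 2) * Gb (n + 1) + (T (n + 1))ᴴ * Gb (n - 1))) := by noncomm_ring
          _ = T (n + 1 + 1) * Gb (n + 1) := by
              rw [E]
              rw [show n + 1 + 1 = n + 2 from rfl]
              noncomm_ring
      · rw [if_neg hsn, if_pos (show n = N - 1 by omega), add_zero] at E
        rw [if_neg (show ¬(n + 1 < N) from hsn), hs1, show N - 1 = n from by omega]
        calc (z • (1 : Mat L) - V (n + 1)) * Gb n - (T (n + 1))ᴴ * Gb (n - 1)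
            = -Z * Gb n + (0 - ((V (n + 1) - 0 - Z - z • (1 : Mat L)) * Gb n
                + (T (n + 1))ᴴ * Gb (n - 1))) := by noncomm_ring
          _ = -Z * Gb n := by rw [E]; noncomm_ring
  obtain ⟨h2, h1⟩ := main N hN0 le_rfl
  rw [if_neg (lt_irrefl N)] at h1
  have spec := seq_spec L T V z (Gb 0) (-Zh * Gb 0 - 1) N
  rw [← hS] at spec
  rw [← Matrix.fromBlocks_toBlocks (Pn L T V z N), Matrix.fromBlocks_multiply] at spec
  have eq1 := congrArg Matrix.toBlocks₁₁ spec
  have eq2 := congrArg Matrix.toBlocks₂₁ spec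
  rw [Matrix.toBlocks_fromBlocks₁₁, Matrix.toBlocks_fromBlocks₁₁] at eq1
  rw [Matrix.toBlocks_fromBlocks₂₁, Matrix.toBlocks_fromBlocks₂₁] at eq2
  rw [hGb0]
  calc ((Pn L T V z N).toBlocks₁₁ + Z * (Pn L T V z N).toBlocks₂₁
      - (Pn L T V z N).toBlocks₁₂ * Zh - Z * (Pn L T V z N).toBlocks₂₂ * Zh) * Gb 0
      = ((Pn L T V z N).toBlocks₁₁ * Gb 0 + (Pn L T V z N).toBlocks₁₂ * (-Zh * Gb 0 - 1))
        + Z * ((Pn L T V z N).toBlocks₂₁ * Gb 0 + (Pn L T V z N).toBlocks₂₂ * (-Zh * Gb 0 - 1))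
        + ((Pn L T V z N).toBlocks₁₂ + Z * (Pn L T V z N).toBlocks₂₂) := by noncomm_ring
    _ = (S N).1 + Z * (S N).2
        + ((Pn L T V z N).toBlocks₁₂ + Z * (Pn L T V z N).toBlocks₂₂) := by rw [eq1, eq2]
    _ = _ := by rw [h1, h2]; noncomm_ring

lemma key_inj (L N : ℕ) (hL0 : 0 < L) (hN0 : 0 < N) (T V : ℕ → Mat L) (Zh Z : Mat L) (z : ℂ)
    (hT1 : T 1 = 1) (hTinv : ∀ n, 2 ≤ n → n ≤ N → IsUnit (T n))
    (hJ : IsUnit (jacobi L N T V Zh Z - z • (1 : Matrix (Fin N × Fin L) (Fin N × Fin L) ℂ))) :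
    IsUnit ((Pn L T V z N).toBlocks₁₁ + Z * (Pn L T V z N).toBlocks₂₁
      - (Pn L T V z N).toBlocks₁₂ * Zh - Z * (Pn L T V z N).toBlocks₂₂ * Zh) := by
  set J := jacobi L N T V Zh Z - z • (1 : Matrix (Fin N × Fin L) (Fin N × Fin L) ℂ) with hJdef
  have hdet : IsUnit J.det := (Matrix.isUnit_iff_isUnit_det J).1 hJ
  set A := (Pn L T V z N).toBlocks₁₁ with hA
  set B := (Pn L T V z N).toBlocks₁₂ with hB
  set C := (Pn L T V z N).toBlocks₂₁ with hC
  set D := (Pn L T V z N).toBlocks₂₂ with hD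
  rw [Matrix.isUnit_iff_isUnit_det, isUnit_iff_ne_zero]
  intro hdet0
  obtain ⟨v, hv0, hv⟩ := (Matrix.exists_mulVec_eq_zero_iff).2 hdet0
  set Vm : Mat L := Matrix.of fun i (_ : Fin L) => v i with hVm
  have hMV : (A + Z * C - B * Zh - Z * D * Zh) * Vm = 0 := by
    ext i j
    rw [Matrix.mul_apply]
    have := congrFun hv i
    rw [Matrix.mulVec, dotProduct] at this
    simpa [hVm] using this
  set S := seqXY L T V z Vm (-Zh * Vm) with hS
  set Wm : ℕ → Mat L := fun n => (S (n + 1)).2 with hWm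
  have spec := seq_spec L T V z Vm (-Zh * Vm) N
  rw [← hS] at spec
  rw [← Matrix.fromBlocks_toBlocks (Pn L T V z N), Matrix.fromBlocks_multiply] at spec
  have eq1 := congrArg Matrix.toBlocks₁₁ spec
  have eq2 := congrArg Matrix.toBlocks₂₁ spec
  rw [Matrix.toBlocks_fromBlocks₁₁, Matrix.toBlocks_fromBlocks₁₁, ← hA, ← hB] at eq1
  rw [Matrix.toBlocks_fromBlocks₂₁, Matrix.toBlocks_fromBlocks₂₁, ← hC, ← hD] at eq2
  have hend : (S N).1 = -Z * (S N).2 := by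
    have hsum : (S N).1 + Z * (S N).2 = 0 := by
      rw [← eq1, ← eq2]
      calc A * Vm + B * (-Zh * Vm) + Z * (C * Vm + D * (-Zh * Vm))
          = (A + Z * C - B * Zh - Z * D * Zh) * Vm := by noncomm_ring
        _ = 0 := hMV
    calc (S N).1 = ((S N).1 + Z * (S N).2) - Z * (S N).2 := by noncomm_ring
      _ = -Z * (S N).2 := by rw [hsum]; noncomm_ring
  have hdetT : ∀ n, 2 ≤ n → n ≤ N → IsUnit (T n).det := fun n h1 h2 =>
    (Matrix.isUnit_iff_isUnit_det _).1 (hTinv n h1 h2)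
  have hW0 : Wm 0 = Vm := by
    show (T 1)⁻¹ * (S 0).1 = Vm
    rw [hT1, inv_one, one_mul]; rfl
  have hS2W : ∀ n, 1 ≤ n → (S n).2 = Wm (n - 1) := by
    intro n hn
    have h : n = (n - 1) + 1 := by omega
    rw [h]
    rfl
  have hS1 : ∀ n, (S (n + 1)).1 = (z • (1 : Mat L) - V (n + 1)) * Wm n
      - (T (n + 1))ᴴ * (S n).2 := by
    intro n
    show (z • (1 : Mat L) - V (n + 1)) * (T (n + 1))⁻¹ * (S n).1 - (T (n + 1))ᴴ * (S n).2 = _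
    rw [mul_assoc]
    rfl
  have hTW : ∀ n, 1 ≤ n → n < N → T (n + 1) * Wm n = (S n).1 := by
    intro n h1 h2
    show T (n + 1) * ((T (n + 1))⁻¹ * (S n).1) = (S n).1
    rw [← mul_assoc, Matrix.mul_nonsing_inv _ (hdetT (n + 1) (by omega) (by omega)), one_mul]
  -- the row identities for Wm
  have hrowW : ∀ (m : ℕ), m < N →
      (V (m + 1) - (if m = 0 then Zh else 0) - (if m = N - 1 then Z else 0)
          - z • (1 : Mat L)) * Wm m
        + (if m + 1 < N then T (m + 2) * Wm (m + 1) else 0)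
        + (if 0 < m then (T (m + 1))ᴴ * Wm (m - 1) else 0) = 0 := by
    intro m hm
    by_cases hm0 : m = 0
    · subst hm0
      rw [if_pos rfl, if_neg (show ¬(0 < 0) by omega), add_zero, hW0]
      have hs10 : (S 1).1 = (z • (1 : Mat L) - V 1) * Vm + Zh * Vm := by
        rw [hS1 0, hW0]
        show _ - (T 1)ᴴ * (-Zh * Vm) = _
        rw [hT1, conjTranspose_one]
        noncomm_ring
      by_cases h1N : 1 < N
      · rw [if_pos (show 0 + 1 < N by omega), if_neg (show ¬((0:ℕ) = N - 1) by omega)]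
        have hTW1 : T (0 + 2) * Wm (0 + 1) = (S 1).1 := hTW 1 le_rfl h1N
        rw [hTW1, hs10]
        noncomm_ring
      · have hN1 : N = 1 := by omega
        rw [if_neg (show ¬(0 + 1 < N) by omega), if_pos (show (0:ℕ) = N - 1 by omega)]
        have h1 : (S N).2 = Vm := by
          rw [hS2W N (by omega), show N - 1 = 0 from by omega, hW0]
        have hend1 : (S 1).1 = -Z * Vm := by
          rw [show (1 : ℕ) = N from hN1.symm, hend, h1]
        have E : (z • (1 : Mat L) - V 1) * Vm + Zh * Vm = -Z * Vm := by
          rw [← hs10, hend1]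
        calc (V (0 + 1) - Zh - Z - z • (1 : Mat L)) * Vm + 0
            = -(((z • (1 : Mat L) - V 1) * Vm + Zh * Vm) - (-Z * Vm)) - Z * Vm + Z * Vm := by
              noncomm_ring
          _ = 0 := by rw [E]; noncomm_ring
    · have hm1 : 1 ≤ m := by omega
      rw [if_neg hm0, if_pos (show 0 < m by omega)]
      have hWrec : (S (m + 1)).1 = (z • (1 : Mat L) - V (m + 1)) * Wm m
          - (T (m + 1))ᴴ * Wm (m - 1) := by
        rw [hS1 m, hS2W m hm1]
      by_cases hsn : m + 1 < N
      · rw [if_pos hsn, if_neg (show ¬(m = N - 1) by omega)]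
        have hTWm : T (m + 2) * Wm (m + 1) = (S (m + 1)).1 := by
          have := hTW (m + 1) (by omega) hsn
          rw [show m + 1 + 1 = m + 2 from rfl] at this
          exact this
        rw [hTWm, hWrec]
        noncomm_ring
      · have hmN : m + 1 = N := by omega
        rw [if_neg hsn, if_pos (show m = N - 1 by omega), add_zero]
        have hendm : (S (m + 1)).1 = -Z * Wm m := by
          rw [show m + 1 = N from hmN, hend]
          congr 1
          rw [hS2W N (by omega), show N - 1 = m from by omega]
        have E : (z • (1 : Mat L) - V (m + 1)) * Wm m - (T (m + 1))ᴴ * Wm (m - 1)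
            = -Z * Wm m := by rw [← hWrec, hendm]
        calc (V (m + 1) - 0 - Z - z • (1 : Mat L)) * Wm m + (T (m + 1))ᴴ * Wm (m - 1)
            = -(((z • (1 : Mat L) - V (m + 1)) * Wm m - (T (m + 1))ᴴ * Wm (m - 1))
                - (-Z * Wm m)) - Z * Wm m + Z * Wm m := by noncomm_ring
          _ = 0 := by rw [E]; noncomm_ring
  -- assemble U and conclude
  set U : Matrix (Fin N × Fin L) (Fin L) ℂ :=
    Matrix.of fun pi j => Wm (pi.1 : ℕ) pi.2 j with hU
  have hblockU : ∀ (m : ℕ) (hm : m < N),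
      (Matrix.of fun a b => U (⟨m, hm⟩, a) b) = Wm m := fun m hm => rfl
  have hJU : J * U = 0 := by
    ext pij j
    obtain ⟨p, i⟩ := pij
    rw [hJdef, jacobi_mul_row L N T V Zh Z z U p i j]
    have e0 : (Matrix.of fun a b => U (p, a) b) = Wm (p : ℕ) := rfl
    have e1 : (if h : (p : ℕ) + 1 < N then
          T ((p : ℕ) + 2) * (Matrix.of fun a b => U (⟨(p : ℕ) + 1, h⟩, a) b) else 0)
        = (if (p : ℕ) + 1 < N then T ((p : ℕ) + 2) * Wm ((p : ℕ) + 1) else 0) := by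
      by_cases h : (p : ℕ) + 1 < N
      · rw [dif_pos h, if_pos h, hblockU _ h]
      · rw [dif_neg h, if_neg h]
    have e2 : (if h : 0 < (p : ℕ) then
          (T ((p : ℕ) + 1))ᴴ * (Matrix.of fun a b => U (⟨(p : ℕ) - 1, by omega⟩, a) b) else 0)
        = (if 0 < (p : ℕ) then (T ((p : ℕ) + 1))ᴴ * Wm ((p : ℕ) - 1) else 0) := by
      by_cases h : 0 < (p : ℕ)
      · rw [dif_pos h, if_pos h, hblockU _ (by omega)]
      · rw [dif_neg h, if_neg h]
    rw [e0, e1, e2, hrowW (p : ℕ) p.2]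
    simp
  have hU0 : U = 0 := by
    have h := congrArg (fun X => J⁻¹ * X) hJU
    simpa [← Matrix.mul_assoc, Matrix.nonsing_inv_mul J hdet] using h
  apply hv0
  funext i
  have : Wm 0 i ⟨0, hL0⟩ = 0 := by
    have := congrFun (congrFun hU0 (⟨0, hN0⟩, i)) ⟨0, hL0⟩
    simpa [hU] using this
  rw [hW0] at this
  simpa [hVm] using this

theorem stmt0 (L N : ℕ) (hL : 1 ≤ L) (hN : 1 ≤ N)
    (T V : ℕ → Mat L) (hT1 : T 1 = 1)
    (hTinv : ∀ n, 2 ≤ n → n ≤ N → IsUnit (T n))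
    (hV : ∀ n, 1 ≤ n → n ≤ N → (V n).IsHermitian)
    (Zh Z : Mat L)
    (hZh : (Complex.I • (Zhᴴ - Zh)).PosSemidef)
    (hZ : (Complex.I • (Zᴴ - Z)).PosSemidef)
    (z : ℂ) (hz : 0 < z.im) :
    IsUnit (jacobi L N T V Zh Z - z • 1) ∧
    IsUnit (blockA L N T V z + Z * blockC L N T V z - blockB L N T V z * Zh
      - Z * blockD L N T V z * Zh) ∧
    green L N hN T V Zh Z z =
      (blockA L N T V z + Z * blockC L N T V z - blockB L N T V z * Zh
        - Z * blockD L N T V z * Zh)⁻¹ * (blockB L N T V z + Z * blockD L N T V z) := by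
  have hN0 : 0 < N := hN
  have hJ : IsUnit (jacobi L N T V Zh Z - z • 1) :=
    isUnit_jacobi L N hN T V hV Zh Z hZh hZ z hz
  have hA : blockA L N T V z = (Pn L T V z N).toBlocks₁₁ := rfl
  have hB : blockB L N T V z = (Pn L T V z N).toBlocks₁₂ := rfl
  have hC : blockC L N T V z = (Pn L T V z N).toBlocks₂₁ := rfl
  have hD : blockD L N T V z = (Pn L T V z N).toBlocks₂₂ := rfl
  have hMker : IsUnit (blockA L N T V z + Z * blockC L N T V z - blockB L N T V z * Zh
      - Z * blockD L N T V z * Zh) := by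
    rw [hA, hB, hC, hD]
    exact key_inj L N hL hN0 T V Zh Z z hT1 hTinv hJ
  refine ⟨hJ, hMker, ?_⟩
  have hrel := key_relation L N hN0 T V Zh Z z hT1 hTinv hJ
  have hMG : (blockA L N T V z + Z * blockC L N T V z - blockB L N T V z * Zh
      - Z * blockD L N T V z * Zh) * green L N hN T V Zh Z z
      = blockB L N T V z + Z * blockD L N T V z := by
    rw [hA, hB, hC, hD]
    exact hrel
  have hMdet : IsUnit (blockA L N T V z + Z * blockC L N T V z - blockB L N T V z * Zh
      - Z * blockD L N T V z * Zh).det := (Matrix.isUnit_iff_isUnit_det _).1 hMker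
  have h := congrArg (fun X => (blockA L N T V z + Z * blockC L N T V z
      - blockB L N T V z * Zh - Z * blockD L N T V z * Zh)⁻¹ * X) hMG
  simpa [← Matrix.mul_assoc, Matrix.nonsing_inv_mul _ hMdet] using h
end
end

section
/- Let Ẑ and Z be self-adjoint complex L×L matrices and let z ∈ ℂ with Im z > 0. Then the matrix A^{z̄}_N + Z C^{z̄}_N − B^{z̄}_N Ẑ − Z D^{z̄}_N Ẑ (where z̄ is the complex conjugate of z) is invertible and the Green matrix satisfies G^z_N(Ẑ,Z) = ( [A^{z̄}_N + Z C^{z̄}_N − B^{z̄}_N Ẑ − Z D^{z̄}_N Ẑ]^{-1} [B^{z̄}_N + Z D^{z̄}_N] )^*. -/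
open MeasureTheory Matrix
open scoped ComplexOrder

noncomputable section

lemma herm_sub_smul_unit {n : Type*} [Fintype n] [DecidableEq n] {A : Matrix n n ℂ}
    (hA : A.IsHermitian) {c : ℂ} (hc : c.im ≠ 0) : IsUnit (A - c • 1) := by
  rw [Matrix.isUnit_iff_isUnit_det, isUnit_iff_ne_zero]
  intro hdet
  obtain ⟨v, hv, hv0⟩ := Matrix.exists_mulVec_eq_zero_iff.2 hdet
  have hAv : A *ᵥ v = c • v := by
    rw [Matrix.sub_mulVec, sub_eq_zero] at hv0
    rw [hv0, Matrix.smul_mulVec, Matrix.one_mulVec]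
  have hd : star v ⬝ᵥ (A *ᵥ v) = c * (star v ⬝ᵥ v) := by
    rw [hAv, dotProduct_smul, smul_eq_mul]
  have h2 : star (A *ᵥ v) ⬝ᵥ v = star v ⬝ᵥ (A *ᵥ v) := by
    rw [Matrix.star_mulVec, ← Matrix.dotProduct_mulVec, hA.eq]
  have hsd : star (star v ⬝ᵥ (A *ᵥ v)) = star v ⬝ᵥ (A *ᵥ v) := by
    rw [← Matrix.star_dotProduct, h2]
  have hs : star (star v ⬝ᵥ v) = star v ⬝ᵥ v := (Matrix.star_dotProduct v v).symm
  rw [hd, star_mul', hs] at hsd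
  have h0 : (star c - c) * (star v ⬝ᵥ v) = 0 := by rw [sub_mul, hsd, sub_self]
  rcases mul_eq_zero.1 h0 with h | h
  · rw [sub_eq_zero] at h
    exact hc (Complex.conj_eq_iff_im.1 h)
  · exact hv (dotProduct_star_self_eq_zero.1 h)

lemma jacobi_herm (L N : ℕ) (T V : ℕ → Mat L) (Zh Z : Mat L)
    (hV : ∀ n, 1 ≤ n → n ≤ N → (V n).IsHermitian)
    (hZh : Zh.IsHermitian) (hZ : Z.IsHermitian) :
    (jacobi L N T V Zh Z).IsHermitian := by
  apply Matrix.IsHermitian.ext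
  rintro ⟨p, i⟩ ⟨q, k⟩
  simp only [jacobi, Matrix.of_apply, Matrix.conjTranspose_apply, Matrix.star_apply]
  rcases eq_or_ne p q with rfl | h
  · rw [if_pos rfl, if_pos rfl, ← Matrix.conjTranspose_apply]
    have hW : (((V ((p:ℕ) + 1) - if (p:ℕ) = 0 then Zh else 0)
        - if (p:ℕ) = N - 1 then Z else 0)).IsHermitian := by
      refine Matrix.IsHermitian.sub (Matrix.IsHermitian.sub
        (hV _ (Nat.le_add_left 1 _) p.isLt) ?_) ?_
      · split_ifs; exacts [hZh, Matrix.isHermitian_zero]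
      · split_ifs; exacts [hZ, Matrix.isHermitian_zero]
    rw [hW.eq]
  · have hpq : (q:ℕ) ≠ (p:ℕ) := fun hh => h (Fin.ext hh.symm)
    rw [if_neg (fun hh : q = p => h hh.symm), if_neg h]
    by_cases h1 : (q:ℕ) = (p:ℕ) + 1
    · have h2 : ¬((p:ℕ) = (q:ℕ) + 1) := by omega
      rw [if_neg h2, if_pos h1, if_pos h1, star_star]
    · by_cases h2 : (p:ℕ) = (q:ℕ) + 1
      · rw [if_pos h2, if_neg h1, if_pos h2]
      · rw [if_neg h2, if_neg h1, if_neg h1, if_neg h2, star_zero]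

namespace Stmt1Aux
variable (L : ℕ) (T V : ℕ → Mat L) (w : ℂ) (X R Zh Z : Mat L)

def Phi (n : ℕ) : Matrix (Fin L ⊕ Fin L) (Fin L) ℂ :=
  transferProd L n T V w * Matrix.fromRows X (-R - Zh * X)

def topP (n : ℕ) : Mat L := (Phi L T V w X R Zh n).submatrix Sum.inl id
def botP (n : ℕ) : Mat L := (Phi L T V w X R Zh n).submatrix Sum.inr id

lemma transferProd_succ (n : ℕ) :
    transferProd L (n + 1) T V w
      = transferM L w (T (n + 1)) (V (n + 1)) * transferProd L n T V w := by
  unfold transferProd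
  rw [List.range_succ, List.map_append, List.reverse_append]
  simp

lemma Phi_fromRows (n : ℕ) :
    Phi L T V w X R Zh n = Matrix.fromRows (topP L T V w X R Zh n) (botP L T V w X R Zh n) := by
  ext (i | i) j <;> rfl

lemma top_succ (n : ℕ) :
    topP L T V w X R Zh (n + 1)
      = (w • (1 : Mat L) - V (n + 1)) * ((T (n + 1))⁻¹ * topP L T V w X R Zh n)
        + (-(T (n + 1))ᴴ) * botP L T V w X R Zh n := by
  have h : Phi L T V w X R Zh (n + 1)
      = transferM L w (T (n + 1)) (V (n + 1)) * Phi L T V w X R Zh n := by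
    unfold Phi
    rw [transferProd_succ, Matrix.mul_assoc]
  rw [Phi_fromRows L T V w X R Zh n] at h
  unfold transferM at h
  rw [Matrix.fromBlocks_mul_fromRows] at h
  have := congrArg (fun M => M.submatrix (Sum.inl : Fin L → Fin L ⊕ Fin L) (id : Fin L → Fin L)) h
  unfold topP
  rw [this]
  ext i j
  simp [topP, Matrix.mul_assoc]

lemma bot_succ (n : ℕ) :
    botP L T V w X R Zh (n + 1) = (T (n + 1))⁻¹ * topP L T V w X R Zh n := by
  have h : Phi L T V w X R Zh (n + 1)
      = transferM L w (T (n + 1)) (V (n + 1)) * Phi L T V w X R Zh n := by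
    unfold Phi
    rw [transferProd_succ, Matrix.mul_assoc]
  rw [Phi_fromRows L T V w X R Zh n] at h
  unfold transferM at h
  rw [Matrix.fromBlocks_mul_fromRows] at h
  have := congrArg (fun M => M.submatrix (Sum.inr : Fin L → Fin L ⊕ Fin L) (id : Fin L → Fin L)) h
  unfold botP
  rw [this]
  ext i j
  simp [botP]

lemma top_zero : topP L T V w X R Zh 0 = X := by
  unfold topP Phi transferProd
  ext i j
  simp

lemma bot_zero : botP L T V w X R Zh 0 = -R - Zh * X := by
  unfold botP Phi transferProd
  ext i j
  simp

lemma roweq (n : ℕ) :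
    (T (n + 1))ᴴ * botP L T V w X R Zh n
      + (V (n + 1) - w • (1 : Mat L)) * botP L T V w X R Zh (n + 1)
      + topP L T V w X R Zh (n + 1) = 0 := by
  rw [top_succ, bot_succ]
  noncomm_ring

lemma top_eq_T_bot (n : ℕ) (h : IsUnit (T (n + 1))) :
    topP L T V w X R Zh n = T (n + 1) * botP L T V w X R Zh (n + 1) := by
  rw [bot_succ, ← Matrix.mul_assoc, Matrix.mul_nonsing_inv _ ((Matrix.isUnit_iff_isUnit_det _).1 h), Matrix.one_mul]


lemma topP_N (N : ℕ) : topP L T V w X R Zh N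
    = blockA L N T V w * X + blockB L N T V w * (-R - Zh * X) := by
  unfold topP Phi
  rw [← Matrix.fromBlocks_toBlocks (transferProd L N T V w), Matrix.fromBlocks_mul_fromRows]
  ext i j
  simp [blockA, blockB, Matrix.toBlocks₁₁, Matrix.toBlocks₁₂]

lemma botP_N (N : ℕ) : botP L T V w X R Zh N
    = blockC L N T V w * X + blockD L N T V w * (-R - Zh * X) := by
  unfold botP Phi
  rw [← Matrix.fromBlocks_toBlocks (transferProd L N T V w), Matrix.fromBlocks_mul_fromRows]
  ext i j
  simp [blockC, blockD, Matrix.toBlocks₂₁, Matrix.toBlocks₂₂]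

lemma boundary (N : ℕ)
    (hMK : (blockA L N T V w + Z * blockC L N T V w - blockB L N T V w * Zh
        - Z * blockD L N T V w * Zh) * X
      = (blockB L N T V w + Z * blockD L N T V w) * R) :
    topP L T V w X R Zh N + Z * botP L T V w X R Zh N = 0 := by
  rw [topP_N, botP_N]
  have h : blockA L N T V w * X + blockB L N T V w * (-R - Zh * X)
      + Z * (blockC L N T V w * X + blockD L N T V w * (-R - Zh * X))
      = (blockA L N T V w + Z * blockC L N T V w - blockB L N T V w * Zh
          - Z * blockD L N T V w * Zh) * X
        - (blockB L N T V w + Z * blockD L N T V w) * R := by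
    noncomm_ring
  rw [h, hMK, sub_self]


def Jb (N : ℕ) (p q : Fin N) : Mat L :=
  Matrix.of fun i k => (jacobi L N T V Zh Z - w • 1) (p, i) (q, k)

lemma Jb_eq (N : ℕ) (p q : Fin N) : Jb L T V w Zh Z N p q =
    if p = q then
      V ((p : ℕ) + 1) - (if (p : ℕ) = 0 then Zh else 0)
        - (if (p : ℕ) = N - 1 then Z else 0) - w • 1
    else if (q : ℕ) = (p : ℕ) + 1 then T ((p : ℕ) + 2)
    else if (p : ℕ) = (q : ℕ) + 1 then (T ((q : ℕ) + 2))ᴴ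
    else 0 := by
  ext i k
  simp only [Jb, jacobi, Matrix.of_apply, Matrix.sub_apply, Matrix.smul_apply,
    Matrix.one_apply, Prod.mk.injEq, smul_eq_mul]
  rcases eq_or_ne p q with rfl | h
  · simp only [if_pos rfl, true_and]
    rcases eq_or_ne i k with rfl | hik
    · simp
    · simp [hik]
  · have h1 : ¬(p = q ∧ i = k) := fun hh => h hh.1
    rw [if_neg h, if_neg h1, mul_zero, sub_zero, if_neg h]
    split_ifs <;> rfl

lemma sum_ite_val {α : Type*} [AddCommMonoid α] {n c : ℕ} (f : Fin n → α) :
    ∑ q : Fin n, (if (q : ℕ) = c then f q else 0) = if h : c < n then f ⟨c, h⟩ else 0 := by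
  split_ifs with h
  · rw [Finset.sum_eq_single (⟨c, h⟩ : Fin n)]
    · simp
    · intro b _ hb
      rw [if_neg (fun hc => hb (Fin.ext hc))]
    · intro hb
      exact absurd (Finset.mem_univ _) hb
  · apply Finset.sum_eq_zero
    intro q _
    exact if_neg (fun hq => h (by rw [← hq]; exact q.isLt))


lemma sum_ite_val' {α : Type*} [AddCommMonoid α] {n c : ℕ} (f : Fin n → α) :
    ∑ q : Fin n, (if c = (q : ℕ) + 1 then f q else 0)
      = if h : c - 1 < n ∧ 1 ≤ c then f ⟨c - 1, h.1⟩ else 0 := by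
  split_ifs with h
  · rw [Finset.sum_eq_single (⟨c - 1, h.1⟩ : Fin n)]
    · exact if_pos (by simp only [Fin.val_mk]; omega)
    · intro b _ hb
      refine if_neg (fun hc => hb (Fin.ext ?_))
      simp only [Fin.val_mk]
      omega
    · intro hb
      exact absurd (Finset.mem_univ _) hb
  · apply Finset.sum_eq_zero
    intro q _
    refine if_neg (fun hq => h ⟨by omega, by omega⟩)

lemma key (N : ℕ) (hN : 1 ≤ N) (hT1 : T 1 = 1)
    (hTinv : ∀ n, 2 ≤ n → n ≤ N → IsUnit (T n))
    (hb : topP L T V w X R Zh N + Z * botP L T V w X R Zh N = 0) (p : Fin N) :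
    ∑ q : Fin N, Jb L T V w Zh Z N p q * botP L T V w X R Zh ((q : ℕ) + 1)
      = if (p : ℕ) = 0 then R else 0 := by
  have e0 : botP L T V w X R Zh 0 = -R - Zh * X := bot_zero L T V w X R Zh
  have e1 : botP L T V w X R Zh 1 = X := by
    rw [bot_succ, top_zero, hT1, inv_one, Matrix.one_mul]
  set D : Mat L := V ((p : ℕ) + 1) - (if (p : ℕ) = 0 then Zh else 0)
      - (if (p : ℕ) = N - 1 then Z else 0) - w • 1 with hD
  have hsplit : ∀ q : Fin N, Jb L T V w Zh Z N p q * botP L T V w X R Zh ((q : ℕ) + 1)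
      = (if (q : ℕ) = (p : ℕ) then D * botP L T V w X R Zh ((p : ℕ) + 1) else 0)
        + (if (q : ℕ) = (p : ℕ) + 1 then
            T ((p : ℕ) + 2) * botP L T V w X R Zh ((p : ℕ) + 2) else 0)
        + (if (p : ℕ) = (q : ℕ) + 1 then
            (T ((p : ℕ) + 1))ᴴ * botP L T V w X R Zh (p : ℕ) else 0) := by
    intro q
    rw [Jb_eq, ← hD]
    rcases eq_or_ne p q with rfl | h1
    · rw [if_pos rfl, if_pos rfl, if_neg (show ¬((p : ℕ) = (p : ℕ) + 1) by omega),
        if_neg (show ¬((p : ℕ) = (p : ℕ) + 1) by omega), add_zero, add_zero]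
    · have h1' : (q : ℕ) ≠ (p : ℕ) := fun hh => h1 (Fin.ext hh.symm)
      rw [if_neg h1, if_neg h1']
      rcases eq_or_ne ((q : ℕ)) ((p : ℕ) + 1) with h2 | h2
      · rw [if_pos h2, if_pos h2, if_neg (show ¬((p : ℕ) = (q : ℕ) + 1) by omega),
          zero_add, add_zero, h2]
      · rw [if_neg h2, if_neg h2]
        rcases eq_or_ne ((p : ℕ)) ((q : ℕ) + 1) with h3 | h3
        · rw [if_pos h3, if_pos h3, zero_add, zero_add,
            show (q : ℕ) + 2 = (p : ℕ) + 1 by omega, show (q : ℕ) + 1 = (p : ℕ) by omega]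
        · rw [if_neg h3, if_neg h3, Matrix.zero_mul, zero_add, zero_add]
  rw [Finset.sum_congr rfl (fun q _ => hsplit q), Finset.sum_add_distrib,
    Finset.sum_add_distrib, sum_ite_val, sum_ite_val, sum_ite_val', dif_pos p.isLt]
  by_cases h0 : (p : ℕ) = 0
  · rw [if_pos h0, dif_neg (show ¬((p : ℕ) - 1 < N ∧ 1 ≤ (p : ℕ)) by omega), add_zero]
    by_cases hl : (p : ℕ) = N - 1
    · -- N = 1
      have hN1 : N = 1 := by omega
      rw [dif_neg (show ¬((p : ℕ) + 1 < N) by omega), add_zero, hD, if_pos h0, if_pos hl, h0]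
      have hr := roweq L T V w X R Zh 0
      rw [hT1, Matrix.conjTranspose_one, Matrix.one_mul, e0] at hr
      rw [hN1, e1] at hb
      have htop : topP L T V w X R Zh 1 = -(Z * X) := by
        exact (neg_eq_of_add_eq_zero_left hb).symm
      simp only [Nat.zero_add] at hr ⊢
      rw [htop, e1] at hr
      rw [e1, ← sub_eq_zero]
      have halg : (V 1 - Zh - Z - w • 1) * X - R
          = -R - Zh * X + (V 1 - w • (1 : Mat L)) * X + -(Z * X) := by
        noncomm_ring
      rw [halg, hr]
    · -- N ≥ 2
      have hN2 : 2 ≤ N := by omega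
      rw [dif_pos (show (p : ℕ) + 1 < N by omega), hD, if_pos h0, if_neg hl, h0]
      have hr := roweq L T V w X R Zh 0
      rw [hT1, Matrix.conjTranspose_one, Matrix.one_mul, e0,
        top_eq_T_bot L T V w X R Zh 1 (hTinv 2 le_rfl hN2)] at hr
      simp only [Nat.zero_add] at hr ⊢
      rw [e1] at hr
      rw [e1, ← sub_eq_zero]
      have halg : (V 1 - Zh - 0 - w • 1) * X + T 2 * botP L T V w X R Zh 2 - R
          = -R - Zh * X + (V 1 - w • (1 : Mat L)) * X + T (1 + 1) * botP L T V w X R Zh (1 + 1) := by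
        noncomm_ring
      rw [halg, hr]
  · rw [if_neg h0, dif_pos (show (p : ℕ) - 1 < N ∧ 1 ≤ (p : ℕ) by omega)]
    have hr := roweq L T V w X R Zh (p : ℕ)
    by_cases hl : (p : ℕ) = N - 1
    · have hpN : (p : ℕ) + 1 = N := by omega
      rw [dif_neg (show ¬((p : ℕ) + 1 < N) by omega), add_zero, hD, if_neg h0, if_pos hl]
      rw [← hpN] at hb
      have htop : topP L T V w X R Zh ((p : ℕ) + 1)
          = -(Z * botP L T V w X R Zh ((p : ℕ) + 1)) := by
        exact (neg_eq_of_add_eq_zero_left hb).symm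
      rw [htop] at hr
      have halg : (V ((p : ℕ) + 1) - 0 - Z - w • 1) * botP L T V w X R Zh ((p : ℕ) + 1)
            + (T ((p : ℕ) + 1))ᴴ * botP L T V w X R Zh (p : ℕ)
          = (T ((p : ℕ) + 1))ᴴ * botP L T V w X R Zh (p : ℕ)
            + (V ((p : ℕ) + 1) - w • (1 : Mat L)) * botP L T V w X R Zh ((p : ℕ) + 1)
            + -(Z * botP L T V w X R Zh ((p : ℕ) + 1)) := by
        noncomm_ring
      rw [halg, hr]
    · have hp2 : (p : ℕ) + 2 ≤ N := by omega
      rw [dif_pos (show (p : ℕ) + 1 < N by omega), hD, if_neg h0, if_neg hl]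
      rw [top_eq_T_bot L T V w X R Zh ((p : ℕ) + 1) (hTinv ((p : ℕ) + 2) (by omega) hp2)] at hr
      have halg : (V ((p : ℕ) + 1) - 0 - 0 - w • 1) * botP L T V w X R Zh ((p : ℕ) + 1)
            + T ((p : ℕ) + 2) * botP L T V w X R Zh ((p : ℕ) + 2)
            + (T ((p : ℕ) + 1))ᴴ * botP L T V w X R Zh (p : ℕ)
          = (T ((p : ℕ) + 1))ᴴ * botP L T V w X R Zh (p : ℕ)
            + (V ((p : ℕ) + 1) - w • (1 : Mat L)) * botP L T V w X R Zh ((p : ℕ) + 1)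
            + T ((p : ℕ) + 1 + 1) * botP L T V w X R Zh ((p : ℕ) + 1 + 1) := by
        noncomm_ring
      rw [halg, hr]


def Psi (N : ℕ) : Matrix (Fin N × Fin L) (Fin L) ℂ :=
  Matrix.of fun p j => botP L T V w X R Zh ((p.1 : ℕ) + 1) p.2 j

def EE (N : ℕ) : Matrix (Fin N × Fin L) (Fin L) ℂ :=
  Matrix.of fun p j => if (p.1 : ℕ) = 0 then R p.2 j else 0

lemma master (N : ℕ) (hN : 1 ≤ N) (hT1 : T 1 = 1)
    (hTinv : ∀ n, 2 ≤ n → n ≤ N → IsUnit (T n))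
    (hb : topP L T V w X R Zh N + Z * botP L T V w X R Zh N = 0) :
    (jacobi L N T V Zh Z - w • 1) * Psi L T V w X R Zh N = EE L R N := by
  ext ⟨p, i⟩ j
  rw [Matrix.mul_apply, Fintype.sum_prod_type]
  have h1 : ∀ q : Fin N, (∑ k : Fin L,
        (jacobi L N T V Zh Z - w • 1) (p, i) (q, k) * Psi L T V w X R Zh N (q, k) j)
      = (Jb L T V w Zh Z N p q * botP L T V w X R Zh ((q : ℕ) + 1)) i j := by
    intro q
    rw [Matrix.mul_apply]
    rfl
  rw [Finset.sum_congr rfl (fun q _ => h1 q), ← Matrix.sum_apply,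
    key L T V w X R Zh Z N hN hT1 hTinv hb p]
  show _ = if (p : ℕ) = 0 then R i j else 0
  split_ifs <;> rfl


lemma mul_EE_one (N : ℕ) (hN : 0 < N) (M : Matrix (Fin N × Fin L) (Fin N × Fin L) ℂ)
    (p : Fin N × Fin L) (j : Fin L) :
    (M * EE L (1 : Mat L) N) p j = M p (⟨0, hN⟩, j) := by
  rw [Matrix.mul_apply, Fintype.sum_prod_type]
  have h1 : ∀ q : Fin N, (∑ k, M p (q, k) * EE L (1 : Mat L) N (q, k) j)
      = if (q : ℕ) = 0 then M p (q, j) else 0 := by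
    intro q
    by_cases hq : (q : ℕ) = 0
    · rw [if_pos hq]
      have h2 : ∀ k, EE L (1 : Mat L) N (q, k) j = if k = j then 1 else 0 := fun k => by
        simp [EE, hq, Matrix.one_apply]
      rw [Finset.sum_congr rfl (fun k _ => by rw [h2 k])]
      simp [mul_ite]
    · rw [if_neg hq]
      apply Finset.sum_eq_zero
      intro k _
      simp [EE, hq]
  rw [Finset.sum_congr rfl (fun q _ => h1 q), sum_ite_val, dif_pos hN]

end Stmt1Aux

theorem stmt1' (L N : ℕ) (hL : 1 ≤ L) (hN : 1 ≤ N)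
    (T V : ℕ → Mat L) (hT1 : T 1 = 1)
    (hTinv : ∀ n, 2 ≤ n → n ≤ N → IsUnit (T n))
    (hV : ∀ n, 1 ≤ n → n ≤ N → (V n).IsHermitian)
    (Zh Z : Mat L) (hZh : Zh.IsHermitian) (hZ : Z.IsHermitian)
    (z : ℂ) (hz : 0 < z.im) :
    IsUnit (blockA L N T V (starRingEnd ℂ z) + Z * blockC L N T V (starRingEnd ℂ z)
      - blockB L N T V (starRingEnd ℂ z) * Zh - Z * blockD L N T V (starRingEnd ℂ z) * Zh) ∧
    green L N hN T V Zh Z z =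
      ((blockA L N T V (starRingEnd ℂ z) + Z * blockC L N T V (starRingEnd ℂ z)
        - blockB L N T V (starRingEnd ℂ z) * Zh - Z * blockD L N T V (starRingEnd ℂ z) * Zh)⁻¹
        * (blockB L N T V (starRingEnd ℂ z) + Z * blockD L N T V (starRingEnd ℂ z)))ᴴ := by
  open Stmt1Aux in
  set w : ℂ := starRingEnd ℂ z with hw
  have hwim : w.im ≠ 0 := by
    rw [hw, Complex.conj_im]
    intro h
    rw [neg_eq_zero] at h
    exact (ne_of_gt hz) h
  have hherm := jacobi_herm L N T V Zh Z hV hZh hZ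
  have hJw : IsUnit (jacobi L N T V Zh Z - w • 1) := herm_sub_smul_unit hherm hwim
  have hJwdet := (Matrix.isUnit_iff_isUnit_det _).1 hJw
  set M : Mat L := blockA L N T V w + Z * blockC L N T V w - blockB L N T V w * Zh
      - Z * blockD L N T V w * Zh with hMdef
  set K : Mat L := blockB L N T V w + Z * blockD L N T V w with hKdef
  have hM : IsUnit M := by
    rw [Matrix.isUnit_iff_isUnit_det, isUnit_iff_ne_zero]
    intro hdet
    obtain ⟨v, hv, hv0⟩ := Matrix.exists_mulVec_eq_zero_iff.2 hdet
    set X0 : Mat L := Matrix.of fun i (_ : Fin L) => v i with hX0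
    have hMX : M * X0 = K * (0 : Mat L) := by
      rw [Matrix.mul_zero]
      ext i j
      rw [Matrix.mul_apply]
      have h := congrFun hv0 i
      simpa [Matrix.mulVec, dotProduct, hX0] using h
    have hb := boundary L T V w X0 0 Zh Z N hMX
    have hmaster := master L T V w X0 0 Zh Z N hN hT1 hTinv hb
    have hEE0 : EE L (0 : Mat L) N = 0 := by
      ext p j
      simp [EE]
    rw [hEE0] at hmaster
    have hPsi : Psi L T V w X0 0 Zh N = 0 := by
      have h := congrArg (fun Y => (jacobi L N T V Zh Z - w • 1)⁻¹ * Y) hmaster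
      simpa [← Matrix.mul_assoc, Matrix.nonsing_inv_mul _ hJwdet] using h
    have e1 : botP L T V w X0 0 Zh 1 = X0 := by
      rw [bot_succ, top_zero, hT1, inv_one, Matrix.one_mul]
    apply hv
    funext i
    have h0 : Psi L T V w X0 0 Zh N ((⟨0, hN⟩ : Fin N), i) ⟨0, hL⟩ = 0 := by rw [hPsi]; rfl
    simp [Psi, Nat.zero_add, e1] at h0
    simpa [hX0] using h0
  refine ⟨hM, ?_⟩
  have hMdet := (Matrix.isUnit_iff_isUnit_det _).1 hM
  set X1 : Mat L := M⁻¹ * K with hX1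
  have hMX1 : M * X1 = K * (1 : Mat L) := by
    rw [Matrix.mul_one, hX1, Matrix.mul_nonsing_inv_cancel_left _ _ hMdet]
  have hb := boundary L T V w X1 1 Zh Z N hMX1
  have hmaster := master L T V w X1 1 Zh Z N hN hT1 hTinv hb
  have hPsi : Psi L T V w X1 1 Zh N = (jacobi L N T V Zh Z - w • 1)⁻¹ * EE L (1 : Mat L) N := by
    rw [← hmaster, ← Matrix.mul_assoc, Matrix.nonsing_inv_mul _ hJwdet, Matrix.one_mul]
  have hconj : jacobi L N T V Zh Z - z • 1 = (jacobi L N T V Zh Z - w • 1)ᴴ := by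
    rw [Matrix.conjTranspose_sub, hherm.eq, Matrix.conjTranspose_smul, Matrix.conjTranspose_one]
    rw [hw, Complex.star_def, Complex.conj_conj]
  have e1 : botP L T V w X1 1 Zh 1 = X1 := by
    rw [bot_succ, top_zero, hT1, inv_one, Matrix.one_mul]
  ext i j
  show (jacobi L N T V Zh Z - z • 1)⁻¹ (⟨0, hN⟩, i) (⟨0, hN⟩, j) = (X1)ᴴ i j
  rw [hconj, ← Matrix.conjTranspose_nonsing_inv, Matrix.conjTranspose_apply,
    Matrix.conjTranspose_apply]
  have hent : (jacobi L N T V Zh Z - w • 1)⁻¹ ((⟨0, hN⟩ : Fin N), j) (⟨0, hN⟩, i) = X1 j i := by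
    have h := mul_EE_one L N hN ((jacobi L N T V Zh Z - w • 1)⁻¹) (⟨0, hN⟩, j) i
    rw [← hPsi] at h
    rw [← h]
    have h2 : Psi L T V w X1 1 Zh N (⟨0, hN⟩, j) i = botP L T V w X1 1 Zh 1 j i := rfl
    rw [h2, e1]
  rw [hent]


theorem stmt1 (L N : ℕ) (hL : 1 ≤ L) (hN : 1 ≤ N)
    (T V : ℕ → Mat L) (hT1 : T 1 = 1)
    (hTinv : ∀ n, 2 ≤ n → n ≤ N → IsUnit (T n))
    (hV : ∀ n, 1 ≤ n → n ≤ N → (V n).IsHermitian)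
    (Zh Z : Mat L) (hZh : Zh.IsHermitian) (hZ : Z.IsHermitian)
    (z : ℂ) (hz : 0 < z.im) :
    IsUnit (blockA L N T V (starRingEnd ℂ z) + Z * blockC L N T V (starRingEnd ℂ z)
      - blockB L N T V (starRingEnd ℂ z) * Zh - Z * blockD L N T V (starRingEnd ℂ z) * Zh) ∧
    green L N hN T V Zh Z z =
      ((blockA L N T V (starRingEnd ℂ z) + Z * blockC L N T V (starRingEnd ℂ z)
        - blockB L N T V (starRingEnd ℂ z) * Zh - Z * blockD L N T V (starRingEnd ℂ z) * Zh)⁻¹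
        * (blockB L N T V (starRingEnd ℂ z) + Z * blockD L N T V (starRingEnd ℂ z)))ᴴ :=
  stmt1' L N hL hN T V hT1 hTinv hV Zh Z hZh hZ z hz
end
end

section
/- Let Φ be a 2L×L complex matrix with L×L blocks a (top) and b (bottom) such that Φ has rank L and Φ^* J Φ = 0. Then the matrix a + i b is invertible and Π(Φ) = (a − i b)(a + i b)^{-1} is a unitary matrix. -/
open MeasureTheory Matrix
open scoped ComplexOrder

noncomputable section

/-- The symplectic form `J = [[0, −1], [1, 0]]` in `L × L` blocks. -/
def symJ (L : ℕ) : Matrix (Fin L ⊕ Fin L) (Fin L ⊕ Fin L) ℂ := Matrix.fromBlocks 0 (-1) 1 0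

/-- Top `L × L` block of a `2L × L` matrix. -/
def topBlk (L : ℕ) (Φ : Matrix (Fin L ⊕ Fin L) (Fin L) ℂ) : Mat L :=
  Matrix.of fun i j => Φ (Sum.inl i) j

/-- Bottom `L × L` block of a `2L × L` matrix. -/
def botBlk (L : ℕ) (Φ : Matrix (Fin L ⊕ Fin L) (Fin L) ℂ) : Mat L :=
  Matrix.of fun i j => Φ (Sum.inr i) j

/-- A Lagrangian frame: a `2L × L` matrix of maximal rank `L` with `Φ^* J Φ = 0`. -/
def IsLagFrame (L : ℕ) (Φ : Matrix (Fin L ⊕ Fin L) (Fin L) ℂ) : Prop :=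
  Φ.rank = L ∧ Φᴴ * symJ L * Φ = 0

/-- The stereographic map `Π(Φ) = (a − i b)(a + i b)⁻¹` for `Φ = (a; b)`. -/
def PiMap (L : ℕ) (Φ : Matrix (Fin L ⊕ Fin L) (Fin L) ℂ) : Mat L :=
  (topBlk L Φ - Complex.I • botBlk L Φ) * (topBlk L Φ + Complex.I • botBlk L Φ)⁻¹

lemma isUnit_of_rank_eq_card {n : ℕ} (A : Matrix (Fin n) (Fin n) ℂ) (h : A.rank = n) :
    IsUnit A := by
  rw [← Matrix.mulVec_injective_iff_isUnit]
  have hr : LinearMap.range A.mulVecLin = ⊤ := by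
    apply Submodule.eq_top_of_finrank_eq
    rw [← Matrix.rank, h]
    simp
  exact (LinearMap.injective_iff_surjective).mpr (LinearMap.range_eq_top.mp hr)

theorem stmt2 (L : ℕ) (hL : 1 ≤ L) (Φ : Matrix (Fin L ⊕ Fin L) (Fin L) ℂ)
    (hΦ : IsLagFrame L Φ) :
    IsUnit (topBlk L Φ + Complex.I • botBlk L Φ) ∧
    PiMap L Φ ∈ Matrix.unitaryGroup (Fin L) ℂ := by
  obtain ⟨hrank, hJ⟩ := hΦ
  set a := topBlk L Φ with ha
  set b := botBlk L Φ with hb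
  have hΦeq : Φ = Matrix.fromRows a b := by
    ext (i | i) j <;> rfl
  -- the Lagrangian condition gives bᴴ a = aᴴ b
  have hlag : bᴴ * a = aᴴ * b := by
    have : Φᴴ * symJ L * Φ = bᴴ * a - aᴴ * b := by
      rw [hΦeq, symJ, Matrix.conjTranspose_fromRows_eq_fromCols_conjTranspose]
      rw [Matrix.fromCols_mul_fromBlocks, Matrix.fromCols_mul_fromRows]
      noncomm_ring
    rw [this] at hJ
    linear_combination (norm := noncomm_ring) hJ
  set c := a + Complex.I • b with hc
  set d := a - Complex.I • b with hd
  have hI : star Complex.I = -Complex.I := Complex.conj_I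
  have hcHc : cᴴ * c = aᴴ * a + bᴴ * b := by
    rw [hc, conjTranspose_add, conjTranspose_smul, hI]
    rw [add_mul, mul_add, mul_add, smul_mul_assoc, smul_mul_assoc, mul_smul_comm, mul_smul_comm,
      smul_smul]
    rw [hlag]
    simp [Complex.I_mul_I, smul_smul]
  have hdHd : dᴴ * d = aᴴ * a + bᴴ * b := by
    rw [hd, conjTranspose_sub, conjTranspose_smul, hI]
    rw [sub_mul, mul_sub, mul_sub, smul_mul_assoc, smul_mul_assoc, mul_smul_comm, mul_smul_comm,
      smul_smul]
    rw [hlag]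
    simp [Complex.I_mul_I, smul_smul]
    abel
  have hGram : Φᴴ * Φ = aᴴ * a + bᴴ * b := by
    rw [hΦeq, Matrix.conjTranspose_fromRows_eq_fromCols_conjTranspose,
      Matrix.fromCols_mul_fromRows]
  have hGramUnit : IsUnit (aᴴ * a + bᴴ * b) := by
    rw [← hGram]
    apply isUnit_of_rank_eq_card
    rw [Matrix.rank_conjTranspose_mul_self, hrank]
  have hcUnit : IsUnit c := by
    have : IsUnit (cᴴ * c) := hcHc ▸ hGramUnit
    rw [Matrix.isUnit_iff_isUnit_det] at this ⊢
    rw [Matrix.det_mul] at this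
    exact isUnit_of_mul_isUnit_right this
  refine ⟨hcUnit, ?_⟩
  have hcdet : IsUnit c.det := (Matrix.isUnit_iff_isUnit_det c).mp hcUnit
  rw [Matrix.mem_unitaryGroup_iff']
  have hPi : PiMap L Φ = d * c⁻¹ := rfl
  rw [hPi]
  have hstar : star (d * c⁻¹) = (cᴴ)⁻¹ * dᴴ := by
    rw [Matrix.star_eq_conjTranspose, Matrix.conjTranspose_mul, Matrix.conjTranspose_nonsing_inv]
  rw [hstar]
  calc (cᴴ)⁻¹ * dᴴ * (d * c⁻¹) = (cᴴ)⁻¹ * (dᴴ * d) * c⁻¹ := by noncomm_ring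
    _ = (cᴴ)⁻¹ * (cᴴ * c) * c⁻¹ := by rw [hdHd, hcHc]
    _ = ((cᴴ)⁻¹ * cᴴ) * (c * c⁻¹) := by noncomm_ring
    _ = 1 := by
        have hcHdet : IsUnit (cᴴ).det := by
          rw [Matrix.det_conjTranspose]; exact hcdet.star
        rw [Matrix.nonsing_inv_mul _ hcHdet, Matrix.mul_nonsing_inv _ hcdet, one_mul]
end
end

section
/- The map Π induces a bijection from equivalence classes of Lagrangian frames onto the unitary group U(L): (i) for any two Lagrangian frames Φ and Ψ, Π(Φ) = Π(Ψ) if and only if there exists an invertible complex L×L matrix c with Φ = Ψ c; and (ii) for every unitary L×L matrix U there exists a Lagrangian frame Φ with Π(Φ) = U. -/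
open MeasureTheory Matrix
open scoped ComplexOrder

noncomputable section

namespace LagAux

variable {L : ℕ}

lemma eq_fromRows (Φ : Matrix (Fin L ⊕ Fin L) (Fin L) ℂ) :
    Φ = Matrix.fromRows (topBlk L Φ) (botBlk L Φ) := by
  ext (i | i) j <;> rfl

lemma topBlk_mul (Ψ : Matrix (Fin L ⊕ Fin L) (Fin L) ℂ) (c : Mat L) :
    topBlk L (Ψ * c) = topBlk L Ψ * c := by
  ext i j; simp [topBlk, Matrix.mul_apply]

lemma botBlk_mul (Ψ : Matrix (Fin L ⊕ Fin L) (Fin L) ℂ) (c : Mat L) :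
    botBlk L (Ψ * c) = botBlk L Ψ * c := by
  ext i j; simp [botBlk, Matrix.mul_apply]

lemma symJ_eq (Φ : Matrix (Fin L ⊕ Fin L) (Fin L) ℂ) :
    Φᴴ * symJ L * Φ =
      (botBlk L Φ)ᴴ * topBlk L Φ - (topBlk L Φ)ᴴ * botBlk L Φ := by
  conv_lhs => rw [eq_fromRows Φ]
  rw [symJ, conjTranspose_fromRows_eq_fromCols_conjTranspose,
    fromCols_mul_fromBlocks, fromCols_mul_fromRows]
  simp [Matrix.mul_assoc, sub_eq_add_neg]

lemma conj_cond {Φ : Matrix (Fin L ⊕ Fin L) (Fin L) ℂ} (hJ : Φᴴ * symJ L * Φ = 0) :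
    (botBlk L Φ)ᴴ * topBlk L Φ = (topBlk L Φ)ᴴ * botBlk L Φ := by
  have := (symJ_eq Φ) ▸ hJ
  exact sub_eq_zero.mp this

lemma conjTranspose_mul_self_eq (Φ : Matrix (Fin L ⊕ Fin L) (Fin L) ℂ) :
    Φᴴ * Φ = (topBlk L Φ)ᴴ * topBlk L Φ + (botBlk L Φ)ᴴ * botBlk L Φ := by
  conv_lhs => rw [eq_fromRows Φ]
  rw [conjTranspose_fromRows_eq_fromCols_conjTranspose, fromCols_mul_fromRows]

lemma MhM {Φ : Matrix (Fin L ⊕ Fin L) (Fin L) ℂ} (hJ : Φᴴ * symJ L * Φ = 0) :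
    (topBlk L Φ + Complex.I • botBlk L Φ)ᴴ * (topBlk L Φ + Complex.I • botBlk L Φ) =
      Φᴴ * Φ := by
  set a := topBlk L Φ
  set b := botBlk L Φ
  have hab : bᴴ * a = aᴴ * b := conj_cond hJ
  rw [conjTranspose_mul_self_eq]
  rw [conjTranspose_add, conjTranspose_smul]
  simp only [Complex.star_def, Complex.conj_I]
  rw [Matrix.add_mul, Matrix.mul_add, Matrix.mul_add, Matrix.smul_mul, Matrix.smul_mul,
    Matrix.mul_smul, Matrix.mul_smul, hab, smul_smul]
  simp [Complex.I_mul_I]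
  module

lemma mulVec_inj_of_rank {Φ : Matrix (Fin L ⊕ Fin L) (Fin L) ℂ} (h : Φ.rank = L) :
    Function.Injective Φ.mulVecLin := by
  rw [← LinearMap.ker_eq_bot]
  have h1 := LinearMap.finrank_range_add_finrank_ker Φ.mulVecLin
  rw [Module.finrank_fin_fun] at h1
  have hr : Module.finrank ℂ (LinearMap.range Φ.mulVecLin) = L := h
  rw [hr] at h1
  have hk : Module.finrank ℂ (LinearMap.ker Φ.mulVecLin) = 0 := by omega
  exact Submodule.finrank_eq_zero.mp hk

lemma isUnit_M {Φ : Matrix (Fin L ⊕ Fin L) (Fin L) ℂ} (hΦ : IsLagFrame L Φ) :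
    IsUnit (topBlk L Φ + Complex.I • botBlk L Φ) := by
  set M := topBlk L Φ + Complex.I • botBlk L Φ with hM
  rw [Matrix.isUnit_iff_isUnit_det, isUnit_iff_ne_zero]
  intro hdet
  obtain ⟨v, hv, hMv⟩ := (Matrix.exists_mulVec_eq_zero_iff).mpr hdet
  apply hv
  have h1 : (Mᴴ * M) *ᵥ v = 0 := by
    rw [← Matrix.mulVec_mulVec, hMv, Matrix.mulVec_zero]
  rw [MhM hΦ.2] at h1
  have h2 : Φ *ᵥ v = 0 := (Matrix.conjTranspose_mul_self_mulVec_eq_zero Φ v).mp h1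
  have := mulVec_inj_of_rank hΦ.1
  have h3 : Φ.mulVecLin v = Φ.mulVecLin 0 := by
    simp [Matrix.mulVecLin_apply, h2]
  exact this h3

lemma blocks_recover {a b a' b' : Mat L}
    (hM : a + Complex.I • b = a' + Complex.I • b')
    (hN : a - Complex.I • b = a' - Complex.I • b') : a = a' ∧ b = b' := by
  constructor
  · have h : (2:ℂ) • a = (2:ℂ) • a' := by
      have := congrArg₂ (· + ·) hM hN
      rw [show a + Complex.I • b + (a - Complex.I • b) = (2:ℂ) • a by module,
        show a' + Complex.I • b' + (a' - Complex.I • b') = (2:ℂ) • a' by module] at this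
      exact this
    exact smul_right_injective (Mat L) two_ne_zero h
  · have h : ((2:ℂ) * Complex.I) • b = ((2:ℂ) * Complex.I) • b' := by
      have := congrArg₂ (· - ·) hM hN
      rw [show a + Complex.I • b - (a - Complex.I • b) = ((2:ℂ) * Complex.I) • b by module,
        show a' + Complex.I • b' - (a' - Complex.I • b') = ((2:ℂ) * Complex.I) • b' by module]
        at this
      exact this
    exact smul_right_injective (Mat L) (by simp [Complex.I_ne_zero]) h

end LagAux

open LagAux in
theorem stmt3 (L : ℕ) (hL : 1 ≤ L) :
    (∀ Φ Ψ : Matrix (Fin L ⊕ Fin L) (Fin L) ℂ, IsLagFrame L Φ → IsLagFrame L Ψ →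
      (PiMap L Φ = PiMap L Ψ ↔ ∃ c : Mat L, IsUnit c ∧ Φ = Ψ * c)) ∧
    (∀ U ∈ Matrix.unitaryGroup (Fin L) ℂ,
      ∃ Φ : Matrix (Fin L ⊕ Fin L) (Fin L) ℂ, IsLagFrame L Φ ∧ PiMap L Φ = U) := by
  constructor
  · intro Φ Ψ hΦ hΨ
    set aΦ := topBlk L Φ with haΦ
    set bΦ := botBlk L Φ with hbΦ
    set aΨ := topBlk L Ψ with haΨ
    set bΨ := botBlk L Ψ with hbΨ
    have hMΦ : IsUnit (aΦ + Complex.I • bΦ) := isUnit_M hΦ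
    have hMΨ : IsUnit (aΨ + Complex.I • bΨ) := isUnit_M hΨ
    have hdΦ : IsUnit (aΦ + Complex.I • bΦ).det := (Matrix.isUnit_iff_isUnit_det _).mp hMΦ
    have hdΨ : IsUnit (aΨ + Complex.I • bΨ).det := (Matrix.isUnit_iff_isUnit_det _).mp hMΨ
    constructor
    · intro hPi
      refine ⟨(aΨ + Complex.I • bΨ)⁻¹ * (aΦ + Complex.I • bΦ), ?_, ?_⟩
      · exact ((Matrix.isUnit_nonsing_inv_iff).mpr hMΨ).mul hMΦ
      · set c := (aΨ + Complex.I • bΨ)⁻¹ * (aΦ + Complex.I • bΦ) with hc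
        have hM : aΦ + Complex.I • bΦ = (aΨ + Complex.I • bΨ) * c := by
          rw [hc, ← Matrix.mul_assoc, Matrix.mul_nonsing_inv _ hdΨ, Matrix.one_mul]
        have hN : aΦ - Complex.I • bΦ = (aΨ - Complex.I • bΨ) * c := by
          have := hPi
          unfold PiMap at this
          rw [← haΦ, ← hbΦ, ← haΨ, ← hbΨ] at this
          calc aΦ - Complex.I • bΦ
              = (aΦ - Complex.I • bΦ) * ((aΦ + Complex.I • bΦ)⁻¹ * (aΦ + Complex.I • bΦ)) := by
                rw [Matrix.nonsing_inv_mul _ hdΦ, Matrix.mul_one]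
            _ = ((aΦ - Complex.I • bΦ) * (aΦ + Complex.I • bΦ)⁻¹) * (aΦ + Complex.I • bΦ) := by
                rw [Matrix.mul_assoc]
            _ = ((aΨ - Complex.I • bΨ) * (aΨ + Complex.I • bΨ)⁻¹) * (aΦ + Complex.I • bΦ) := by
                rw [this]
            _ = (aΨ - Complex.I • bΨ) * c := by rw [hc, Matrix.mul_assoc]
        have hM' : aΦ + Complex.I • bΦ = aΨ * c + Complex.I • (bΨ * c) := by
          rw [hM, Matrix.add_mul, Matrix.smul_mul]
        have hN' : aΦ - Complex.I • bΦ = aΨ * c - Complex.I • (bΨ * c) := by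
          rw [hN, Matrix.sub_mul, Matrix.smul_mul]
        obtain ⟨ha, hb⟩ := blocks_recover hM' hN'
        rw [eq_fromRows Φ, eq_fromRows (Ψ * c), ← haΦ, ← hbΦ, topBlk_mul, botBlk_mul,
          ← haΨ, ← hbΨ, ha, hb]
    · rintro ⟨c, hc, rfl⟩
      have hdc : IsUnit c.det := (Matrix.isUnit_iff_isUnit_det _).mp hc
      unfold PiMap
      rw [topBlk_mul, botBlk_mul, ← haΨ, ← hbΨ]
      rw [show aΨ * c - Complex.I • (bΨ * c) = (aΨ - Complex.I • bΨ) * c by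
            rw [Matrix.sub_mul, Matrix.smul_mul],
          show aΨ * c + Complex.I • (bΨ * c) = (aΨ + Complex.I • bΨ) * c by
            rw [Matrix.add_mul, Matrix.smul_mul]]
      rw [Matrix.mul_inv_rev, Matrix.mul_assoc, ← Matrix.mul_assoc c,
        Matrix.mul_nonsing_inv _ hdc, Matrix.one_mul]
  · intro U hU
    have hU1 : Uᴴ * U = 1 := by
      have := (Matrix.mem_unitaryGroup_iff').mp hU
      rwa [Matrix.star_eq_conjTranspose] at this
    set a : Mat L := (2⁻¹ : ℂ) • (U + 1) with ha
    set b : Mat L := (Complex.I / 2) • (U - 1) with hb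
    set Φ := Matrix.fromRows a b with hΦdef
    have hta : topBlk L Φ = a := by ext i j; rfl
    have htb : botBlk L Φ = b := by ext i j; rfl
    have haddI : a + Complex.I • b = 1 := by
      rw [ha, hb, smul_smul]
      rw [show Complex.I * (Complex.I / 2) = -2⁻¹ by
        have := Complex.I_mul_I; linear_combination (2⁻¹ : ℂ) * this]
      module
    have hsubI : a - Complex.I • b = U := by
      rw [ha, hb, smul_smul]
      rw [show Complex.I * (Complex.I / 2) = -2⁻¹ by
        have := Complex.I_mul_I; linear_combination (2⁻¹ : ℂ) * this]
      module
    refine ⟨Φ, ⟨?_, ?_⟩, ?_⟩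
    · -- rank
      have hinj : Function.Injective Φ.mulVecLin := by
        rw [← LinearMap.ker_eq_bot]
        rw [LinearMap.ker_eq_bot']
        intro v hv
        rw [Matrix.mulVecLin_apply, hΦdef, Matrix.fromRows_mulVec] at hv
        have hav : a *ᵥ v = 0 := by
          funext i; exact congrFun hv (Sum.inl i)
        have hbv : b *ᵥ v = 0 := by
          funext i; exact congrFun hv (Sum.inr i)
        have : (a + Complex.I • b) *ᵥ v = 0 := by
          rw [Matrix.add_mulVec, hav, Matrix.smul_mulVec, hbv, smul_zero, add_zero]
        rwa [haddI, Matrix.one_mulVec] at this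
      rw [Matrix.rank]
      rw [LinearMap.finrank_range_of_inj hinj, Module.finrank_fin_fun]
    · -- Lagrangian condition
      rw [symJ_eq, hta, htb, sub_eq_zero]
      have hbH : bᴴ = (-(Complex.I / 2)) • (Uᴴ - 1) := by
        rw [hb, conjTranspose_smul]
        congr 1
        · simp [Complex.star_def, neg_div]
        · rw [conjTranspose_sub, conjTranspose_one]
      have haH : aᴴ = (2⁻¹ : ℂ) • (Uᴴ + 1) := by
        rw [ha, conjTranspose_smul]
        congr 1
        · simp [Complex.star_def]
        · rw [conjTranspose_add, conjTranspose_one]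
      rw [hbH, haH, ha, hb]
      rw [Matrix.smul_mul, Matrix.mul_smul, Matrix.smul_mul, Matrix.mul_smul,
        smul_smul, smul_smul]
      have h1 : (Uᴴ - 1) * (U + 1) = Uᴴ - U := by
        rw [Matrix.sub_mul, Matrix.mul_add, Matrix.mul_one, Matrix.one_mul, hU1]
        abel
      have h2 : (Uᴴ + 1) * (U - 1) = U - Uᴴ := by
        rw [Matrix.add_mul, Matrix.mul_sub, Matrix.mul_one, Matrix.one_mul, hU1]
        abel
      rw [h1, h2, show (U - Uᴴ) = -(Uᴴ - U) by abel, smul_neg, ← neg_smul]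
      congr 1
      ring
    · unfold PiMap
      rw [hta, htb, hsubI, haddI, inv_one, Matrix.mul_one]

end
end

section
/- Let N ≥ 2, let Ẑ be a self-adjoint complex L×L matrix, take right boundary condition Z = 0, and let E ∈ ℝ. Then the 2L×L matrix Φ^E_N = 𝒯^E(N,0) · (1; −Ẑ) is a Lagrangian frame, U^E_N = Π(Φ^E_N) is unitary, and the multiplicity of E as an eigenvalue of H^N_{Ẑ,0} equals the multiplicity of −1 as an eigenvalue of U^E_N; that is, dim_ℂ ker(H^N_{Ẑ,0} − E·1) = dim_ℂ ker(U^E_N + 1). -/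
open MeasureTheory Matrix
open scoped ComplexOrder

noncomputable section

namespace Aux

lemma transferProd_zero (L : ℕ) (T V : ℕ → Mat L) (z : ℂ) : transferProd L 0 T V z = 1 := by
  simp [transferProd]

lemma transferProd_succ (L n : ℕ) (T V : ℕ → Mat L) (z : ℂ) :
    transferProd L (n + 1) T V z
      = transferM L z (T (n + 1)) (V (n + 1)) * transferProd L n T V z := by
  simp [transferProd, List.range_succ]

lemma isUnit_symJ (L : ℕ) : IsUnit (symJ L) := by
  refine ⟨⟨symJ L, Matrix.fromBlocks 0 1 (-1) 0, ?_, ?_⟩, rfl⟩ <;>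
    simp [symJ, Matrix.fromBlocks_multiply, ← Matrix.fromBlocks_one]

lemma transferM_symplectic {L : ℕ} (E : ℝ) (T' V' : Mat L) (hT : IsUnit T'.det)
    (hV : V'ᴴ = V') :
    (transferM L (E : ℂ) T' V')ᴴ * symJ L * transferM L (E : ℂ) T' V' = symJ L := by
  have h1 : T' * T'⁻¹ = 1 := Matrix.mul_nonsing_inv _ hT
  have hA : ((E : ℂ) • (1 : Mat L) - V')ᴴ = (E : ℂ) • (1 : Mat L) - V' := by
    rw [Matrix.conjTranspose_sub, Matrix.conjTranspose_smul, Matrix.conjTranspose_one, hV]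
    norm_num [Complex.star_def, Complex.conj_ofReal]
  have hinv : (T'⁻¹)ᴴ * T'ᴴ = 1 := by
    rw [← Matrix.conjTranspose_mul, h1, Matrix.conjTranspose_one]
  rw [transferM, symJ, Matrix.fromBlocks_conjTranspose, Matrix.fromBlocks_multiply,
    Matrix.fromBlocks_multiply]
  rw [Matrix.fromBlocks_inj]
  refine ⟨?_, ?_, ?_, ?_⟩
  · rw [Matrix.conjTranspose_mul, hA]
    simp [Matrix.mul_assoc]
  · simp [Matrix.mul_neg, ← Matrix.conjTranspose_mul, h1]
  · simp [Matrix.neg_mul, h1]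
  · simp
lemma transferProd_symplectic (L N : ℕ) (T V : ℕ → Mat L) (E : ℝ)
    (hT : ∀ n, 1 ≤ n → n ≤ N → IsUnit (T n).det)
    (hV : ∀ n, 1 ≤ n → n ≤ N → (V n).IsHermitian) :
    ∀ n, n ≤ N → (transferProd L n T V (E : ℂ))ᴴ * symJ L * transferProd L n T V (E : ℂ)
      = symJ L := by
  intro n
  induction n with
  | zero => intro _; simp [transferProd_zero]
  | succ m ih =>
    intro hm
    have ihm := ih (by omega)
    rw [transferProd_succ, Matrix.conjTranspose_mul]
    have key := transferM_symplectic E (T (m + 1)) (V (m + 1))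
      (hT _ (by omega) (by omega)) (hV _ (by omega) (by omega))
    calc (transferProd L m T V (E:ℂ))ᴴ * (transferM L (E:ℂ) (T (m+1)) (V (m+1)))ᴴ * symJ L *
          (transferM L (E:ℂ) (T (m+1)) (V (m+1)) * transferProd L m T V (E:ℂ))
        = (transferProd L m T V (E:ℂ))ᴴ *
            ((transferM L (E:ℂ) (T (m+1)) (V (m+1)))ᴴ * symJ L *
              transferM L (E:ℂ) (T (m+1)) (V (m+1))) * transferProd L m T V (E:ℂ) := by
          simp only [Matrix.mul_assoc]
      _ = symJ L := by rw [key, ihm]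

lemma isUnit_transferProd (L N : ℕ) (T V : ℕ → Mat L) (E : ℝ)
    (hT : ∀ n, 1 ≤ n → n ≤ N → IsUnit (T n).det)
    (hV : ∀ n, 1 ≤ n → n ≤ N → (V n).IsHermitian) :
    IsUnit (transferProd L N T V (E : ℂ)).det := by
  have hs := transferProd_symplectic L N T V E hT hV N le_rfl
  have hJ : IsUnit (symJ L).det := (Matrix.isUnit_iff_isUnit_det _).mp (isUnit_symJ L)
  have h2 : IsUnit ((transferProd L N T V (E:ℂ))ᴴ.det * (symJ L).det *
      (transferProd L N T V (E:ℂ)).det) := by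
    rw [← Matrix.det_mul, ← Matrix.det_mul, hs]; exact hJ
  exact isUnit_of_mul_isUnit_right h2

lemma rank_F (L : ℕ) (Zh : Mat L) : (Matrix.fromRows (1 : Mat L) (-Zh)).rank = L := by
  have hker : LinearMap.ker (Matrix.fromRows (1 : Mat L) (-Zh)).mulVecLin = ⊥ := by
    rw [LinearMap.ker_eq_bot']
    intro v hv
    funext i
    have := congrFun hv (Sum.inl i)
    simpa [Matrix.mulVecLin_apply, Matrix.fromRows_mulVec] using this
  have h := LinearMap.finrank_range_add_finrank_ker (Matrix.fromRows (1 : Mat L) (-Zh)).mulVecLin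
  rw [hker] at h
  simpa [Matrix.rank] using h

lemma lag_F (L : ℕ) (Zh : Mat L) (hZh : Zhᴴ = Zh) :
    (Matrix.fromRows (1 : Mat L) (-Zh))ᴴ * symJ L * Matrix.fromRows (1 : Mat L) (-Zh) = 0 := by
  rw [symJ, Matrix.conjTranspose_fromRows_eq_fromCols_conjTranspose, Matrix.mul_assoc,
    Matrix.fromBlocks_mul_fromRows, Matrix.fromCols_mul_fromRows]
  simp [hZh]

lemma fromRows_top_bot {L : ℕ} (Φ : Matrix (Fin L ⊕ Fin L) (Fin L) ℂ) :
    Matrix.fromRows (topBlk L Φ) (botBlk L Φ) = Φ := by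
  ext (i | i) j <;> rfl

lemma lag_herm {L : ℕ} {Φ : Matrix (Fin L ⊕ Fin L) (Fin L) ℂ}
    (h : Φᴴ * symJ L * Φ = 0) :
    (topBlk L Φ)ᴴ * botBlk L Φ = (botBlk L Φ)ᴴ * topBlk L Φ := by
  rw [← fromRows_top_bot Φ, symJ, Matrix.conjTranspose_fromRows_eq_fromCols_conjTranspose,
    Matrix.mul_assoc, Matrix.fromBlocks_mul_fromRows, Matrix.fromCols_mul_fromRows] at h
  simp only [Matrix.zero_mul, Matrix.neg_mul, Matrix.one_mul, Matrix.mul_neg,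
    zero_add, add_zero, Matrix.mul_one] at h
  rw [← sub_eq_zero, sub_eq_zero, eq_comm, ← sub_eq_zero, ← h]
  abel

lemma conj_mul_self {L : ℕ} (Φ : Matrix (Fin L ⊕ Fin L) (Fin L) ℂ) :
    Φᴴ * Φ = (topBlk L Φ)ᴴ * topBlk L Φ + (botBlk L Φ)ᴴ * botBlk L Φ := by
  conv_lhs => rw [← fromRows_top_bot Φ]
  rw [Matrix.conjTranspose_fromRows_eq_fromCols_conjTranspose, Matrix.fromCols_mul_fromRows]
lemma ker_eq_bot_of_rank {L : ℕ} {Φ : Matrix (Fin L ⊕ Fin L) (Fin L) ℂ} (hr : Φ.rank = L) :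
    LinearMap.ker Φ.mulVecLin = ⊥ := by
  have h := LinearMap.finrank_range_add_finrank_ker Φ.mulVecLin
  rw [show Module.finrank ℂ (LinearMap.range Φ.mulVecLin) = L from hr] at h
  have h0 : Module.finrank ℂ (LinearMap.ker Φ.mulVecLin) = 0 := by
    have hd : Module.finrank ℂ (Fin L → ℂ) = L := by simp
    omega
  exact Submodule.finrank_eq_zero.mp h0

lemma cc_eq {L : ℕ} {Φ : Matrix (Fin L ⊕ Fin L) (Fin L) ℂ}
    (hab : (topBlk L Φ)ᴴ * botBlk L Φ = (botBlk L Φ)ᴴ * topBlk L Φ) :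
    (topBlk L Φ + Complex.I • botBlk L Φ)ᴴ * (topBlk L Φ + Complex.I • botBlk L Φ)
      = Φᴴ * Φ ∧
    (topBlk L Φ - Complex.I • botBlk L Φ)ᴴ * (topBlk L Φ - Complex.I • botBlk L Φ)
      = Φᴴ * Φ := by
  rw [conj_mul_self Φ]
  set a := topBlk L Φ
  set b := botBlk L Φ
  constructor
  · rw [Matrix.conjTranspose_add, Matrix.conjTranspose_smul, Matrix.add_mul, Matrix.mul_add,
      Matrix.mul_add, Matrix.smul_mul, Matrix.mul_smul, Matrix.mul_smul, hab]
    simp only [Complex.star_def, Complex.conj_I, smul_mul_assoc]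
    match_scalars <;> simp [Complex.I_sq]
  · rw [Matrix.conjTranspose_sub, Matrix.conjTranspose_smul, Matrix.sub_mul, Matrix.mul_sub,
      Matrix.mul_sub, Matrix.smul_mul, Matrix.mul_smul, Matrix.mul_smul, hab]
    simp only [Complex.star_def, Complex.conj_I, smul_mul_assoc]
    match_scalars <;> simp [Complex.I_sq]

lemma det_c_isUnit {L : ℕ} {Φ : Matrix (Fin L ⊕ Fin L) (Fin L) ℂ}
    (hr : Φ.rank = L) (hlag : Φᴴ * symJ L * Φ = 0) :
    IsUnit (topBlk L Φ + Complex.I • botBlk L Φ).det := by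
  set c := topBlk L Φ + Complex.I • botBlk L Φ with hc
  by_contra hdet
  have hdet0 : c.det = 0 := by simpa [isUnit_iff_ne_zero] using hdet
  obtain ⟨v, hv0, hcv⟩ := (Matrix.exists_mulVec_eq_zero_iff).mpr hdet0
  have hPhiv : Φᴴ *ᵥ (Φ *ᵥ v) = 0 := by
    rw [Matrix.mulVec_mulVec, ← (cc_eq (lag_herm hlag)).1, ← Matrix.mulVec_mulVec, hcv,
      Matrix.mulVec_zero]
  have hdp : star (Φ *ᵥ v) ⬝ᵥ (Φ *ᵥ v) = 0 := by
    rw [Matrix.star_mulVec, ← Matrix.dotProduct_mulVec, hPhiv, dotProduct_zero]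
  have hzero : Φ *ᵥ v = 0 := dotProduct_star_self_eq_zero.mp hdp
  have : v = 0 := by
    have := ker_eq_bot_of_rank hr
    rw [LinearMap.ker_eq_bot'] at this
    exact this v (by simpa [Matrix.mulVecLin_apply] using hzero)
  exact hv0 this

lemma piMap_unitary {L : ℕ} {Φ : Matrix (Fin L ⊕ Fin L) (Fin L) ℂ}
    (hr : Φ.rank = L) (hlag : Φᴴ * symJ L * Φ = 0) :
    PiMap L Φ ∈ Matrix.unitaryGroup (Fin L) ℂ := by
  rw [Matrix.mem_unitaryGroup_iff']
  set a := topBlk L Φ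
  set b := botBlk L Φ
  set c := a + Complex.I • b with hcdef
  set d := a - Complex.I • b with hddef
  have hdet := det_c_isUnit hr hlag
  have hcc1 : c * c⁻¹ = 1 := Matrix.mul_nonsing_inv _ hdet
  have hpair := cc_eq (lag_herm hlag)
  calc star (d * c⁻¹) * (d * c⁻¹) = (c⁻¹ᴴ * dᴴ) * (d * c⁻¹) := by
        rw [Matrix.star_eq_conjTranspose, Matrix.conjTranspose_mul]
    _ = c⁻¹ᴴ * (dᴴ * d) * c⁻¹ := by simp only [Matrix.mul_assoc]
    _ = c⁻¹ᴴ * (cᴴ * c) * c⁻¹ := by rw [hpair.1, hpair.2]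
    _ = (c * c⁻¹)ᴴ * (c * c⁻¹) := by rw [Matrix.conjTranspose_mul]; simp only [Matrix.mul_assoc]
    _ = 1 := by rw [hcc1]; simp
def psiVec (L : ℕ) (T V : ℕ → Mat L) (Zh : Mat L) (E : ℝ) (n : ℕ) (v : Fin L → ℂ) :
    Fin L ⊕ Fin L → ℂ :=
  ((transferProd L n T V (E : ℂ) : Matrix (Fin L ⊕ Fin L) (Fin L ⊕ Fin L) ℂ) *
    (Matrix.fromRows (1 : Mat L) (-Zh) : Matrix (Fin L ⊕ Fin L) (Fin L) ℂ)) *ᵥ v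

lemma psiVec_zero (L : ℕ) (T V : ℕ → Mat L) (Zh : Mat L) (E : ℝ) (v : Fin L → ℂ) :
    psiVec L T V Zh E 0 v = Sum.elim v (-(Zh *ᵥ v)) := by
  rw [psiVec, transferProd_zero, Matrix.one_mul, Matrix.fromRows_mulVec, Matrix.one_mulVec,
    Matrix.neg_mulVec]

lemma psiVec_succ (L : ℕ) (T V : ℕ → Mat L) (Zh : Mat L) (E : ℝ) (n : ℕ) (v : Fin L → ℂ) :
    psiVec L T V Zh E (n + 1) v
      = transferM L (E : ℂ) (T (n + 1)) (V (n + 1)) *ᵥ psiVec L T V Zh E n v := by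
  rw [psiVec, psiVec, transferProd_succ, Matrix.mul_assoc, ← Matrix.mulVec_mulVec]

lemma psiVec_elim (L : ℕ) (T V : ℕ → Mat L) (Zh : Mat L) (E : ℝ) (n : ℕ) (v : Fin L → ℂ) :
    psiVec L T V Zh E n v
      = Sum.elim (fun i => psiVec L T V Zh E n v (Sum.inl i))
          (fun i => psiVec L T V Zh E n v (Sum.inr i)) := by
  funext s; cases s <;> rfl

lemma psiVec_step (L : ℕ) (T V : ℕ → Mat L) (Zh : Mat L) (E : ℝ) (n : ℕ) (v : Fin L → ℂ) :
    (fun i => psiVec L T V Zh E (n + 1) v (Sum.inr i))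
        = (T (n + 1))⁻¹ *ᵥ (fun i => psiVec L T V Zh E n v (Sum.inl i)) ∧
    (fun i => psiVec L T V Zh E (n + 1) v (Sum.inl i))
        = (((E : ℂ) • (1 : Mat L) - V (n + 1)) * (T (n + 1))⁻¹) *ᵥ
            (fun i => psiVec L T V Zh E n v (Sum.inl i))
          - (T (n + 1))ᴴ *ᵥ (fun i => psiVec L T V Zh E n v (Sum.inr i)) := by
  have h := psiVec_succ L T V Zh E n v
  rw [psiVec_elim L T V Zh E n v, transferM, Matrix.fromBlocks_mulVec] at h
  constructor
  · funext i
    have := congrFun h (Sum.inr i)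
    simpa [Matrix.zero_mulVec] using this
  · funext i
    have := congrFun h (Sum.inl i)
    simpa [Matrix.neg_mulVec, sub_eq_add_neg] using this
def phiExt (L N : ℕ) (Zh : Mat L) (ψ : Fin N × Fin L → ℂ) : ℕ → Fin L → ℂ :=
  fun n =>
    if h : 1 ≤ n ∧ n ≤ N then fun i => ψ (⟨n - 1, by omega⟩, i)
    else if h0 : n = 0 ∧ 0 < N then -(Zh *ᵥ fun i => ψ (⟨0, h0.2⟩, i))
    else 0

lemma phiExt_mid {L N : ℕ} (Zh : Mat L) (ψ : Fin N × Fin L → ℂ) (n : ℕ)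
    (h1 : 1 ≤ n) (h2 : n ≤ N) :
    phiExt L N Zh ψ n = fun i => ψ (⟨n - 1, by omega⟩, i) := by
  rw [phiExt, dif_pos ⟨h1, h2⟩]

lemma phiExt_zero {L N : ℕ} (Zh : Mat L) (ψ : Fin N × Fin L → ℂ) (hN : 0 < N) :
    phiExt L N Zh ψ 0 = -(Zh *ᵥ fun i => ψ (⟨0, hN⟩, i)) := by
  rw [phiExt, dif_neg (by omega), dif_pos ⟨rfl, hN⟩]

lemma phiExt_top {L N : ℕ} (Zh : Mat L) (ψ : Fin N × Fin L → ℂ) (n : ℕ) (h : N < n) :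
    phiExt L N Zh ψ n = 0 := by
  rw [phiExt, dif_neg (by omega), dif_neg (by omega)]

lemma sum_fin_ite {N : ℕ} (c : ℕ) (f : Fin N → ℂ) :
    (∑ m : Fin N, if (m : ℕ) = c then f m else 0) = if hc : c < N then f ⟨c, hc⟩ else 0 := by
  split_ifs with hc
  · rw [Finset.sum_eq_single_of_mem ⟨c, hc⟩ (Finset.mem_univ _)]
    · simp
    · intro m _ hm
      exact if_neg (by simpa [Fin.ext_iff] using hm)
  · refine Finset.sum_eq_zero fun m _ => if_neg ?_
    have := m.2; omega

lemma sum_fin_ite' {N : ℕ} (c : ℕ) (f : Fin N → ℂ) :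
    (∑ m : Fin N, if (m : ℕ) + 1 = c then f m else 0)
      = if hc : c - 1 < N ∧ 1 ≤ c then f ⟨c - 1, hc.1⟩ else 0 := by
  split_ifs with hc
  · obtain ⟨hc1, hc2⟩ := hc
    rw [Finset.sum_eq_single_of_mem ⟨c - 1, hc1⟩ (Finset.mem_univ _)]
    · rw [if_pos (by simp only [Fin.val_mk]; omega)]
    · intro m _ hm
      refine if_neg ?_
      have hmv : (m : ℕ) ≠ c - 1 := fun h => hm (Fin.ext h)
      omega
  · refine Finset.sum_eq_zero fun m _ => if_neg ?_
    have := m.2; omega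
lemma jacobi_row (L N : ℕ) (hN : 2 ≤ N) (T V : ℕ → Mat L) (hT1 : T 1 = 1) (Zh : Mat L)
    (E : ℝ) (ψ : Fin N × Fin L → ℂ) (k : Fin N) :
    (fun i => ((jacobi L N T V Zh 0 - (E : ℂ) • 1) *ᵥ ψ) (k, i))
      = T (k.val + 2) *ᵥ phiExt L N Zh ψ (k.val + 2)
        + V (k.val + 1) *ᵥ phiExt L N Zh ψ (k.val + 1)
        + (T (k.val + 1))ᴴ *ᵥ phiExt L N Zh ψ (k.val)
        - (E : ℂ) • phiExt L N Zh ψ (k.val + 1) := by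
  have hkN' := k.2
  funext i
  have hphi1 : phiExt L N Zh ψ (k.val + 1) = fun j => ψ (k, j) := by
    rw [phiExt_mid Zh ψ _ (by omega) (by omega)]
    funext j
    exact congrArg (fun x => ψ (x, j)) (Fin.ext (show k.val + 1 - 1 = k.val from by omega))
  have hsub : ((jacobi L N T V Zh 0 - (E : ℂ) • 1) *ᵥ ψ) (k, i)
      = (jacobi L N T V Zh 0 *ᵥ ψ) (k, i) - (E : ℂ) * ψ (k, i) := by
    rw [Matrix.sub_mulVec]
    simp [Matrix.smul_mulVec]
  have hkm : ∀ m : Fin N, (k = m) ↔ ((m : ℕ) = (k : ℕ)) := by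
    intro m
    constructor
    · intro h; exact (congrArg Fin.val h).symm
    · intro h; exact Fin.ext h.symm
  have hent : ∀ (m : Fin N) (j : Fin L), jacobi L N T V Zh 0 (k, i) (m, j) * ψ (m, j)
      = (if (m : ℕ) = (k : ℕ) then
            (V ((k : ℕ) + 1) - (if (k : ℕ) = 0 then Zh else 0)) i j * ψ (m, j) else 0)
        + (if (m : ℕ) = (k : ℕ) + 1 then T ((k : ℕ) + 2) i j * ψ (m, j) else 0)
        + (if (m : ℕ) + 1 = (k : ℕ) then (T ((m : ℕ) + 2))ᴴ i j * ψ (m, j) else 0) := by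
    intro m j
    simp only [jacobi, Matrix.of_apply, hkm m, Matrix.sub_apply, Matrix.zero_apply]
    have hmN := m.2
    split_ifs <;> (try simp only [Matrix.zero_apply]) <;> first | ring1 | omega
  have pull : ∀ (P : Prop) (inst : Decidable P) (g : Fin L → ℂ),
      (∑ j, if P then g j else 0) = if P then (∑ j, g j) else 0 := by
    intro P inst g; split_ifs <;> simp
  have hmv : (jacobi L N T V Zh 0 *ᵥ ψ) (k, i)
      = ∑ m : Fin N, ∑ j : Fin L, jacobi L N T V Zh 0 (k, i) (m, j) * ψ (m, j) := by
    simp only [Matrix.mulVec, dotProduct]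
    exact Fintype.sum_prod_type _
  rw [hsub, hmv]
  simp only [hent, Finset.sum_add_distrib, pull, sum_fin_ite, sum_fin_ite']
  rw [dif_pos hkN']
  simp only [Pi.sub_apply, Pi.add_apply, Pi.smul_apply, smul_eq_mul, hphi1]
  have hketa : (⟨(k : ℕ), hkN'⟩ : Fin N) = k := Fin.ext rfl
  rw [hketa]
  by_cases hkN : (k : ℕ) + 1 < N
  · rw [dif_pos hkN, phiExt_mid Zh ψ ((k : ℕ) + 2) (by omega) (by omega)]
    have h21 : (k : ℕ) + 2 - 1 = (k : ℕ) + 1 := by omega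
    simp only [h21]
    by_cases hk0 : (k : ℕ) = 0
    · rw [dif_neg (by omega), if_pos hk0,
        show phiExt L N Zh ψ (k : ℕ) = phiExt L N Zh ψ 0 from by rw [hk0],
        phiExt_zero Zh ψ (by omega)]
      have hk0' : (⟨0, by omega⟩ : Fin N) = k := Fin.ext (show 0 = k.val from by omega)
      rw [hk0', show T ((k : ℕ) + 1) = 1 from by rw [show (k : ℕ) + 1 = 1 from by omega, hT1],
        Matrix.conjTranspose_one, Matrix.one_mulVec]
      simp only [Matrix.mulVec, dotProduct,
        Matrix.sub_apply, Pi.neg_apply, sub_mul, Finset.sum_sub_distrib]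
      ring
    · rw [dif_pos ⟨by omega, by omega⟩, if_neg hk0, sub_zero,
        phiExt_mid Zh ψ (k : ℕ) (by omega) (by omega),
        show (k : ℕ) - 1 + 2 = (k : ℕ) + 1 from by omega]
      simp only [Matrix.mulVec, dotProduct]
      ring
  · have htop : phiExt L N Zh ψ ((k : ℕ) + 2) = 0 := phiExt_top Zh ψ _ (by omega)
    rw [dif_neg hkN, htop, Matrix.mulVec_zero]
    by_cases hk0 : (k : ℕ) = 0
    · rw [dif_neg (by omega), if_pos hk0,
        show phiExt L N Zh ψ (k : ℕ) = phiExt L N Zh ψ 0 from by rw [hk0],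
        phiExt_zero Zh ψ (by omega)]
      have hk0' : (⟨0, by omega⟩ : Fin N) = k := Fin.ext (show 0 = k.val from by omega)
      rw [hk0', show T ((k : ℕ) + 1) = 1 from by rw [show (k : ℕ) + 1 = 1 from by omega, hT1],
        Matrix.conjTranspose_one, Matrix.one_mulVec]
      simp only [Matrix.mulVec, dotProduct,
        Matrix.sub_apply, Pi.neg_apply, Pi.zero_apply, sub_mul, Finset.sum_sub_distrib]
      ring
    · rw [dif_pos ⟨by omega, by omega⟩, if_neg hk0, sub_zero,
        phiExt_mid Zh ψ (k : ℕ) (by omega) (by omega),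
        show (k : ℕ) - 1 + 2 = (k : ℕ) + 1 from by omega]
      simp only [Matrix.mulVec, dotProduct, Pi.zero_apply]
      ring
lemma jacobi_row' (L N : ℕ) (hN : 2 ≤ N) (T V : ℕ → Mat L) (hT1 : T 1 = 1) (Zh : Mat L)
    (E : ℝ) (ψ : Fin N × Fin L → ℂ) (k : ℕ) (hk : k < N) :
    (fun i => ((jacobi L N T V Zh 0 - (E : ℂ) • 1) *ᵥ ψ) (⟨k, hk⟩, i))
      = T (k + 2) *ᵥ phiExt L N Zh ψ (k + 2)
        + V (k + 1) *ᵥ phiExt L N Zh ψ (k + 1)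
        + (T (k + 1))ᴴ *ᵥ phiExt L N Zh ψ k
        - (E : ℂ) • phiExt L N Zh ψ (k + 1) :=
  jacobi_row L N hN T V hT1 Zh E ψ ⟨k, hk⟩

lemma psi_one (L : ℕ) (T V : ℕ → Mat L) (Zh : Mat L) (E : ℝ) (v : Fin L → ℂ)
    (hT1 : T 1 = 1) :
    (fun i => psiVec L T V Zh E 1 v (Sum.inr i)) = v := by
  have h := (psiVec_step L T V Zh E 0 v).1
  rw [h, hT1, inv_one, Matrix.one_mulVec]
  funext i
  rw [psiVec_zero]
  rfl

lemma phiExt_psi (L N : ℕ) (T V : ℕ → Mat L) (Zh : Mat L) (E : ℝ) (v : Fin L → ℂ)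
    (n : ℕ) (h1 : 1 ≤ n) (h2 : n ≤ N) :
    phiExt L N Zh (fun p => psiVec L T V Zh E (p.1.val + 1) v (Sum.inr p.2)) n
      = fun i => psiVec L T V Zh E n v (Sum.inr i) := by
  rw [phiExt_mid Zh _ n h1 h2]
  funext i
  exact congrArg (fun m => psiVec L T V Zh E m v (Sum.inr i)) (show n - 1 + 1 = n from by omega)

lemma phi0_psi (L N : ℕ) (hN : 2 ≤ N) (T V : ℕ → Mat L) (hT1 : T 1 = 1) (Zh : Mat L)
    (E : ℝ) (v : Fin L → ℂ) :
    phiExt L N Zh (fun p => psiVec L T V Zh E (p.1.val + 1) v (Sum.inr p.2)) 0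
      = fun i => psiVec L T V Zh E 0 v (Sum.inr i) := by
  rw [phiExt_zero Zh _ (by omega)]
  show -(Zh *ᵥ fun i => psiVec L T V Zh E 1 v (Sum.inr i)) = _
  rw [psi_one L T V Zh E v hT1]
  funext i
  rw [psiVec_zero]
  rfl

lemma forward_ker (L N : ℕ) (hN : 2 ≤ N) (T V : ℕ → Mat L) (hT1 : T 1 = 1)
    (hTd : ∀ n, 1 ≤ n → n ≤ N → IsUnit (T n).det) (Zh : Mat L) (E : ℝ) (v : Fin L → ℂ)
    (hv : (fun i => psiVec L T V Zh E N v (Sum.inl i)) = 0) :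
    (jacobi L N T V Zh 0 - (E : ℂ) • 1) *ᵥ
      (fun p => psiVec L T V Zh E (p.1.val + 1) v (Sum.inr p.2)) = 0 := by
  set ψv : Fin N × Fin L → ℂ := fun p => psiVec L T V Zh E (p.1.val + 1) v (Sum.inr p.2) with hψv
  funext p
  obtain ⟨k, i⟩ := p
  have hk2 := k.2
  -- notation
  have hphik1 : phiExt L N Zh ψv (k.val + 1) = fun i => psiVec L T V Zh E (k.val + 1) v (Sum.inr i) :=
    phiExt_psi L N T V Zh E v _ (by omega) (by omega)
  have hphik : phiExt L N Zh ψv (k.val) = fun i => psiVec L T V Zh E (k.val) v (Sum.inr i) := by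
    rcases Nat.eq_zero_or_pos k.val with h0 | h0
    · rw [h0]; exact phi0_psi L N hN T V hT1 Zh E v
    · exact phiExt_psi L N T V Zh E v _ (by omega) (by omega)
  -- the top term equals x (k+1)
  have htop : T (k.val + 2) *ᵥ phiExt L N Zh ψv (k.val + 2)
      = fun i => psiVec L T V Zh E (k.val + 1) v (Sum.inl i) := by
    rcases Nat.lt_or_ge (k.val + 1) N with hlt | hge
    · rw [phiExt_psi L N T V Zh E v _ (by omega) (by omega),
        (psiVec_step L T V Zh E (k.val + 1) v).1, Matrix.mulVec_mulVec,
        Matrix.mul_nonsing_inv _ (hTd (k.val + 2) (by omega) (by omega)), Matrix.one_mulVec]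
    · have hNk : N = k.val + 1 := by omega
      rw [phiExt_top Zh _ _ (by omega), Matrix.mulVec_zero, ← hNk, hv]
  have hstep2 := (psiVec_step L T V Zh E k.val v).2
  have hstep1 := (psiVec_step L T V Zh E k.val v).1
  have hx : (fun i => psiVec L T V Zh E (k.val + 1) v (Sum.inl i))
      = ((E : ℂ) • (1 : Mat L) - V (k.val + 1)) *ᵥ
          (fun i => psiVec L T V Zh E (k.val + 1) v (Sum.inr i))
        - (T (k.val + 1))ᴴ *ᵥ (fun i => psiVec L T V Zh E k.val v (Sum.inr i)) := by
    rw [hstep2, hstep1, Matrix.mulVec_mulVec]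
  have hmain : (fun i => ((jacobi L N T V Zh 0 - (E : ℂ) • 1) *ᵥ ψv) (k, i)) = 0 := by
    rw [jacobi_row L N hN T V hT1 Zh E ψv k, hphik1, hphik, htop, hx, Matrix.sub_mulVec,
      Matrix.smul_mulVec, Matrix.one_mulVec]
    abel
  exact congrFun hmain i

lemma backward_ker (L N : ℕ) (hN : 2 ≤ N) (T V : ℕ → Mat L) (hT1 : T 1 = 1)
    (hTd : ∀ n, 1 ≤ n → n ≤ N → IsUnit (T n).det) (Zh : Mat L) (E : ℝ)
    (ψ : Fin N × Fin L → ℂ)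
    (hψ : (jacobi L N T V Zh 0 - (E : ℂ) • 1) *ᵥ ψ = 0) :
    ∀ n, n ≤ N →
      (fun i => psiVec L T V Zh E n (fun j => ψ (⟨0, by omega⟩, j)) (Sum.inr i))
          = phiExt L N Zh ψ n
      ∧ (fun i => psiVec L T V Zh E n (fun j => ψ (⟨0, by omega⟩, j)) (Sum.inl i))
          = T (n + 1) *ᵥ phiExt L N Zh ψ (n + 1) := by
  have hrow : ∀ (k : ℕ) (hk : k < N),
      T (k + 2) *ᵥ phiExt L N Zh ψ (k + 2)
        + V (k + 1) *ᵥ phiExt L N Zh ψ (k + 1)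
        + (T (k + 1))ᴴ *ᵥ phiExt L N Zh ψ k
        - (E : ℂ) • phiExt L N Zh ψ (k + 1) = 0 := by
    intro k hk
    rw [← jacobi_row' L N hN T V hT1 Zh E ψ k hk]
    funext i
    rw [hψ]
    rfl
  intro n
  induction n with
  | zero =>
    intro _
    constructor
    · rw [phiExt_zero Zh ψ (by omega)]
      funext i
      rw [psiVec_zero]
      rfl
    · rw [phiExt_mid Zh ψ 1 le_rfl (by omega), hT1, Matrix.one_mulVec]
      funext i
      rw [psiVec_zero]
      rfl
  | succ m ih =>
    intro hm
    obtain ⟨hy, hx⟩ := ih (by omega)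
    have hdet := hTd (m + 1) (by omega) (by omega)
    have hy' : (fun i => psiVec L T V Zh E (m + 1) (fun j => ψ (⟨0, by omega⟩, j)) (Sum.inr i))
        = phiExt L N Zh ψ (m + 1) := by
      rw [(psiVec_step L T V Zh E m _).1, hx, Matrix.mulVec_mulVec,
        Matrix.nonsing_inv_mul _ hdet, Matrix.one_mulVec]
    refine ⟨hy', ?_⟩
    rw [(psiVec_step L T V Zh E m _).2, hy, hx, Matrix.mulVec_mulVec, Matrix.mul_assoc,
      Matrix.nonsing_inv_mul _ hdet, Matrix.mul_one]
    have h0 := hrow m (by omega)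
    have hkey : T (m + 2) *ᵥ phiExt L N Zh ψ (m + 2)
        = (E : ℂ) • phiExt L N Zh ψ (m + 1) - V (m + 1) *ᵥ phiExt L N Zh ψ (m + 1)
          - (T (m + 1))ᴴ *ᵥ phiExt L N Zh ψ m := by
      calc T (m + 2) *ᵥ phiExt L N Zh ψ (m + 2)
          = (T (m + 2) *ᵥ phiExt L N Zh ψ (m + 2)
              + V (m + 1) *ᵥ phiExt L N Zh ψ (m + 1)
              + (T (m + 1))ᴴ *ᵥ phiExt L N Zh ψ m
              - (E : ℂ) • phiExt L N Zh ψ (m + 1))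
            + ((E : ℂ) • phiExt L N Zh ψ (m + 1) - V (m + 1) *ᵥ phiExt L N Zh ψ (m + 1)
              - (T (m + 1))ᴴ *ᵥ phiExt L N Zh ψ m) := by abel
        _ = (E : ℂ) • phiExt L N Zh ψ (m + 1) - V (m + 1) *ᵥ phiExt L N Zh ψ (m + 1)
              - (T (m + 1))ᴴ *ᵥ phiExt L N Zh ψ m := by rw [h0]; abel
    rw [hkey]
    simp only [Matrix.sub_mulVec, Matrix.smul_mulVec, Matrix.one_mulVec]
    try abel

end Aux

open Aux in
theorem stmt4 (L N : ℕ) (hL : 1 ≤ L) (hN : 2 ≤ N)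
    (T V : ℕ → Mat L) (hT1 : T 1 = 1)
    (hTinv : ∀ n, 2 ≤ n → n ≤ N → IsUnit (T n))
    (hV : ∀ n, 1 ≤ n → n ≤ N → (V n).IsHermitian)
    (Zh : Mat L) (hZh : Zh.IsHermitian) (E : ℝ) :
    IsLagFrame L (transferProd L N T V (E : ℂ) * Matrix.fromRows 1 (-Zh)) ∧
    PiMap L (transferProd L N T V (E : ℂ) * Matrix.fromRows 1 (-Zh))
      ∈ Matrix.unitaryGroup (Fin L) ℂ ∧
    Module.finrank ℂ
      (LinearMap.ker (jacobi L N T V Zh 0 - (E : ℂ) • 1).mulVecLin) =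
    Module.finrank ℂ
      (LinearMap.ker (PiMap L (transferProd L N T V (E : ℂ) * Matrix.fromRows 1 (-Zh))
        + 1).mulVecLin) := by
  have hN0 : 0 < N := by omega
  have hTd : ∀ n, 1 ≤ n → n ≤ N → IsUnit (T n).det := by
    intro n h1 h2
    rcases eq_or_lt_of_le h1 with h | h
    · rw [← h, hT1]; simp
    · exact (Matrix.isUnit_iff_isUnit_det _).mp (hTinv n h h2)
  -- Lagrangian frame
  have hsym := transferProd_symplectic L N T V E hTd hV N le_rfl
  have hPdet : IsUnit (transferProd L N T V (E : ℂ)).det :=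
    isUnit_transferProd L N T V E hTd hV
  have hrank : (transferProd L N T V (E : ℂ) * Matrix.fromRows (1 : Mat L) (-Zh)).rank = L := by
    rw [Matrix.rank_mul_eq_right_of_isUnit_det _ _ hPdet, rank_F L Zh]
  have hlag : (transferProd L N T V (E : ℂ) * Matrix.fromRows (1 : Mat L) (-Zh))ᴴ * symJ L *
      (transferProd L N T V (E : ℂ) * Matrix.fromRows (1 : Mat L) (-Zh)) = 0 := by
    calc (transferProd L N T V (E : ℂ) * Matrix.fromRows (1 : Mat L) (-Zh))ᴴ * symJ L *
          (transferProd L N T V (E : ℂ) * Matrix.fromRows (1 : Mat L) (-Zh))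
        = (Matrix.fromRows (1 : Mat L) (-Zh))ᴴ *
            ((transferProd L N T V (E : ℂ))ᴴ * symJ L * transferProd L N T V (E : ℂ)) *
            Matrix.fromRows (1 : Mat L) (-Zh) := by
          rw [Matrix.conjTranspose_mul]; simp only [Matrix.mul_assoc]
      _ = (Matrix.fromRows (1 : Mat L) (-Zh))ᴴ * symJ L * Matrix.fromRows (1 : Mat L) (-Zh) := by
          rw [hsym]
      _ = 0 := lag_F L Zh hZh
  refine ⟨⟨hrank, hlag⟩, piMap_unitary hrank hlag, ?_⟩
  -- kernel dimensions
  have e1 : (LinearMap.ker (jacobi L N T V Zh 0 - (E : ℂ) • 1).mulVecLin) ≃ₗ[ℂ]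
      (LinearMap.ker (topBlk L
        (transferProd L N T V (E : ℂ) * Matrix.fromRows (1 : Mat L) (-Zh))).mulVecLin) :=
    { toFun := fun ψ => ⟨fun i => ψ.1 (⟨0, hN0⟩, i), by
        have hψ : (jacobi L N T V Zh 0 - (E : ℂ) • 1) *ᵥ ψ.1 = 0 := by
          have h2 := ψ.2; rwa [LinearMap.mem_ker, Matrix.mulVecLin_apply] at h2
        rw [LinearMap.mem_ker, Matrix.mulVecLin_apply]
        have hb := (backward_ker L N hN T V hT1 hTd Zh E ψ.1 hψ N le_rfl).2
        have hzero : phiExt L N Zh ψ.1 (N + 1) = 0 := phiExt_top Zh ψ.1 _ (by omega)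
        calc topBlk L (transferProd L N T V (E : ℂ) * Matrix.fromRows (1 : Mat L) (-Zh)) *ᵥ
              (fun i => ψ.1 (⟨0, hN0⟩, i))
            = fun i => psiVec L T V Zh E N (fun j => ψ.1 (⟨0, hN0⟩, j)) (Sum.inl i) := rfl
          _ = T (N + 1) *ᵥ phiExt L N Zh ψ.1 (N + 1) := hb
          _ = 0 := by rw [hzero, Matrix.mulVec_zero]⟩,
      map_add' := fun x y => Subtype.ext (funext fun i => rfl),
      map_smul' := fun r x => Subtype.ext (funext fun i => rfl),
      invFun := fun v => ⟨fun p => psiVec L T V Zh E (p.1.val + 1) v.1 (Sum.inr p.2), by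
        rw [LinearMap.mem_ker, Matrix.mulVecLin_apply]
        refine forward_ker L N hN T V hT1 hTd Zh E v.1 ?_
        have hv := v.2
        rw [LinearMap.mem_ker, Matrix.mulVecLin_apply] at hv
        exact hv⟩,
      left_inv := fun ψ => by
        have hψ : (jacobi L N T V Zh 0 - (E : ℂ) • 1) *ᵥ ψ.1 = 0 := by
          have h2 := ψ.2; rwa [LinearMap.mem_ker, Matrix.mulVecLin_apply] at h2
        apply Subtype.ext
        funext p
        obtain ⟨k, i⟩ := p
        calc psiVec L T V Zh E (k.val + 1) (fun j => ψ.1 (⟨0, hN0⟩, j)) (Sum.inr i)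
            = phiExt L N Zh ψ.1 (k.val + 1) i :=
              congrFun ((backward_ker L N hN T V hT1 hTd Zh E ψ.1 hψ (k.val + 1)
                (by omega)).1) i
          _ = ψ.1 (k, i) := by
              rw [phiExt_mid Zh ψ.1 _ (by omega) (by omega)]
              exact congrArg (fun m => ψ.1 (m, i))
               (Fin.ext (show k.val + 1 - 1 = k.val from by omega)),
      right_inv := fun v =>
        Subtype.ext (funext fun i => congrFun (psi_one L T V Zh E v.1 hT1) i) }
  set aM := topBlk L (transferProd L N T V (E : ℂ) * Matrix.fromRows (1 : Mat L) (-Zh)) with haM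
  set bM := botBlk L (transferProd L N T V (E : ℂ) * Matrix.fromRows (1 : Mat L) (-Zh)) with hbM
  have hdetc : IsUnit (aM + Complex.I • bM).det := det_c_isUnit hrank hlag
  have hcinv : (aM + Complex.I • bM) * (aM + Complex.I • bM)⁻¹ = 1 :=
    Matrix.mul_nonsing_inv _ hdetc
  have hcinv' : (aM + Complex.I • bM)⁻¹ * (aM + Complex.I • bM) = 1 :=
    Matrix.nonsing_inv_mul _ hdetc
  have hU1 : ((2 : ℂ) • aM) * (aM + Complex.I • bM)⁻¹
      = PiMap L (transferProd L N T V (E : ℂ) * Matrix.fromRows (1 : Mat L) (-Zh)) + 1 := by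
    have h2 : (2 : ℂ) • aM = (aM - Complex.I • bM) + (aM + Complex.I • bM) := by module
    rw [h2, Matrix.add_mul, hcinv, PiMap]
  rw [show PiMap L (transferProd L N T V (E : ℂ) * Matrix.fromRows 1 (-Zh)) + 1
      = ((2 : ℂ) • aM) * (aM + Complex.I • bM)⁻¹ from hU1.symm]
  have e2 : (LinearMap.ker (((2 : ℂ) • aM) * (aM + Complex.I • bM)⁻¹).mulVecLin) ≃ₗ[ℂ]
      (LinearMap.ker aM.mulVecLin) :=
    { toFun := fun v => ⟨(aM + Complex.I • bM)⁻¹ *ᵥ v.1, by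
        have hv := v.2
        rw [LinearMap.mem_ker, Matrix.mulVecLin_apply, ← Matrix.mulVec_mulVec,
          Matrix.smul_mulVec, smul_eq_zero] at hv
        rw [LinearMap.mem_ker, Matrix.mulVecLin_apply]
        rcases hv with h | h
        · exact absurd h two_ne_zero
        · exact h⟩,
      map_add' := fun x y => Subtype.ext (by
        show (aM + Complex.I • bM)⁻¹ *ᵥ (x.1 + y.1)
          = (aM + Complex.I • bM)⁻¹ *ᵥ x.1 + (aM + Complex.I • bM)⁻¹ *ᵥ y.1
        exact Matrix.mulVec_add _ _ _),
      map_smul' := fun r x => Subtype.ext (by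
        show (aM + Complex.I • bM)⁻¹ *ᵥ (r • x.1) = r • ((aM + Complex.I • bM)⁻¹ *ᵥ x.1)
        exact Matrix.mulVec_smul _ _ _),
      invFun := fun w => ⟨(aM + Complex.I • bM) *ᵥ w.1, by
        have hw := w.2
        rw [LinearMap.mem_ker, Matrix.mulVecLin_apply] at hw
        rw [LinearMap.mem_ker, Matrix.mulVecLin_apply, Matrix.mulVec_mulVec,
          Matrix.mul_assoc, hcinv', Matrix.mul_one, Matrix.smul_mulVec, hw,
          smul_zero]⟩,
      left_inv := fun v => Subtype.ext (by
        show (aM + Complex.I • bM) *ᵥ ((aM + Complex.I • bM)⁻¹ *ᵥ v.1) = v.1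
        rw [Matrix.mulVec_mulVec, hcinv, Matrix.one_mulVec]),
      right_inv := fun w => Subtype.ext (by
        show (aM + Complex.I • bM)⁻¹ *ᵥ ((aM + Complex.I • bM) *ᵥ w.1) = w.1
        rw [Matrix.mulVec_mulVec, hcinv', Matrix.one_mulVec]) }
  exact e1.finrank_eq.trans e2.finrank_eq.symm
end
end

section
/- Let N ≥ 2 and let Ẑ be a self-adjoint complex L×L matrix. Then the map E ∈ ℝ ↦ U^E_N = Π(𝒯^E(N,0)·(1; −Ẑ)) (taking values in the L×L complex matrices) is differentiable in E, and for every E ∈ ℝ the matrix (1/i)·(U^E_N)^* · (d/dE)U^E_N is Hermitian and positive definite. -/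
open MeasureTheory Matrix
open scoped ComplexOrder

noncomputable section

open Matrix
noncomputable section

/-- Entrywise has-derivative predicate for matrix-valued functions of a complex variable. -/
def EHD {m n : Type*} (f : ℂ → Matrix m n ℂ) (f' : Matrix m n ℂ) (z : ℂ) : Prop :=
  ∀ i j, HasDerivAt (fun w => f w i j) (f' i j) z

namespace EHD

variable {m n p : Type*} {z : ℂ}

lemma const (A : Matrix m n ℂ) : EHD (fun _ => A) 0 z := fun i j => hasDerivAt_const _ _

lemma add {f g : ℂ → Matrix m n ℂ} {f' g' : Matrix m n ℂ} (hf : EHD f f' z) (hg : EHD g g' z) :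
    EHD (fun w => f w + g w) (f' + g') z := fun i j => (hf i j).add (hg i j)

lemma sub {f g : ℂ → Matrix m n ℂ} {f' g' : Matrix m n ℂ} (hf : EHD f f' z) (hg : EHD g g' z) :
    EHD (fun w => f w - g w) (f' - g') z := fun i j => (hf i j).sub (hg i j)

lemma smul (c : ℂ) {f : ℂ → Matrix m n ℂ} {f' : Matrix m n ℂ} (hf : EHD f f' z) :
    EHD (fun w => c • f w) (c • f') z := fun i j => by
  simpa using (hf i j).const_mul c

lemma mul [Fintype n] {f : ℂ → Matrix m n ℂ} {g : ℂ → Matrix n p ℂ}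
    {f' : Matrix m n ℂ} {g' : Matrix n p ℂ} (hf : EHD f f' z) (hg : EHD g g' z) :
    EHD (fun w => f w * g w) (f' * g z + f z * g') z := by
  intro i j
  simp only [Matrix.mul_apply, Matrix.add_apply]
  rw [← Finset.sum_add_distrib]
  exact HasDerivAt.fun_sum fun k _ => (hf i k).mul (hg k j)

lemma mul_const [Fintype n] {f : ℂ → Matrix m n ℂ} {f' : Matrix m n ℂ}
    (hf : EHD f f' z) (A : Matrix n p ℂ) :
    EHD (fun w => f w * A) (f' * A) z := by
  have := hf.mul (g := fun _ => A) (g' := 0) (EHD.const A)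
  simpa using this

lemma congr {f g : ℂ → Matrix m n ℂ} {f' : Matrix m n ℂ} (hf : EHD f f' z)
    (h : ∀ w, f w = g w) : EHD g f' z := by
  intro i j; exact (funext h : f = g) ▸ hf i j

lemma differentiableAt_det [Fintype n] [DecidableEq n] {f : ℂ → Matrix n n ℂ}
    (h : ∀ i j, DifferentiableAt ℂ (fun w => f w i j) z) :
    DifferentiableAt ℂ (fun w => (f w).det) z := by
  have : (fun w => (f w).det)
      = fun w => ∑ σ : Equiv.Perm n, ((Equiv.Perm.sign σ : ℤ) : ℂ) * ∏ i, f w (σ i) i := by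
    funext w; rw [Matrix.det_apply']
  rw [this]
  exact DifferentiableAt.fun_sum fun σ _ =>
    (DifferentiableAt.fun_finsetProd fun i _ => h (σ i) i).const_mul _

end EHD
namespace EHD
variable {n : Type*} [Fintype n] [DecidableEq n] {z : ℂ}

lemma differentiableAt_inv_entry {f : ℂ → Matrix n n ℂ} {f' : Matrix n n ℂ}
    (hf : EHD f f' z) (hu : IsUnit (f z)) (i j : n) :
    DifferentiableAt ℂ (fun w => (f w)⁻¹ i j) z := by
  have hent : ∀ i j, DifferentiableAt ℂ (fun w => f w i j) z :=
    fun i j => (hf i j).differentiableAt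
  have hdet : DifferentiableAt ℂ (fun w => (f w).det) z := differentiableAt_det hent
  have hdetne : (f z).det ≠ 0 := by
    have := (Matrix.isUnit_iff_isUnit_det _).mp hu
    exact IsUnit.ne_zero this
  have hadj : DifferentiableAt ℂ (fun w => (f w).adjugate i j) z := by
    have : (fun w => (f w).adjugate i j)
        = fun w => ((f w).updateRow j (Pi.single i 1)).det := by
      funext w; rw [Matrix.adjugate_apply]
    rw [this]
    refine differentiableAt_det fun k l => ?_
    rcases eq_or_ne k j with rfl | hkj
    · simp only [Matrix.updateRow_self]
      exact differentiableAt_const _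
    · simp only [Matrix.updateRow_ne hkj]
      exact hent k l
  have : (fun w => (f w)⁻¹ i j)
      = fun w => ((f w).det)⁻¹ * (f w).adjugate i j := by
    funext w
    rw [Matrix.inv_def, Matrix.smul_apply, Ring.inverse_eq_inv, smul_eq_mul]
  rw [this]
  exact (hdet.inv hdetne).mul hadj

lemma matrix_inv {f : ℂ → Matrix n n ℂ} {f' : Matrix n n ℂ}
    (hf : EHD f f' z) (hu : IsUnit (f z)) :
    EHD (fun w => (f w)⁻¹) (-((f z)⁻¹ * f' * (f z)⁻¹)) z := by
  have hdiff : ∀ i j, DifferentiableAt ℂ (fun w => (f w)⁻¹ i j) z :=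
    differentiableAt_inv_entry hf hu
  set g' : Matrix n n ℂ := Matrix.of fun i j => deriv (fun w => (f w)⁻¹ i j) z with hg'
  have hEHDinv : EHD (fun w => (f w)⁻¹) g' z := fun i j => (hdiff i j).hasDerivAt
  -- eventually, (f w)⁻¹ * f w = 1
  have hdet : DifferentiableAt ℂ (fun w => (f w).det) z :=
    differentiableAt_det (fun i j => (hf i j).differentiableAt)
  have hdetne : (f z).det ≠ 0 := IsUnit.ne_zero ((Matrix.isUnit_iff_isUnit_det _).mp hu)
  have hev : ∀ᶠ w in nhds z, (fun w => (f w)⁻¹ * f w) w = (fun _ => (1 : Matrix n n ℂ)) w := by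
    filter_upwards [hdet.continuousAt.eventually_ne hdetne] with w hw
    exact Matrix.nonsing_inv_mul _ (isUnit_iff_ne_zero.mpr hw)
  have hprod : EHD (fun w => (f w)⁻¹ * f w) (g' * f z + (f z)⁻¹ * f') z := hEHDinv.mul hf
  have hzero : g' * f z + (f z)⁻¹ * f' = 0 := by
    ext i j
    have h1 : HasDerivAt (fun w => ((f w)⁻¹ * f w) i j) ((g' * f z + (f z)⁻¹ * f') i j) z :=
      hprod i j
    have h2 : HasDerivAt (fun w => ((f w)⁻¹ * f w) i j) 0 z := by
      have hc : HasDerivAt (fun _ : ℂ => (1 : Matrix n n ℂ) i j) 0 z := hasDerivAt_const _ _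
      refine hc.congr_of_eventuallyEq ?_
      filter_upwards [hev] with w hw
      rw [hw]
    have := h1.unique h2
    simpa using this
  have hg : g' = -((f z)⁻¹ * f' * (f z)⁻¹) := by
    have h1 : g' * f z = -((f z)⁻¹ * f') := by
      rw [eq_neg_iff_add_eq_zero]; exact hzero
    calc g' = g' * (f z * (f z)⁻¹) := by rw [Matrix.mul_nonsing_inv _ (isUnit_iff_ne_zero.mpr hdetne), mul_one]
    _ = (g' * f z) * (f z)⁻¹ := by rw [mul_assoc]
    _ = -((f z)⁻¹ * f') * (f z)⁻¹ := by rw [h1]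
    _ = -((f z)⁻¹ * f' * (f z)⁻¹) := by rw [neg_mul]
  rw [← hg]; exact hEHDinv

end EHD
section Blocks
variable {L : ℕ}

lemma topBlk_apply (Φ : Matrix (Fin L ⊕ Fin L) (Fin L) ℂ) (i j : Fin L) :
    topBlk L Φ i j = Φ (Sum.inl i) j := rfl

lemma botBlk_apply (Φ : Matrix (Fin L ⊕ Fin L) (Fin L) ℂ) (i j : Fin L) :
    botBlk L Φ i j = Φ (Sum.inr i) j := rfl

lemma fromRows_blk (X : Matrix (Fin L ⊕ Fin L) (Fin L) ℂ) :
    Matrix.fromRows (topBlk L X) (botBlk L X) = X := by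
  ext (i | i) j <;> rfl

lemma conjT_fromRows {m₁ m₂ n : Type*} (A : Matrix m₁ n ℂ) (B : Matrix m₂ n ℂ) :
    (Matrix.fromRows A B)ᴴ = Matrix.fromCols Aᴴ Bᴴ := by
  ext i (j | j) <;> rfl

lemma topBlk_fromRows (A B : Mat L) : topBlk L (Matrix.fromRows A B) = A := by ext i j; rfl
lemma botBlk_fromRows (A B : Mat L) : botBlk L (Matrix.fromRows A B) = B := by ext i j; rfl

lemma blk_mul (P Q R S : Mat L) (X Y : Matrix (Fin L ⊕ Fin L) (Fin L) ℂ) :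
    Xᴴ * Matrix.fromBlocks P Q R S * Y
      = ((topBlk L X)ᴴ * P + (botBlk L X)ᴴ * R) * topBlk L Y
        + ((topBlk L X)ᴴ * Q + (botBlk L X)ᴴ * S) * botBlk L Y := by
  conv_lhs => rw [← fromRows_blk X, ← fromRows_blk Y]
  rw [conjT_fromRows, Matrix.fromCols_mul_fromBlocks, Matrix.fromCols_mul_fromRows]

lemma quadJ (X Y : Matrix (Fin L ⊕ Fin L) (Fin L) ℂ) :
    Xᴴ * symJ L * Y = (botBlk L X)ᴴ * topBlk L Y - (topBlk L X)ᴴ * botBlk L Y := by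
  rw [symJ, blk_mul]
  simp [sub_eq_add_neg]

lemma quadB (X Y : Matrix (Fin L ⊕ Fin L) (Fin L) ℂ) :
    Xᴴ * (Matrix.fromBlocks 1 0 0 0 : Matrix (Fin L ⊕ Fin L) (Fin L ⊕ Fin L) ℂ) * Y = (topBlk L X)ᴴ * topBlk L Y := by
  rw [blk_mul]; simp

lemma quadI (X Y : Matrix (Fin L ⊕ Fin L) (Fin L) ℂ) :
    Xᴴ * Y = (topBlk L X)ᴴ * topBlk L Y + (botBlk L X)ᴴ * botBlk L Y := by
  have : Xᴴ * Y = Xᴴ * (Matrix.fromBlocks 1 0 0 1 : Matrix (Fin L ⊕ Fin L) (Fin L ⊕ Fin L) ℂ) * Y := by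
    rw [Matrix.fromBlocks_one]; rw [Matrix.mul_one]
  rw [this, blk_mul]; simp

lemma topBlk_add (X Y : Matrix (Fin L ⊕ Fin L) (Fin L) ℂ) :
    topBlk L (X + Y) = topBlk L X + topBlk L Y := rfl
lemma botBlk_add (X Y : Matrix (Fin L ⊕ Fin L) (Fin L) ℂ) :
    botBlk L (X + Y) = botBlk L X + botBlk L Y := rfl
end Blocks
section Transfer
variable (L : ℕ) (T V : ℕ → Mat L)

/-- derivative in `z` of a single transfer matrix -/
def dtM (n : ℕ) : Matrix (Fin L ⊕ Fin L) (Fin L ⊕ Fin L) ℂ :=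
  Matrix.fromBlocks (T (n + 1))⁻¹ 0 0 0

/-- partial products of transfer matrices -/
def Pk : ℕ → ℂ → Matrix (Fin L ⊕ Fin L) (Fin L ⊕ Fin L) ℂ
  | 0, _ => 1
  | k + 1, z => transferM L z (T (k + 1)) (V (k + 1)) * Pk k z

/-- derivative in `z` of the partial products -/
def Dk : ℕ → ℂ → Matrix (Fin L ⊕ Fin L) (Fin L ⊕ Fin L) ℂ
  | 0, _ => 0
  | k + 1, z => dtM L T k * Pk L T V k z + transferM L z (T (k + 1)) (V (k + 1)) * Dk k z

lemma Pk_eq (k : ℕ) (z : ℂ) :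
    Pk L T V k z
      = (((List.range k).map (fun n => transferM L z (T (n + 1)) (V (n + 1)))).reverse).prod := by
  induction k with
  | zero => simp [Pk]
  | succ k ih => rw [Pk, ih, List.range_succ]; simp

lemma transferProd_eq (N : ℕ) (z : ℂ) : transferProd L N T V z = Pk L T V N z := by
  rw [transferProd, Pk_eq]

lemma EHD_transferM (n : ℕ) (z : ℂ) :
    EHD (fun w => transferM L w (T (n + 1)) (V (n + 1))) (dtM L T n) z := by
  rintro (i | i) (j | j)
  · -- top-left entry
    have : ∀ w : ℂ, transferM L w (T (n + 1)) (V (n + 1)) (Sum.inl i) (Sum.inl j)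
        = w * (T (n + 1))⁻¹ i j - (V (n + 1) * (T (n + 1))⁻¹) i j := by
      intro w
      simp [transferM, Matrix.sub_mul, Matrix.smul_mul, Matrix.smul_apply, Matrix.sub_apply]
    simp only [this, dtM, Matrix.fromBlocks_apply₁₁]
    simpa using ((hasDerivAt_id z).mul_const ((T (n + 1))⁻¹ i j)).sub_const ((V (n + 1) * (T (n + 1))⁻¹) i j)
  · have : ∀ w : ℂ, transferM L w (T (n + 1)) (V (n + 1)) (Sum.inl i) (Sum.inr j)
        = (-(T (n + 1))ᴴ) i j := fun w => rfl
    simp only [this, dtM, Matrix.fromBlocks_apply₁₂, Matrix.zero_apply]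
    exact hasDerivAt_const _ _
  · have : ∀ w : ℂ, transferM L w (T (n + 1)) (V (n + 1)) (Sum.inr i) (Sum.inl j)
        = (T (n + 1))⁻¹ i j := fun w => rfl
    simp only [this, dtM, Matrix.fromBlocks_apply₂₁, Matrix.zero_apply]
    exact hasDerivAt_const _ _
  · have : ∀ w : ℂ, transferM L w (T (n + 1)) (V (n + 1)) (Sum.inr i) (Sum.inr j)
        = 0 := fun w => rfl
    simp only [this, dtM, Matrix.fromBlocks_apply₂₂, Matrix.zero_apply]
    exact hasDerivAt_const _ _

lemma EHD_Pk (k : ℕ) (z : ℂ) : EHD (Pk L T V k) (Dk L T V k z) z := by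
  induction k with
  | zero =>
    have := EHD.const (m := Fin L ⊕ Fin L) (n := Fin L ⊕ Fin L)
      (1 : Matrix (Fin L ⊕ Fin L) (Fin L ⊕ Fin L) ℂ) (z := z)
    exact this.congr fun w => rfl
  | succ k ih =>
    have := (EHD_transferM L T V k z).mul ih
    exact this.congr fun w => rfl
end Transfer
section Symplectic
variable {L : ℕ}

lemma JU_transferM (E : ℝ) (Tn Vn : Mat L) (hV : Vn.IsHermitian) (hT : IsUnit Tn) :
    (transferM L (E : ℂ) Tn Vn)ᴴ * symJ L * transferM L (E : ℂ) Tn Vn = symJ L := by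
  have hA : (((E : ℂ) • (1 : Mat L) - Vn) * Tn⁻¹)ᴴ = Tn⁻¹ᴴ * ((E : ℂ) • (1 : Mat L) - Vn) := by
    rw [Matrix.conjTranspose_mul, Matrix.conjTranspose_sub, Matrix.conjTranspose_smul,
      Matrix.conjTranspose_one, hV.eq, Complex.star_def, Complex.conj_ofReal]
  have h1 : Tn * Tn⁻¹ = 1 := Matrix.mul_nonsing_inv _ ((Matrix.isUnit_iff_isUnit_det _).mp hT)
  have h2 : Tn⁻¹ᴴ * Tnᴴ = 1 := by
    rw [← Matrix.conjTranspose_mul, h1, Matrix.conjTranspose_one]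
  rw [transferM, symJ, Matrix.fromBlocks_conjTranspose, Matrix.fromBlocks_multiply,
    Matrix.fromBlocks_multiply]
  simp [hA, h1, h2, hV.eq, Matrix.mul_assoc]

lemma JW_transferM (z : ℂ) (Tn Vn : Mat L) :
    (transferM L z Tn Vn)ᴴ * symJ L * Matrix.fromBlocks Tn⁻¹ 0 0 0
      = (Matrix.fromBlocks Tn⁻¹ 0 0 0)ᴴ * Matrix.fromBlocks Tn⁻¹ (0 : Mat L) (0 : Mat L) 0 := by
  rw [transferM, symJ, Matrix.fromBlocks_conjTranspose, Matrix.fromBlocks_conjTranspose,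
    Matrix.fromBlocks_multiply, Matrix.fromBlocks_multiply, Matrix.fromBlocks_multiply]
  simp
end Symplectic
section Induction
variable (L : ℕ) (T V : ℕ → Mat L)

lemma JU_Pk (E : ℝ) (k : ℕ) (hV : ∀ n < k, (V (n + 1)).IsHermitian)
    (hT : ∀ n < k, IsUnit (T (n + 1))) :
    (Pk L T V k (E : ℂ))ᴴ * symJ L * Pk L T V k (E : ℂ) = symJ L := by
  induction k with
  | zero => simp [Pk]
  | succ k ih =>
    have ih' := ih (fun n hn => hV n (Nat.lt_succ_of_lt hn)) (fun n hn => hT n (Nat.lt_succ_of_lt hn))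
    have e2 := JU_transferM E (T (k + 1)) (V (k + 1)) (hV k (Nat.lt_succ_self k))
      (hT k (Nat.lt_succ_self k))
    show (transferM L (E : ℂ) (T (k + 1)) (V (k + 1)) * Pk L T V k (E : ℂ))ᴴ * symJ L *
        (transferM L (E : ℂ) (T (k + 1)) (V (k + 1)) * Pk L T V k (E : ℂ)) = symJ L
    rw [Matrix.conjTranspose_mul]
    calc (Pk L T V k (E : ℂ))ᴴ * (transferM L (E : ℂ) (T (k + 1)) (V (k + 1)))ᴴ * symJ L *
          (transferM L (E : ℂ) (T (k + 1)) (V (k + 1)) * Pk L T V k (E : ℂ))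
        = (Pk L T V k (E : ℂ))ᴴ * ((transferM L (E : ℂ) (T (k + 1)) (V (k + 1)))ᴴ * symJ L *
            transferM L (E : ℂ) (T (k + 1)) (V (k + 1))) * Pk L T V k (E : ℂ) := by
          noncomm_ring
      _ = (Pk L T V k (E : ℂ))ᴴ * symJ L * Pk L T V k (E : ℂ) := by rw [e2]
      _ = symJ L := ih'

lemma Q_step (E : ℝ) (k : ℕ) (hVk : (V (k + 1)).IsHermitian) (hTk : IsUnit (T (k + 1))) :
    (Pk L T V (k + 1) (E : ℂ))ᴴ * symJ L * Dk L T V (k + 1) (E : ℂ)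
      = (Pk L T V k (E : ℂ))ᴴ * symJ L * Dk L T V k (E : ℂ)
        + (dtM L T k * Pk L T V k (E : ℂ))ᴴ * (dtM L T k * Pk L T V k (E : ℂ)) := by
  set A := transferM L (E : ℂ) (T (k + 1)) (V (k + 1)) with hA
  set P := Pk L T V k (E : ℂ)
  set D := Dk L T V k (E : ℂ)
  set dt := dtM L T k with hdt
  have e1 : Aᴴ * symJ L * dt = dtᴴ * dt := by
    rw [hA, hdt, dtM]; exact JW_transferM (E : ℂ) (T (k + 1)) (V (k + 1))
  have e2 : Aᴴ * symJ L * A = symJ L := JU_transferM E _ _ hVk hTk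
  show (A * P)ᴴ * symJ L * (dt * P + A * D) = Pᴴ * symJ L * D + (dt * P)ᴴ * (dt * P)
  rw [Matrix.conjTranspose_mul]
  calc Pᴴ * Aᴴ * symJ L * (dt * P + A * D)
      = Pᴴ * (Aᴴ * symJ L * dt) * P + Pᴴ * (Aᴴ * symJ L * A) * D := by noncomm_ring
    _ = Pᴴ * (dtᴴ * dt) * P + Pᴴ * symJ L * D := by rw [e1, e2]
    _ = Pᴴ * symJ L * D + (dt * P)ᴴ * (dt * P) := by
        rw [Matrix.conjTranspose_mul]; noncomm_ring

lemma Q_lower (E : ℝ) (hT1 : T 1 = 1) (k : ℕ) (hk : 1 ≤ k)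
    (hV : ∀ n < k, (V (n + 1)).IsHermitian) (hT : ∀ n < k, IsUnit (T (n + 1))) :
    ((Pk L T V k (E : ℂ))ᴴ * symJ L * Dk L T V k (E : ℂ)
      - Matrix.fromBlocks 1 0 0 0).PosSemidef := by
  induction k, hk using Nat.le_induction with
  | base =>
    have h1 : (Pk L T V 1 (E : ℂ))ᴴ * symJ L * Dk L T V 1 (E : ℂ)
        = Matrix.fromBlocks 1 0 0 0 := by
      show (transferM L (E : ℂ) (T 1) (V 1) * Pk L T V 0 (E : ℂ))ᴴ * symJ L *
          (dtM L T 0 * Pk L T V 0 (E : ℂ)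
            + transferM L (E : ℂ) (T 1) (V 1) * Dk L T V 0 (E : ℂ)) = _
      show (transferM L (E : ℂ) (T 1) (V 1) * 1)ᴴ * symJ L *
          (dtM L T 0 * 1 + transferM L (E : ℂ) (T 1) (V 1) * 0) = _
      rw [Matrix.mul_one, Matrix.mul_zero, Matrix.mul_one, add_zero, dtM]
      rw [JW_transferM (E : ℂ) (T 1) (V 1)]
      rw [hT1, inv_one, Matrix.fromBlocks_conjTranspose, Matrix.fromBlocks_multiply]
      simp
    rw [h1, sub_self]
    exact Matrix.PosSemidef.zero
  | succ k hk ih =>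
    have ih' := ih (fun n hn => hV n (Nat.lt_succ_of_lt hn)) (fun n hn => hT n (Nat.lt_succ_of_lt hn))
    rw [Q_step L T V E k (hV k (Nat.lt_succ_self k)) (hT k (Nat.lt_succ_self k)),
      add_sub_right_comm]
    exact ih'.add (Matrix.posSemidef_conjTranspose_mul_self _)
end Induction
section PosDefHelpers
variable {n : Type*} [Fintype n] [DecidableEq n]

lemma posDef_conj_inv {M c : Matrix n n ℂ} (hM : M.PosDef) (hc : IsUnit c) :
    ((c⁻¹)ᴴ * M * c⁻¹).PosDef := by
  refine Matrix.PosDef.of_dotProduct_mulVec_pos (Matrix.isHermitian_conjTranspose_mul_mul _ hM.1) fun x hx => ?_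
  have hxc : c⁻¹ *ᵥ x ≠ 0 := by
    intro h
    have : c *ᵥ (c⁻¹ *ᵥ x) = x := by
      rw [Matrix.mulVec_mulVec, Matrix.mul_nonsing_inv _ ((Matrix.isUnit_iff_isUnit_det _).mp hc),
        Matrix.one_mulVec]
    rw [h, Matrix.mulVec_zero] at this
    exact hx this.symm
  simpa only [star_mulVec, Matrix.dotProduct_mulVec, Matrix.vecMul_vecMul]
    using hM.dotProduct_mulVec_pos hxc

lemma smul_conj_form (x : ℂ) (X M Y : Matrix n n ℂ) :
    x • (Xᴴ * M * Y) = Xᴴ * (x • M) * Y := by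
  rw [Matrix.mul_smul, Matrix.smul_mul]

end PosDefHelpers

section Algebra
variable {L : ℕ}

lemma herm_sq_expand {a b : Mat L} (hab : bᴴ * a = aᴴ * b) :
    (a + Complex.I • b)ᴴ * (a + Complex.I • b) = aᴴ * a + bᴴ * b ∧
    (a - Complex.I • b)ᴴ * (a - Complex.I • b) = aᴴ * a + bᴴ * b := by
  have hsI : (Complex.I • b)ᴴ = (-Complex.I) • bᴴ := by
    rw [Matrix.conjTranspose_smul, Complex.star_def, Complex.conj_I]
  constructor
  · rw [Matrix.conjTranspose_add, hsI, Matrix.add_mul, Matrix.mul_add, Matrix.mul_add,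
      Matrix.smul_mul, Matrix.smul_mul, Matrix.mul_smul, Matrix.mul_smul, smul_smul, hab]
    simp only [neg_mul, Complex.I_mul_I, neg_neg, one_smul]
    module
  · rw [Matrix.conjTranspose_sub, hsI, Matrix.sub_mul, Matrix.mul_sub, Matrix.mul_sub,
      Matrix.smul_mul, Matrix.smul_mul, Matrix.mul_smul, Matrix.mul_smul, smul_smul, hab]
    simp only [neg_mul, Complex.I_mul_I, neg_neg, one_smul]
    module

lemma cross_expand (a b aD bD : Mat L) :
    (a - Complex.I • b)ᴴ * (aD - Complex.I • bD) - (a + Complex.I • b)ᴴ * (aD + Complex.I • bD)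
      = (2 * Complex.I) • (bᴴ * aD - aᴴ * bD) := by
  have hsI : ∀ x : Mat L, (Complex.I • x)ᴴ = (-Complex.I) • xᴴ := fun x => by
    rw [Matrix.conjTranspose_smul, Complex.star_def, Complex.conj_I]
  rw [Matrix.conjTranspose_sub, Matrix.conjTranspose_add, hsI]
  simp only [Matrix.sub_mul, Matrix.add_mul, Matrix.mul_sub, Matrix.mul_add,
    Matrix.smul_mul, Matrix.mul_smul, smul_smul, neg_mul, neg_neg,
    Complex.I_mul_I, one_smul]
  module

end Algebra
section TopBot
variable {L : ℕ} {z : ℂ}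

lemma EHD.top {f : ℂ → Matrix (Fin L ⊕ Fin L) (Fin L) ℂ} {f' : Matrix (Fin L ⊕ Fin L) (Fin L) ℂ}
    (h : EHD f f' z) : EHD (fun w => topBlk L (f w)) (topBlk L f') z :=
  fun i j => h (Sum.inl i) j

lemma EHD.bot {f : ℂ → Matrix (Fin L ⊕ Fin L) (Fin L) ℂ} {f' : Matrix (Fin L ⊕ Fin L) (Fin L) ℂ}
    (h : EHD f f' z) : EHD (fun w => botBlk L (f w)) (botBlk L f') z :=
  fun i j => h (Sum.inr i) j
end TopBot

theorem stmt5' (L N : ℕ) (hL : 1 ≤ L) (hN : 2 ≤ N)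
    (T V : ℕ → Mat L) (hT1 : T 1 = 1)
    (hTinv : ∀ n, 2 ≤ n → n ≤ N → IsUnit (T n))
    (hV : ∀ n, 1 ≤ n → n ≤ N → (V n).IsHermitian)
    (Zh : Mat L) (hZh : Zh.IsHermitian) :
    ∃ U' : ℝ → Mat L,
      (∀ (E : ℝ) (i j : Fin L),
        HasDerivAt
          (fun t : ℝ =>
            PiMap L (transferProd L N T V (t : ℂ) * Matrix.fromRows 1 (-Zh)) i j)
          (U' E i j) E) ∧
      (∀ E : ℝ,
        (Complex.I⁻¹ •
          ((PiMap L (transferProd L N T V (E : ℂ) * Matrix.fromRows 1 (-Zh)))ᴴ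
            * U' E)).PosDef) := by
  classical
  set Φ0 : Matrix (Fin L ⊕ Fin L) (Fin L) ℂ := Matrix.fromRows 1 (-Zh) with hΦ0
  -- hypotheses in indexed form
  have hVk : ∀ n < N, (V (n + 1)).IsHermitian := fun n hn =>
    hV (n + 1) (Nat.succ_le_succ (Nat.zero_le n)) hn
  have hTk : ∀ n < N, IsUnit (T (n + 1)) := by
    intro n hn
    rcases Nat.eq_zero_or_pos n with rfl | hpos
    · rw [hT1]; exact isUnit_one
    · exact hTinv (n + 1) (Nat.succ_le_succ hpos) hn
  -- abbreviations as functions of E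
  set PN : ℝ → Matrix (Fin L ⊕ Fin L) (Fin L ⊕ Fin L) ℂ := fun E => Pk L T V N (E : ℂ) with hPN
  set DN : ℝ → Matrix (Fin L ⊕ Fin L) (Fin L ⊕ Fin L) ℂ := fun E => Dk L T V N (E : ℂ) with hDN
  set Φf : ℝ → Matrix (Fin L ⊕ Fin L) (Fin L) ℂ := fun E => PN E * Φ0 with hΦf
  set ΦD : ℝ → Matrix (Fin L ⊕ Fin L) (Fin L) ℂ := fun E => DN E * Φ0 with hΦD
  set af : ℝ → Mat L := fun E => topBlk L (Φf E) with haf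
  set bf : ℝ → Mat L := fun E => botBlk L (Φf E) with hbf
  set aD : ℝ → Mat L := fun E => topBlk L (ΦD E) with haD
  set bD : ℝ → Mat L := fun E => botBlk L (ΦD E) with hbD
  set cf : ℝ → Mat L := fun E => af E + Complex.I • bf E with hcf
  set df : ℝ → Mat L := fun E => af E - Complex.I • bf E with hdf
  set cD : ℝ → Mat L := fun E => aD E + Complex.I • bD E with hcD
  set dD : ℝ → Mat L := fun E => aD E - Complex.I • bD E with hdD
  -- J-unitarity of the full product
  have hJU : ∀ E : ℝ, (PN E)ᴴ * symJ L * PN E = symJ L := fun E => JU_Pk L T V E N hVk hTk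
  have hJunit : IsUnit (symJ L) := by
    have h : symJ L * Matrix.fromBlocks 0 1 (-1) 0 = 1 := by
      rw [symJ, Matrix.fromBlocks_multiply, ← Matrix.fromBlocks_one]
      congr 1 <;> simp
    exact (Matrix.isUnit_iff_isUnit_det _).mpr (Matrix.isUnit_det_of_right_inverse h)
  have hJdet : (symJ L).det ≠ 0 :=
    IsUnit.ne_zero ((Matrix.isUnit_iff_isUnit_det _).mp hJunit)
  have hPNunit : ∀ E : ℝ, IsUnit (PN E) := by
    intro E
    rw [Matrix.isUnit_iff_isUnit_det, isUnit_iff_ne_zero]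
    intro h0
    have := congrArg Matrix.det (hJU E)
    rw [Matrix.det_mul, Matrix.det_mul, h0, mul_zero] at this
    exact hJdet this.symm
  -- the Lagrangian relation
  have hab : ∀ E : ℝ, (bf E)ᴴ * af E = (af E)ᴴ * bf E := by
    intro E
    have h1 : (Φf E)ᴴ * symJ L * Φf E = 0 := by
      rw [hΦf]
      show (PN E * Φ0)ᴴ * symJ L * (PN E * Φ0) = 0
      rw [Matrix.conjTranspose_mul]
      have : Φ0ᴴ * (PN E)ᴴ * symJ L * (PN E * Φ0)
          = Φ0ᴴ * ((PN E)ᴴ * symJ L * PN E) * Φ0 := by simp only [Matrix.mul_assoc]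
      rw [this, hJU E, quadJ, hΦ0, topBlk_fromRows, botBlk_fromRows]
      simp [hZh.eq]
    have h2 := quadJ (Φf E) (Φf E)
    rw [h1] at h2
    have := sub_eq_zero.mp h2.symm
    exact this
  -- c is invertible
  have hccPhi : ∀ E : ℝ, (cf E)ᴴ * cf E = (Φf E)ᴴ * Φf E := by
    intro E
    rw [hcf]
    show (af E + Complex.I • bf E)ᴴ * (af E + Complex.I • bf E) = _
    rw [(herm_sq_expand (hab E)).1, quadI]
  have hPhiPD : ∀ E : ℝ, ((Φf E)ᴴ * Φf E).PosDef := by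
    intro E
    refine Matrix.PosDef.of_dotProduct_mulVec_pos (Matrix.isHermitian_conjTranspose_mul_self _) fun x hx => ?_
    have hxne : Φf E *ᵥ x ≠ 0 := by
      intro h
      have h1 : PN E *ᵥ (Φ0 *ᵥ x) = 0 := by
        rw [Matrix.mulVec_mulVec]; exact h
      have h2 : Φ0 *ᵥ x = 0 := by
        have := congrArg (fun v => (PN E)⁻¹ *ᵥ v) h1
        simpa [Matrix.mulVec_mulVec, ← Matrix.mul_assoc,
          Matrix.nonsing_inv_mul _ ((Matrix.isUnit_iff_isUnit_det _).mp (hPNunit E)),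
          Matrix.one_mulVec] using this
      apply hx
      funext i
      have := congrFun h2 (Sum.inl i)
      simpa [hΦ0, Matrix.fromRows_mulVec, Matrix.one_mulVec] using this
    have key : star x ⬝ᵥ (((Φf E)ᴴ * Φf E) *ᵥ x) = star (Φf E *ᵥ x) ⬝ᵥ (Φf E *ᵥ x) := by
      rw [← Matrix.mulVec_mulVec, Matrix.dotProduct_mulVec, Matrix.vecMul_conjTranspose,
        star_star]
    rw [key]
    exact Matrix.dotProduct_star_self_pos_iff.mpr hxne
  have hcunit : ∀ E : ℝ, IsUnit (cf E) := by
    intro E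
    rw [Matrix.isUnit_iff_isUnit_det, isUnit_iff_ne_zero]
    intro h0
    obtain ⟨v, hvne, hv⟩ := (Matrix.exists_mulVec_eq_zero_iff).mpr h0
    have h1 : ((Φf E)ᴴ * Φf E) *ᵥ v = 0 := by
      rw [← hccPhi E, ← Matrix.mulVec_mulVec, hv, Matrix.mulVec_zero]
    have := (hPhiPD E).dotProduct_mulVec_pos hvne
    rw [h1, dotProduct_zero] at this
    exact lt_irrefl _ this
  -- the derivative candidate
  refine ⟨fun E => dD E * (cf E)⁻¹ + df E * -((cf E)⁻¹ * cD E * (cf E)⁻¹), ?_, ?_⟩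
  · -- differentiability
    intro E i j
    have hΦE : EHD (fun z => Pk L T V N z * Φ0) (DN E * Φ0) (E : ℂ) :=
      (EHD_Pk L T V N (E : ℂ)).mul_const Φ0
    have ha : EHD (fun z => topBlk L (Pk L T V N z * Φ0)) (aD E) (E : ℂ) := hΦE.top
    have hb : EHD (fun z => botBlk L (Pk L T V N z * Φ0)) (bD E) (E : ℂ) := hΦE.bot
    have hcE : EHD (fun z => topBlk L (Pk L T V N z * Φ0)
        + Complex.I • botBlk L (Pk L T V N z * Φ0)) (cD E) (E : ℂ) := ha.add (EHD.smul _ hb)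
    have hdE : EHD (fun z => topBlk L (Pk L T V N z * Φ0)
        - Complex.I • botBlk L (Pk L T V N z * Φ0)) (dD E) (E : ℂ) := ha.sub (EHD.smul _ hb)
    have hcfE : (fun z => topBlk L (Pk L T V N z * Φ0)
        + Complex.I • botBlk L (Pk L T V N z * Φ0)) (E : ℂ) = cf E := rfl
    have hinv : EHD (fun z => (topBlk L (Pk L T V N z * Φ0)
          + Complex.I • botBlk L (Pk L T V N z * Φ0))⁻¹)
        (-((cf E)⁻¹ * cD E * (cf E)⁻¹)) (E : ℂ) :=
      hcE.matrix_inv (hcunit E)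
    have hU : EHD (fun z => (topBlk L (Pk L T V N z * Φ0)
          - Complex.I • botBlk L (Pk L T V N z * Φ0))
        * (topBlk L (Pk L T V N z * Φ0) + Complex.I • botBlk L (Pk L T V N z * Φ0))⁻¹)
        (dD E * (cf E)⁻¹ + df E * -((cf E)⁻¹ * cD E * (cf E)⁻¹)) (E : ℂ) := by
      have := hdE.mul hinv
      exact this
    have hfun : (fun t : ℝ =>
        PiMap L (transferProd L N T V (t : ℂ) * Matrix.fromRows 1 (-Zh)) i j)
        = fun t : ℝ => ((fun z : ℂ => (topBlk L (Pk L T V N z * Φ0)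
            - Complex.I • botBlk L (Pk L T V N z * Φ0))
          * (topBlk L (Pk L T V N z * Φ0)
            + Complex.I • botBlk L (Pk L T V N z * Φ0))⁻¹) (t : ℂ)) i j := by
      funext t
      rw [PiMap, transferProd_eq, hΦ0]
      rfl
    rw [hfun]
    exact HasDerivAt.comp_ofReal (hU i j)
  · -- positivity
    intro E
    have hc1 : cf E * (cf E)⁻¹ = 1 :=
      Matrix.mul_nonsing_inv _ ((Matrix.isUnit_iff_isUnit_det _).mp (hcunit E))
    have hdd : (df E)ᴴ * df E = (cf E)ᴴ * cf E := by
      rw [hcf, hdf]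
      show (af E - Complex.I • bf E)ᴴ * (af E - Complex.I • bf E)
        = (af E + Complex.I • bf E)ᴴ * (af E + Complex.I • bf E)
      rw [(herm_sq_expand (hab E)).1, (herm_sq_expand (hab E)).2]
    -- the matrix under the quadratic form
    set K : Mat L := (bf E)ᴴ * aD E - (af E)ᴴ * bD E with hK
    have hKQ : K = Φ0ᴴ * ((PN E)ᴴ * symJ L * DN E) * Φ0 := by
      calc K = (Φf E)ᴴ * symJ L * ΦD E := (quadJ (Φf E) (ΦD E)).symm
        _ = (PN E * Φ0)ᴴ * symJ L * (DN E * Φ0) := rfl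
        _ = Φ0ᴴ * ((PN E)ᴴ * symJ L * DN E) * Φ0 := by
            rw [Matrix.conjTranspose_mul]; simp only [Matrix.mul_assoc]
    have hKpd : K.PosDef := by
      have hQps := Q_lower L T V E hT1 N (le_trans one_le_two hN) hVk hTk
      have hps : (Φ0ᴴ * ((PN E)ᴴ * symJ L * DN E - Matrix.fromBlocks 1 0 0 0) * Φ0).PosSemidef :=
        hQps.conjTranspose_mul_mul_same Φ0
      have hBone : Φ0ᴴ * (Matrix.fromBlocks 1 0 0 0 : Matrix (Fin L ⊕ Fin L) (Fin L ⊕ Fin L) ℂ)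
          * Φ0 = 1 := by
        rw [quadB, hΦ0, topBlk_fromRows, Matrix.conjTranspose_one, Matrix.one_mul]
      have hsplit : K = Φ0ᴴ * ((PN E)ᴴ * symJ L * DN E - Matrix.fromBlocks 1 0 0 0) * Φ0 + 1 := by
        rw [hKQ, Matrix.mul_sub, Matrix.sub_mul, hBone]
        abel
      rw [hsplit]
      exact Matrix.PosDef.posSemidef_add hps Matrix.PosDef.one
    -- main identity
    have hU : PiMap L (transferProd L N T V (E : ℂ) * Matrix.fromRows 1 (-Zh))
        = df E * (cf E)⁻¹ := by
      rw [PiMap, transferProd_eq]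
      rfl
    have hmain : Complex.I⁻¹ •
        ((df E * (cf E)⁻¹)ᴴ * (dD E * (cf E)⁻¹ + df E * -((cf E)⁻¹ * cD E * (cf E)⁻¹)))
        = ((cf E)⁻¹)ᴴ * ((2 : ℂ) • K) * (cf E)⁻¹ := by
      have step1 : (df E * (cf E)⁻¹)ᴴ * (dD E * (cf E)⁻¹ + df E * -((cf E)⁻¹ * cD E * (cf E)⁻¹))
          = ((cf E)⁻¹)ᴴ * ((df E)ᴴ * dD E - (cf E)ᴴ * cD E) * (cf E)⁻¹ := by
        rw [Matrix.conjTranspose_mul]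
        calc ((cf E)⁻¹)ᴴ * (df E)ᴴ * (dD E * (cf E)⁻¹ + df E * -((cf E)⁻¹ * cD E * (cf E)⁻¹))
            = ((cf E)⁻¹)ᴴ * ((df E)ᴴ * dD E) * (cf E)⁻¹
              - ((cf E)⁻¹)ᴴ * ((df E)ᴴ * df E) * ((cf E)⁻¹ * (cD E * (cf E)⁻¹)) := by
              noncomm_ring
          _ = ((cf E)⁻¹)ᴴ * ((df E)ᴴ * dD E) * (cf E)⁻¹
              - ((cf E)⁻¹)ᴴ * ((cf E)ᴴ * ((cf E * (cf E)⁻¹) * (cD E * (cf E)⁻¹))) := by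
              rw [hdd]; noncomm_ring
          _ = ((cf E)⁻¹)ᴴ * ((df E)ᴴ * dD E) * (cf E)⁻¹
              - ((cf E)⁻¹)ᴴ * ((cf E)ᴴ * cD E) * (cf E)⁻¹ := by
              rw [hc1]; noncomm_ring
          _ = ((cf E)⁻¹)ᴴ * ((df E)ᴴ * dD E - (cf E)ᴴ * cD E) * (cf E)⁻¹ := by
              noncomm_ring
      have step2 : (df E)ᴴ * dD E - (cf E)ᴴ * cD E = (2 * Complex.I) • K := by
        rw [hcf, hdf, hcD, hdD, hK]
        exact cross_expand (af E) (bf E) (aD E) (bD E)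
      rw [step1, step2, smul_conj_form]
      congr 1
      rw [smul_smul, mul_comm (2 : ℂ) Complex.I, ← mul_assoc, inv_mul_cancel₀ Complex.I_ne_zero,
        one_mul]
    rw [hU, hmain]
    have h2K : ((2 : ℂ) • K).PosDef := by
      have : (2 : ℂ) • K = K + K := two_smul ℂ K
      rw [this]
      exact hKpd.add hKpd
    exact posDef_conj_inv h2K (hcunit E)

theorem stmt5 (L N : ℕ) (hL : 1 ≤ L) (hN : 2 ≤ N)
    (T V : ℕ → Mat L) (hT1 : T 1 = 1)
    (hTinv : ∀ n, 2 ≤ n → n ≤ N → IsUnit (T n))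
    (hV : ∀ n, 1 ≤ n → n ≤ N → (V n).IsHermitian)
    (Zh : Mat L) (hZh : Zh.IsHermitian) :
    ∃ U' : ℝ → Mat L,
      (∀ (E : ℝ) (i j : Fin L),
        HasDerivAt
          (fun t : ℝ =>
            PiMap L (transferProd L N T V (t : ℂ) * Matrix.fromRows 1 (-Zh)) i j)
          (U' E i j) E) ∧
      (∀ E : ℝ,
        (Complex.I⁻¹ •
          ((PiMap L (transferProd L N T V (E : ℂ) * Matrix.fromRows 1 (-Zh)))ᴴ
            * U' E)).PosDef) := by
  exact stmt5' L N hL hN T V hT1 hTinv hV Zh hZh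
end
end
end

section
/- Let 𝒯 be a positive definite 2L×2L complex matrix satisfying 𝒯^* J' 𝒯 = J', where J' = diag(1_L, −1_L). Then there exist unitary L×L matrices W and W' and a diagonal real L×L matrix η with non-negative entries such that, with ℳ = diag(W, W') (the 2L×2L block diagonal matrix), ℳ^* 𝒯 ℳ = [[cosh(η), sinh(η)],[sinh(η), cosh(η)]] in L×L blocks. -/
open MeasureTheory Matrix
open scoped ComplexOrder

noncomputable section

/-- The Lorentz form `J' = diag(1, −1)` in `L × L` blocks. -/
def lorJ (L : ℕ) : Matrix (Fin L ⊕ Fin L) (Fin L ⊕ Fin L) ℂ :=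
  Matrix.fromBlocks 1 0 0 (-1)

section Stmt13Aux

variable {n : Type*} [Fintype n] [DecidableEq n]

lemma col_of_mul_diag {M V W : Matrix n n ℂ} {f : n → ℂ}
    (h : ∀ i, M *ᵥ (fun k => V k i) = f i • (fun k => W k i)) :
    M * V = W * Matrix.diagonal f := by
  ext k i
  have := congrFun (h i) k
  simpa [Matrix.mul_apply, Matrix.mulVec, dotProduct, Matrix.diagonal_apply,
    mul_ite, mul_zero, Finset.sum_ite_eq', mul_comm] using this

lemma mul_diag_col {M V W : Matrix n n ℂ} {f : n → ℂ}
    (h : M * V = W * Matrix.diagonal f) (i : n) :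
    M *ᵥ (fun k => V k i) = f i • (fun k => W k i) := by
  funext k
  have := congrFun (congrFun h k) i
  simpa [Matrix.mul_apply, Matrix.mulVec, dotProduct, Matrix.diagonal_apply,
    mul_ite, mul_zero, Finset.sum_ite_eq', mul_comm] using this

end Stmt13Aux

theorem stmt13 (L : ℕ) (hL : 1 ≤ L)
    (𝒯 : Matrix (Fin L ⊕ Fin L) (Fin L ⊕ Fin L) ℂ)
    (h𝒯pos : 𝒯.PosDef) (h𝒯 : 𝒯ᴴ * lorJ L * 𝒯 = lorJ L) :
    ∃ W W' : Mat L, W ∈ Matrix.unitaryGroup (Fin L) ℂ ∧ W' ∈ Matrix.unitaryGroup (Fin L) ℂ ∧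
      ∃ η : Fin L → ℝ, (∀ i, 0 ≤ η i) ∧
        (Matrix.fromBlocks W 0 0 W')ᴴ * 𝒯 * Matrix.fromBlocks W 0 0 W' =
          Matrix.fromBlocks
            (Matrix.diagonal fun i => (Real.cosh (η i) : ℂ))
            (Matrix.diagonal fun i => (Real.sinh (η i) : ℂ))
            (Matrix.diagonal fun i => (Real.sinh (η i) : ℂ))
            (Matrix.diagonal fun i => (Real.cosh (η i) : ℂ)) := by
  classical
  set A := 𝒯.submatrix Sum.inl Sum.inl with hA_def
  set B := 𝒯.submatrix Sum.inl Sum.inr with hB_def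
  set D := 𝒯.submatrix Sum.inr Sum.inr with hD_def
  have hTH : 𝒯ᴴ = 𝒯 := h𝒯pos.1
  -- block decomposition of 𝒯
  have hT : 𝒯 = Matrix.fromBlocks A B Bᴴ D := by
    ext i j
    cases i with
    | inl i =>
      cases j with
      | inl j => rfl
      | inr j => rfl
    | inr i =>
      cases j with
      | inl j =>
        have := congrFun (congrFun hTH (Sum.inr i)) (Sum.inl j)
        simpa [Matrix.conjTranspose_apply, hB_def, Matrix.submatrix_apply] using this.symm
      | inr j => rfl
  -- block equations
  have hTJT : 𝒯 * lorJ L * 𝒯 = lorJ L := by rwa [hTH] at h𝒯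
  rw [hT, lorJ, Matrix.fromBlocks_multiply, Matrix.fromBlocks_multiply] at hTJT
  have e11 := congrArg Matrix.toBlocks₁₁ hTJT
  have e12 := congrArg Matrix.toBlocks₁₂ hTJT
  have e22 := congrArg Matrix.toBlocks₂₂ hTJT
  simp only [Matrix.toBlocks_fromBlocks₁₁, Matrix.toBlocks_fromBlocks₁₂,
    Matrix.toBlocks_fromBlocks₂₂, Matrix.mul_one, Matrix.mul_zero, Matrix.mul_neg,
    Matrix.zero_mul, Matrix.one_mul, add_zero, zero_add, Matrix.mul_one] at e11 e12 e22
  have hA2 : A * A = 1 + B * Bᴴ := by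
    rw [← e11]; noncomm_ring
  have hAB : A * B = B * D := by
    have : A * B + -(B * D) = 0 := by rw [← e12]; noncomm_ring
    linear_combination (norm := noncomm_ring) this
  have hD2 : D * D = 1 + Bᴴ * B := by
    have h : Bᴴ * B + -(D * D) = -1 := by rw [← e22]; noncomm_ring
    linear_combination (norm := noncomm_ring) -h
  -- positivity of blocks
  have hApsd : A.PosSemidef := h𝒯pos.posSemidef.submatrix Sum.inl
  have hDpos : D.PosDef := by
    refine Matrix.PosDef.of_dotProduct_mulVec_pos ?_ ?_
    · ext i j
      have := congrFun (congrFun hTH (Sum.inr i)) (Sum.inr j)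
      simpa [Matrix.conjTranspose_apply, hD_def, Matrix.submatrix_apply] using this
    · intro x hx
      have hy : (Sum.elim 0 x : Fin L ⊕ Fin L → ℂ) ≠ 0 := by
        intro h
        apply hx
        funext i
        exact congrFun h (Sum.inr i)
      have := h𝒯pos.dotProduct_mulVec_pos hy
      convert this using 1
      simp [dotProduct, Matrix.mulVec, Fintype.sum_sum_type, hD_def,
        Matrix.submatrix_apply]
  have hDh : D.IsHermitian := hDpos.1
  -- spectral data
  set V : Mat L := (hDh.eigenvectorUnitary : Mat L) with hV_def
  have hVmem : V ∈ Matrix.unitaryGroup (Fin L) ℂ := hDh.eigenvectorUnitary.2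
  have hVV : star V * V = 1 := Matrix.mem_unitaryGroup_iff'.mp hVmem
  have hVV' : V * star V = 1 := Matrix.mem_unitaryGroup_iff.mp hVmem
  set d : Fin L → ℝ := hDh.eigenvalues with hd_def
  have hdpos : ∀ i, 0 < d i := hDpos.eigenvalues_pos
  have hdiag_eq : Matrix.diagonal (RCLike.ofReal ∘ d) = Matrix.diagonal (fun i => (d i : ℂ)) := by
    rfl
  have hDV : D * V = V * Matrix.diagonal (fun i => (d i : ℂ)) := by
    conv_lhs => rw [hDh.spectral_theorem]
    rw [Unitary.conjStarAlgAut_apply]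
    rw [Matrix.mul_assoc (V * _), hVV, Matrix.mul_one, hdiag_eq]
  set c : Fin L → (Fin L → ℂ) := fun i k => V k i with hc_def
  have hDc : ∀ i, D *ᵥ c i = (d i : ℂ) • c i := fun i => mul_diag_col hDV i
  have hcc : ∀ i j, star (c i) ⬝ᵥ c j = if i = j then 1 else 0 := by
    intro i j
    have := congrFun (congrFun hVV i) j
    simpa [Matrix.mul_apply, dotProduct, Matrix.one_apply, Matrix.star_apply,
      hc_def] using this
  -- the key inner product computation
  have hBB : ∀ i j, star (B *ᵥ c i) ⬝ᵥ (B *ᵥ c j)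
      = if i = j then ((d j : ℂ) ^ 2 - 1) else 0 := by
    intro i j
    have h1 : star (B *ᵥ c i) ⬝ᵥ (B *ᵥ c j) = star (c i) ⬝ᵥ ((Bᴴ * B) *ᵥ c j) := by
      rw [Matrix.star_mulVec, ← Matrix.mulVec_mulVec, dotProduct_mulVec _ Bᴴ]
    have h2 : (Bᴴ * B) *ᵥ c j = ((d j : ℂ) ^ 2 - 1) • c j := by
      have : Bᴴ * B = D * D - 1 := by rw [hD2]; noncomm_ring
      rw [this, Matrix.sub_mulVec, ← Matrix.mulVec_mulVec, hDc, Matrix.mulVec_smul, hDc,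
        Matrix.one_mulVec, smul_smul]
      rw [sub_smul, one_smul, sq]
    rw [h1, h2, dotProduct_smul, hcc i j]
    by_cases h : i = j <;> simp [h]
  -- eigenvalues are at least 1
  have hd1 : ∀ i, 1 ≤ d i := by
    intro i
    have h0 : (0 : ℂ) ≤ (d i : ℂ) ^ 2 - 1 := by
      have := dotProduct_star_self_nonneg (B *ᵥ c i)
      rwa [hBB i i, if_pos rfl] at this
    have h0' : (0 : ℝ) ≤ d i ^ 2 - 1 := by
      have : ((d i ^ 2 - 1 : ℝ) : ℂ) = (d i : ℂ) ^ 2 - 1 := by push_cast; ring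
      rw [← this] at h0
      exact_mod_cast h0
    nlinarith [hdpos i]
  set s : Fin L → ℝ := fun i => Real.sqrt (d i ^ 2 - 1) with hs_def
  have hs_nonneg : ∀ i, 0 ≤ s i := fun i => Real.sqrt_nonneg _
  have hs_sq : ∀ i, s i ^ 2 = d i ^ 2 - 1 := by
    intro i
    rw [hs_def]
    exact Real.sq_sqrt (by nlinarith [hd1 i])
  have hd_one : ∀ i, s i = 0 → d i = 1 := by
    intro i hi
    have := hs_sq i
    rw [hi] at this
    nlinarith [hd1 i]
  -- B kills the kernel columns
  have hBc0 : ∀ i, s i = 0 → B *ᵥ c i = 0 := by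
    intro i hi
    apply dotProduct_star_self_eq_zero.mp
    rw [hBB i i, if_pos rfl]
    have : d i = 1 := hd_one i hi
    rw [this]
    norm_num
  -- construct the orthonormal family
  set v : Fin L → EuclideanSpace ℂ (Fin L) :=
    fun i => (WithLp.equiv 2 _).symm ((((s i : ℝ) : ℂ))⁻¹ • (B *ᵥ c i)) with hv_def
  have hBBv : ∀ i j, star ((((s i : ℝ) : ℂ))⁻¹ • (B *ᵥ c i)) ⬝ᵥ
      ((((s j : ℝ) : ℂ))⁻¹ • (B *ᵥ c j))
      = (((s i : ℝ) : ℂ))⁻¹ * (((s j : ℝ) : ℂ))⁻¹ *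
        (if i = j then ((d j : ℂ) ^ 2 - 1) else 0) := by
    intro i j
    rw [star_smul, smul_dotProduct, dotProduct_smul, hBB i j]
    simp [Complex.star_def, map_inv₀, Complex.conj_ofReal, smul_eq_mul, mul_assoc]
  have hortho : Orthonormal ℂ (Set.restrict {i | s i ≠ 0} v) := by
    rw [orthonormal_iff_ite]
    rintro ⟨i, hi⟩ ⟨j, hj⟩
    rw [EuclideanSpace.inner_eq_star_dotProduct, dotProduct_comm]
    simp only [hv_def, Set.restrict_apply, Equiv.apply_symm_apply, WithLp.equiv_symm_apply,
      WithLp.ofLp_toLp]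
    change star ((((s i : ℝ) : ℂ))⁻¹ • (B *ᵥ c i)) ⬝ᵥ ((((s j : ℝ) : ℂ))⁻¹ • (B *ᵥ c j)) = _
    rw [hBBv i j]
    by_cases h : i = j
    · subst h
      simp only [if_pos rfl, Subtype.mk_eq_mk, if_true]
      have hsne : ((s i : ℝ) : ℂ) ≠ 0 := by
        simpa using hi
      have h2 : ((s i : ℝ) : ℂ) ^ 2 = (d i : ℂ) ^ 2 - 1 := by
        have h := congrArg (fun t : ℝ => (t : ℂ)) (hs_sq i)
        push_cast at h
        exact h
      rw [← h2, sq]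
      field_simp
    · have : (⟨i, hi⟩ : {i | s i ≠ 0}) ≠ ⟨j, hj⟩ := by simpa using h
      rw [if_neg h, if_neg this]
      ring
  obtain ⟨b, hb⟩ := hortho.exists_orthonormalBasis_extension_of_card_eq
    (by simp)
  set W : Mat L := Matrix.of (fun k i => (WithLp.equiv 2 _ (b i)) k) with hW_def
  set w : Fin L → (Fin L → ℂ) := fun i k => W k i with hw_def
  have hww : ∀ i j, star (w i) ⬝ᵥ w j = if i = j then 1 else 0 := by
    intro i j
    have := orthonormal_iff_ite.mp b.orthonormal i j
    rw [EuclideanSpace.inner_eq_star_dotProduct, dotProduct_comm] at this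
    simpa [hw_def, hW_def, dotProduct] using this
  have hWW : star W * W = 1 := by
    ext i j
    have := hww i j
    simpa [Matrix.mul_apply, dotProduct, Matrix.star_apply, Matrix.one_apply,
      hw_def] using this
  have hWmem : W ∈ Matrix.unitaryGroup (Fin L) ℂ := Matrix.mem_unitaryGroup_iff'.mpr hWW
  -- the column relations
  have hwv : ∀ i, s i ≠ 0 → w i = (((s i : ℝ) : ℂ))⁻¹ • (B *ᵥ c i) := by
    intro i hi
    have hbi : b i = v i := hb i hi
    funext k
    simp only [hw_def, hW_def, Matrix.of_apply, hbi, hv_def, Equiv.apply_symm_apply]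
  have hBcS : ∀ i, B *ᵥ c i = (((s i : ℝ) : ℂ)) • w i := by
    intro i
    by_cases hi : s i = 0
    · rw [hBc0 i hi, hi]
      simp
    · rw [hwv i hi, smul_smul, mul_inv_cancel₀ (by simpa using hi), one_smul]
  have hBV : B * V = W * Matrix.diagonal (fun i => ((s i : ℝ) : ℂ)) :=
    col_of_mul_diag (fun i => hBcS i)
  -- Bᴴ kills the completed columns
  have hBHw : ∀ i, s i = 0 → Bᴴ *ᵥ w i = 0 := by
    intro i hi
    have hz : ∀ j, star (c j) ⬝ᵥ (Bᴴ *ᵥ w i) = 0 := by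
      intro j
      rw [dotProduct_mulVec, ← Matrix.star_mulVec, hBcS j, star_smul,
        smul_dotProduct]
      by_cases hji : j = i
      · subst hji
        rw [hi]
        simp
      · rw [hww j i, if_neg hji]
        simp
    have hVz : star V *ᵥ (Bᴴ *ᵥ w i) = 0 := by
      funext j
      have := hz j
      simpa [Matrix.mulVec, dotProduct, Matrix.star_apply, hc_def] using this
    calc Bᴴ *ᵥ w i = (V * star V) *ᵥ (Bᴴ *ᵥ w i) := by rw [hVV', Matrix.one_mulVec]
      _ = V *ᵥ (star V *ᵥ (Bᴴ *ᵥ w i)) := by rw [← Matrix.mulVec_mulVec]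
      _ = 0 := by rw [hVz, Matrix.mulVec_zero]
  -- A acts diagonally on the w columns
  have hAw : ∀ i, A *ᵥ w i = (d i : ℂ) • w i := by
    intro i
    by_cases hi : s i = 0
    · rw [hd_one i hi]
      push_cast
      rw [one_smul]
      have h2 : A *ᵥ (A *ᵥ w i) = w i := by
        rw [Matrix.mulVec_mulVec, hA2, Matrix.add_mulVec, Matrix.one_mulVec,
          ← Matrix.mulVec_mulVec, hBHw i hi, Matrix.mulVec_zero, add_zero]
      have hA1 : (A + 1).PosDef := Matrix.PosDef.posSemidef_add hApsd Matrix.PosDef.one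
      have hinj := Matrix.mulVec_injective_iff_isUnit.mpr hA1.isUnit
      have hzero : (A + 1) *ᵥ (A *ᵥ w i - w i) = (A + 1) *ᵥ 0 := by
        simp only [Matrix.mulVec_zero, Matrix.add_mulVec, Matrix.mulVec_sub,
          Matrix.one_mulVec, h2]
        abel
      have := hinj hzero
      exact sub_eq_zero.mp this
    · rw [hwv i hi, Matrix.mulVec_smul, Matrix.mulVec_mulVec, hAB, ← Matrix.mulVec_mulVec,
        hDc, Matrix.mulVec_smul, smul_smul, smul_smul, mul_comm]
  have hAW : A * W = W * Matrix.diagonal (fun i => (d i : ℂ)) :=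
    col_of_mul_diag (fun i => hAw i)
  -- assemble
  refine ⟨W, V, hWmem, hVmem, fun i => Real.arsinh (s i),
    fun i => Real.arsinh_nonneg_iff.mpr (hs_nonneg i), ?_⟩
  have hcoshd : (fun i => (Real.cosh (Real.arsinh (s i)) : ℂ)) = fun i => (d i : ℂ) := by
    funext i
    rw [Real.cosh_arsinh]
    norm_cast
    rw [hs_sq i]
    have : 1 + (d i ^ 2 - 1) = d i ^ 2 := by ring
    rw [this, Real.sqrt_sq (by linarith [hd1 i])]
  have hsinhd : (fun i => (Real.sinh (Real.arsinh (s i)) : ℂ)) = fun i => ((s i : ℝ) : ℂ) := by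
    funext i
    rw [Real.sinh_arsinh]
  rw [hcoshd, hsinhd, hT]
  rw [Matrix.fromBlocks_conjTranspose, Matrix.conjTranspose_zero,
    Matrix.fromBlocks_multiply, Matrix.fromBlocks_multiply]
  simp only [Matrix.zero_mul, Matrix.mul_zero, add_zero, zero_add]
  have hblk1 : Wᴴ * A * W = Matrix.diagonal (fun i => (d i : ℂ)) := by
    rw [Matrix.mul_assoc, hAW, ← Matrix.mul_assoc, ← Matrix.star_eq_conjTranspose, hWW,
      Matrix.one_mul]
  have hblk2 : Wᴴ * B * V = Matrix.diagonal (fun i => ((s i : ℝ) : ℂ)) := by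
    rw [Matrix.mul_assoc, hBV, ← Matrix.mul_assoc, ← Matrix.star_eq_conjTranspose, hWW,
      Matrix.one_mul]
  have hblk3 : Vᴴ * Bᴴ * W = Matrix.diagonal (fun i => ((s i : ℝ) : ℂ)) := by
    have := congrArg Matrix.conjTranspose hblk2
    rw [Matrix.conjTranspose_mul, Matrix.conjTranspose_mul, Matrix.conjTranspose_conjTranspose,
      Matrix.diagonal_conjTranspose] at this
    rw [← Matrix.mul_assoc] at this
    rw [this]; congr 1
    funext i
    simp [Complex.conj_ofReal]
  have hblk4 : Vᴴ * D * V = Matrix.diagonal (fun i => (d i : ℂ)) := by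
    rw [Matrix.mul_assoc, hDV, ← Matrix.mul_assoc, ← Matrix.star_eq_conjTranspose, hVV,
      Matrix.one_mul]
  rw [hblk1, hblk2, hblk3, hblk4]
end
end
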